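/- arXiv:2110.03233 — 5 statements merged into one kernel-verified Lean document; each statement's English description precedes it below -/
import Mathlib

section
/- Proposition 2 (upper bound on the signalling robustness): For every two-party process matrix W on A_I ⊗ A_O ⊗ B_I ⊗ B_O, with dbar := max(d_{A_O}, d_{B_O}) ≥ 2, the signalling robustness satisfies R_s(W) ≤ dbar^2 - 1. -/
open scoped BigOperators ComplexOrder

/-- Trace-and-replace map `D_X` on the collection `S` of tensor factors:
`D_S(W) = (1/d_S) * (1_S ⊗ tr_S(W))`, written entrywise. -/
noncomputable def Dset {ι : Type} [Fintype ι] [DecidableEq ι] {F : ι → Type}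
    [∀ i, Fintype (F i)] [∀ i, DecidableEq (F i)]
    (S : Finset ι) (M : Matrix ((i : ι) → F i) ((i : ι) → F i) ℂ) :
    Matrix ((i : ι) → F i) ((i : ι) → F i) ℂ :=
  fun p q =>
    ((if ∀ i ∈ S, p i = q i then (1 : ℂ) else 0) / ∏ i ∈ S, (Fintype.card (F i) : ℂ)) *
      ((∑ r : (i : ι) → F i,
          M (fun i => if i ∈ S then r i else p i) (fun i => if i ∈ S then r i else q i)) /
        ∏ i ∈ Sᶜ, (Fintype.card (F i) : ℂ))

set_option linter.unusedSectionVars false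
set_option linter.unusedVariables false
namespace Prop2Aux
open Matrix

variable {ι : Type} [Fintype ι] [DecidableEq ι] {F : ι → Type}
    [∀ i, Fintype (F i)] [∀ i, DecidableEq (F i)]

/-- Override `p` on `S` by `r`. -/
def ov (S : Finset ι) (p r : (i : ι) → F i) : (i : ι) → F i :=
  fun i => if i ∈ S then r i else p i

lemma ov_ov (S T : Finset ι) (p r t : (i : ι) → F i) :
    ov T (ov S p r) t = ov (S ∪ T) p (ov T r t) := by
  funext i
  simp only [ov, Finset.mem_union]
  by_cases hT : i ∈ T <;> by_cases hS : i ∈ S <;> simp [hS, hT]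

/-- cardinality product as a natural number -/
def nC (S : Finset ι) : ℕ := ∏ i ∈ S, Fintype.card (F i)

lemma cardC_eq (S : Finset ι) :
    (∏ i ∈ S, (Fintype.card (F i) : ℂ)) = ((nC (F := F) S : ℕ) : ℂ) := by
  simp [nC, Nat.cast_prod]

lemma nC_pos [∀ i, Nonempty (F i)] (S : Finset ι) : 0 < nC (F := F) S :=
  Finset.prod_pos fun i _ => Fintype.card_pos

lemma nC_mul_compl [∀ i, Nonempty (F i)] (S : Finset ι) :
    (nC (F := F) S) * (nC (F := F) Sᶜ) = Fintype.card ((i : ι) → F i) := by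
  simp only [nC, Finset.prod_mul_prod_compl, Fintype.card_pi]

lemma Dset_apply (S : Finset ι) (M : Matrix ((i : ι) → F i) ((i : ι) → F i) ℂ)
    (p q : (i : ι) → F i) :
    Dset S M p q = (if ∀ i ∈ S, p i = q i then (1 : ℂ) else 0)
      * (∑ r : (i : ι) → F i, M (ov S p r) (ov S q r))
      / ((nC (F := F) S : ℂ) * (nC (F := F) Sᶜ : ℂ)) := by
  have h : ∀ r : (i : ι) → F i, M (ov S p r) (ov S q r)
      = M (fun i => if i ∈ S then r i else p i) (fun i => if i ∈ S then r i else q i) :=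
    fun r => rfl
  simp only [Dset, cardC_eq, h]
  ring

/-- double override sum collapse -/
lemma sum_ov_pair (S : Finset ι) (f : ((i : ι) → F i) → ℂ) :
    (∑ r : (i : ι) → F i, ∑ t : (i : ι) → F i, f (ov S r t))
      = (Fintype.card ((i : ι) → F i) : ℂ) * ∑ u : (i : ι) → F i, f u := by
  have hinv : Function.Involutive
      (fun x : (((i : ι) → F i) × ((i : ι) → F i)) => (ov S x.1 x.2, ov S x.2 x.1)) := by
    rintro ⟨r, t⟩
    refine Prod.ext ?_ ?_ <;> funext i <;> simp only [ov] <;>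
      by_cases h : i ∈ S <;> simp [h]
  have h1 : (∑ r : (i : ι) → F i, ∑ t : (i : ι) → F i, f (ov S r t))
      = ∑ x : (((i : ι) → F i) × ((i : ι) → F i)), f (ov S x.1 x.2) :=
    (Fintype.sum_prod_type (fun x : (((i : ι) → F i) × ((i : ι) → F i)) => f (ov S x.1 x.2))).symm
  rw [h1, Fintype.sum_bijective _ hinv.bijective _ (fun y => f y.1) (fun x => rfl),
    Fintype.sum_prod_type]
  simp [Finset.sum_const, Finset.card_univ, Finset.mul_sum, mul_comm]

lemma sum_indicator (S : Finset ι) (u : (i : ι) → F i) :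
    (∑ r : (i : ι) → F i, if ∀ i ∈ S, r i = u i then (1 : ℂ) else 0)
      = (nC (F := F) Sᶜ : ℂ) := by
  have h1 : ∀ r : (i : ι) → F i,
      (if ∀ i ∈ S, r i = u i then (1 : ℂ) else 0)
        = ∏ i : ι, (if i ∈ S then (if r i = u i then (1 : ℂ) else 0) else 1) := by
    intro r
    rw [← Finset.prod_mul_prod_compl S]
    rw [Finset.prod_congr rfl (fun i hi => if_pos hi),
      Finset.prod_congr rfl (fun i hi => if_neg (Finset.mem_compl.mp hi))]
    simp [Finset.prod_boole]
  calc (∑ r : (i : ι) → F i, if ∀ i ∈ S, r i = u i then (1 : ℂ) else 0)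
      = ∑ r : (i : ι) → F i, ∏ i : ι,
          (if i ∈ S then (if r i = u i then (1 : ℂ) else 0) else 1) := by
        exact Finset.sum_congr rfl fun r _ => h1 r
    _ = ∏ i : ι, ∑ x : F i, (if i ∈ S then (if x = u i then (1 : ℂ) else 0) else 1) := by
        rw [Finset.prod_univ_sum]
        rw [← Fintype.piFinset_univ]
    _ = ∏ i : ι, (if i ∈ S then (1 : ℂ) else (Fintype.card (F i) : ℂ)) := by
        refine Finset.prod_congr rfl fun i _ => ?_
        by_cases h : i ∈ S <;> simp [h, Finset.sum_boole, Finset.card_univ]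
    _ = (nC (F := F) Sᶜ : ℂ) := by
        rw [← Finset.prod_mul_prod_compl S]
        rw [Finset.prod_congr rfl (fun i hi => if_pos hi),
          Finset.prod_congr rfl (fun i hi => if_neg (Finset.mem_compl.mp hi))]
        simp [cardC_eq]

lemma ite_mul_ite (P Q : Prop) [Decidable P] [Decidable Q] :
    (if P then (1 : ℂ) else 0) * (if Q then (1 : ℂ) else 0)
      = if P ∧ Q then (1 : ℂ) else 0 := by
  by_cases hP : P <;> by_cases hQ : Q <;> simp [hP, hQ]

lemma Dset_Dset [∀ i, Nonempty (F i)] (S T : Finset ι)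
    (M : Matrix ((i : ι) → F i) ((i : ι) → F i) ℂ) :
    Dset S (Dset T M) = Dset (S ∪ T) M := by
  funext p q
  have hcond : ∀ r : (i : ι) → F i,
      ((∀ i ∈ T, ov S p r i = ov S q r i) ↔ (∀ i ∈ T, i ∉ S → p i = q i)) := by
    intro r
    constructor
    · intro h i hiT hiS
      have := h i hiT
      simpa [ov, hiS] using this
    · intro h i hiT
      by_cases hiS : i ∈ S
      · simp [ov, hiS]
      · simpa [ov, hiS] using h i hiT hiS
  have hinner : ∀ r : (i : ι) → F i, Dset T M (ov S p r) (ov S q r)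
      = (if ∀ i ∈ T, i ∉ S → p i = q i then (1 : ℂ) else 0)
        * (∑ r' : (i : ι) → F i, M (ov (S ∪ T) p (ov T r r')) (ov (S ∪ T) q (ov T r r')))
        / ((nC (F := F) T : ℂ) * (nC (F := F) Tᶜ : ℂ)) := by
    intro r
    rw [Dset_apply]
    rw [if_congr (hcond r) rfl rfl]
    congr 2
    refine Finset.sum_congr rfl fun r' _ => ?_
    rw [ov_ov, ov_ov]
  rw [Dset_apply, Dset_apply]
  simp only [hinner]
  rw [← Finset.sum_div, ← Finset.mul_sum]
  rw [sum_ov_pair T (fun w => M (ov (S ∪ T) p w) (ov (S ∪ T) q w))]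
  have hcombine : ((∀ i ∈ S, p i = q i) ∧ (∀ i ∈ T, i ∉ S → p i = q i))
      ↔ (∀ i ∈ S ∪ T, p i = q i) := by
    constructor
    · rintro ⟨h1, h2⟩ i hi
      rcases Finset.mem_union.mp hi with h | h
      · exact h1 i h
      · by_cases hiS : i ∈ S
        · exact h1 i hiS
        · exact h2 i h hiS
    · intro h
      exact ⟨fun i hi => h i (Finset.mem_union_left _ hi),
        fun i hi _ => h i (Finset.mem_union_right _ hi)⟩
  have hite : (if ∀ i ∈ S ∪ T, p i = q i then (1 : ℂ) else 0)
      = (if ∀ i ∈ S, p i = q i then (1 : ℂ) else 0)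
        * (if ∀ i ∈ T, i ∉ S → p i = q i then (1 : ℂ) else 0) := by
    rw [ite_mul_ite]
    exact (if_congr hcombine rfl rfl).symm
  rw [hite]
  have hcS : ((nC (F := F) S : ℂ)) * ((nC (F := F) Sᶜ : ℂ))
      = (Fintype.card ((i : ι) → F i) : ℂ) := by exact_mod_cast nC_mul_compl S
  have hcT : ((nC (F := F) T : ℂ)) * ((nC (F := F) Tᶜ : ℂ))
      = (Fintype.card ((i : ι) → F i) : ℂ) := by exact_mod_cast nC_mul_compl T
  have hcU : ((nC (F := F) (S ∪ T) : ℂ)) * ((nC (F := F) (S ∪ T)ᶜ : ℂ))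
      = (Fintype.card ((i : ι) → F i) : ℂ) := by exact_mod_cast nC_mul_compl (S ∪ T)
  rw [hcS, hcT, hcU]
  have hN : ((Fintype.card ((i : ι) → F i) : ℂ)) ≠ 0 := by
    have : 0 < Fintype.card ((i : ι) → F i) := Fintype.card_pos
    exact_mod_cast this.ne'
  field_simp

lemma nC_ne_zero [∀ i, Nonempty (F i)] (S : Finset ι) : ((nC (F := F) S : ℂ)) ≠ 0 :=
  Nat.cast_ne_zero.mpr (nC_pos S).ne'

lemma Dset_trace [∀ i, Nonempty (F i)] (S : Finset ι)
    (M : Matrix ((i : ι) → F i) ((i : ι) → F i) ℂ) :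
    (Dset S M).trace = M.trace := by
  unfold Matrix.trace Matrix.diag
  have h : ∀ p : (i : ι) → F i, Dset S M p p
      = (∑ r : (i : ι) → F i, M (ov S p r) (ov S p r))
        / ((nC (F := F) S : ℂ) * (nC (F := F) Sᶜ : ℂ)) := by
    intro p
    rw [Dset_apply]
    simp
  simp only [h]
  rw [← Finset.sum_div, sum_ov_pair S (fun u => M u u)]
  have hcS : ((nC (F := F) S : ℂ)) * ((nC (F := F) Sᶜ : ℂ))
      = (Fintype.card ((i : ι) → F i) : ℂ) := by exact_mod_cast nC_mul_compl S
  rw [hcS]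
  have hN : ((Fintype.card ((i : ι) → F i) : ℂ)) ≠ 0 := by
    have : 0 < Fintype.card ((i : ι) → F i) := Fintype.card_pos
    exact_mod_cast this.ne'
  field_simp

lemma Dset_add (S : Finset ι) (A B : Matrix ((i : ι) → F i) ((i : ι) → F i) ℂ) :
    Dset S (A + B) = Dset S A + Dset S B := by
  funext p q
  simp only [Dset, Matrix.add_apply, Finset.sum_add_distrib]
  ring

lemma Dset_smul (S : Finset ι) (c : ℂ) (A : Matrix ((i : ι) → F i) ((i : ι) → F i) ℂ) :
    Dset S (c • A) = c • Dset S A := by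
  funext p q
  simp only [Dset, Matrix.smul_apply, smul_eq_mul, ← Finset.mul_sum]
  ring

lemma Dset_sub (S : Finset ι) (A B : Matrix ((i : ι) → F i) ((i : ι) → F i) ℂ) :
    Dset S (A - B) = Dset S A - Dset S B := by
  funext p q
  simp only [Dset, Matrix.sub_apply, Finset.sum_sub_distrib]
  ring

/-- partial-isometry-type operators -/
def Eop (S : Finset ι) (r t : (i : ι) → F i) :
    Matrix ((i : ι) → F i) ((i : ι) → F i) ℂ :=
  fun u v => if ((∀ i ∈ S, u i = r i) ∧ v = ov S u t) then 1 else 0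

lemma Eop_cond_swap (S : Finset ι) (r t u v : (i : ι) → F i) :
    ((∀ i ∈ S, v i = r i) ∧ u = ov S v t) ↔ ((∀ i ∈ S, u i = t i) ∧ v = ov S u r) := by
  constructor
  · rintro ⟨h1, rfl⟩
    refine ⟨fun i hi => by simp [ov, hi], ?_⟩
    funext i
    by_cases hi : i ∈ S
    · simp [ov, hi, h1 i hi]
    · simp [ov, hi]
  · rintro ⟨h1, rfl⟩
    refine ⟨fun i hi => by simp [ov, hi], ?_⟩
    funext i
    by_cases hi : i ∈ S
    · simp [ov, hi, h1 i hi]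
    · simp [ov, hi]

lemma Eop_conjTranspose (S : Finset ι) (r t : (i : ι) → F i) :
    (Eop S r t)ᴴ = Eop S t r := by
  funext u v
  simp only [Matrix.conjTranspose_apply, Eop, apply_ite star, star_one, star_zero]
  exact if_congr (Eop_cond_swap S r t u v) rfl rfl

lemma Eop_mul_mul (S : Finset ι) (M : Matrix ((i : ι) → F i) ((i : ι) → F i) ℂ)
    (r t u v : (i : ι) → F i) :
    (Eop S r t * M * (Eop S r t)ᴴ) u v
      = (if ∀ i ∈ S, u i = r i then (1 : ℂ) else 0)
        * (if ∀ i ∈ S, v i = r i then (1 : ℂ) else 0)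
        * M (ov S u t) (ov S v t) := by
  rw [Eop_conjTranspose]
  by_cases h1 : ∀ i ∈ S, u i = r i
  · have hE1 : ∀ u', Eop S r t u u' = if u' = ov S u t then (1 : ℂ) else 0 := by
      intro u'
      simp only [Eop]
      exact if_congr (and_iff_right h1) rfl rfl
    have hE2 : ∀ v', Eop S t r v' v
        = if ((∀ i ∈ S, v i = r i) ∧ v' = ov S v t) then (1 : ℂ) else 0 := by
      intro v'
      simp only [Eop]
      exact if_congr (Eop_cond_swap S r t v' v).symm rfl rfl
    have hrow : ∀ v', (Eop S r t * M) u v' = M (ov S u t) v' := by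
      intro v'
      rw [Matrix.mul_apply]
      simp only [hE1, ite_mul, one_mul, zero_mul]
      rw [Finset.sum_ite_eq' Finset.univ (ov S u t) (fun x => M x v')]
      simp
    by_cases h2 : ∀ i ∈ S, v i = r i
    · rw [Matrix.mul_apply]
      simp only [hrow, hE2]
      have hc : ∀ v', (if ((∀ i ∈ S, v i = r i) ∧ v' = ov S v t) then (1 : ℂ) else 0)
          = if v' = ov S v t then 1 else 0 := fun v' => if_congr (and_iff_right h2) rfl rfl
      simp only [hc, mul_ite, mul_one, mul_zero]
      rw [Finset.sum_ite_eq' Finset.univ (ov S v t) (fun x => M (ov S u t) x)]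
      rw [if_pos h2, if_pos h1]
      simp
    · have hc : ∀ v', (if ((∀ i ∈ S, v i = r i) ∧ v' = ov S v t) then (1 : ℂ) else 0) = 0 :=
        fun v' => by simp [h2]
      rw [Matrix.mul_apply]
      simp only [hE2, hc, mul_zero, Finset.sum_const_zero]
      simp [h2]
  · have hE1 : ∀ u', Eop S r t u u' = 0 := by
      intro u'; simp [Eop, h1]
    have hcol : ∀ v', (Eop S r t * M) u v' = 0 := by
      intro v'
      rw [Matrix.mul_apply]
      simp [hE1]
    rw [Matrix.mul_apply]
    simp [hcol, h1]

lemma sum_Eop [∀ i, Nonempty (F i)] (S : Finset ι)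
    (M : Matrix ((i : ι) → F i) ((i : ι) → F i) ℂ) :
    (∑ r : (i : ι) → F i, ∑ t : (i : ι) → F i, Eop S r t * M * (Eop S r t)ᴴ)
      = ((nC (F := F) S : ℂ) * (nC (F := F) Sᶜ : ℂ) * (nC (F := F) Sᶜ : ℂ)) • Dset S M := by
  funext u v
  simp only [Matrix.sum_apply, Eop_mul_mul, Matrix.smul_apply, smul_eq_mul]
  have hsplit : ∀ r : (i : ι) → F i,
      (if ∀ i ∈ S, u i = r i then (1 : ℂ) else 0) * (if ∀ i ∈ S, v i = r i then (1 : ℂ) else 0)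
        = (if ∀ i ∈ S, v i = u i then (1 : ℂ) else 0)
          * (if ∀ i ∈ S, r i = u i then (1 : ℂ) else 0) := by
    intro r
    rw [ite_mul_ite, ite_mul_ite]
    refine if_congr ?_ rfl rfl
    constructor
    · rintro ⟨ha, hb⟩
      exact ⟨fun i hi => (hb i hi).trans (ha i hi).symm, fun i hi => (ha i hi).symm⟩
    · rintro ⟨ha, hb⟩
      exact ⟨fun i hi => (hb i hi).symm, fun i hi => (ha i hi).trans (hb i hi).symm⟩
  have hmain : (∑ r : (i : ι) → F i, ∑ t : (i : ι) → F i,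
      (if ∀ i ∈ S, u i = r i then (1 : ℂ) else 0)
        * (if ∀ i ∈ S, v i = r i then (1 : ℂ) else 0) * M (ov S u t) (ov S v t))
      = ((if ∀ i ∈ S, v i = u i then (1 : ℂ) else 0) * (nC (F := F) Sᶜ : ℂ))
        * (∑ t : (i : ι) → F i, M (ov S u t) (ov S v t)) := by
    rw [← Finset.sum_mul_sum]
    congr 1
    simp only [hsplit]
    rw [← Finset.mul_sum, sum_indicator S u]
  rw [hmain, Dset_apply]
  have heq : (if ∀ i ∈ S, v i = u i then (1 : ℂ) else 0)
      = (if ∀ i ∈ S, u i = v i then (1 : ℂ) else 0) := by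
    refine if_congr ?_ rfl rfl
    exact forall₂_congr fun i _ => eq_comm
  rw [heq]
  have hnz : ((nC (F := F) S : ℂ)) ≠ 0 := nC_ne_zero S
  have hnz2 : ((nC (F := F) Sᶜ : ℂ)) ≠ 0 := nC_ne_zero Sᶜ
  by_cases hcond : ∀ i ∈ S, u i = v i
  · rw [if_pos hcond]
    field_simp
  · rw [if_neg hcond]
    simp

lemma Eop_congr (S : Finset ι) {r t : (i : ι) → F i} (h : ∀ i ∈ S, r i = t i) :
    Eop (F := F) S r t = Eop S t t := by
  funext u v
  refine if_congr (and_congr ?_ Iff.rfl) rfl rfl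
  exact forall₂_congr fun i hi => by rw [h i hi]

lemma sum_Eop_diag [∀ i, Nonempty (F i)] (S : Finset ι) :
    (∑ a : (i : ι) → F i, Eop (F := F) S a a)
      = ((nC (F := F) Sᶜ : ℂ)) • (1 : Matrix ((i : ι) → F i) ((i : ι) → F i) ℂ) := by
  funext u v
  simp only [Matrix.sum_apply, Matrix.smul_apply, Matrix.one_apply, smul_eq_mul]
  have h : ∀ a : (i : ι) → F i, Eop (F := F) S a a u v
      = (if v = u then (1 : ℂ) else 0) * (if ∀ i ∈ S, a i = u i then (1 : ℂ) else 0) := by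
    intro a
    rw [show Eop (F := F) S a a u v
        = if ((∀ i ∈ S, u i = a i) ∧ v = ov S u a) then (1 : ℂ) else 0 from rfl]
    rw [ite_mul_ite]
    refine if_congr ?_ rfl rfl
    constructor
    · rintro ⟨h1, rfl⟩
      refine ⟨?_, fun i hi => (h1 i hi).symm⟩
      funext i
      by_cases hi : i ∈ S
      · simp [ov, hi, (h1 i hi).symm]
      · simp [ov, hi]
    · rintro ⟨rfl, h1⟩
      refine ⟨fun i hi => (h1 i hi).symm, ?_⟩
      funext i
      by_cases hi : i ∈ S
      · simp [ov, hi, h1 i hi]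
      · simp [ov, hi]
  simp only [h]
  rw [← Finset.mul_sum, sum_indicator S u]
  by_cases hv : v = u
  · subst hv; simp [mul_comm]
  · simp [hv, Ne.symm hv]

lemma posSemidef_sum {β : Type} {n : Type} [Fintype n] (s : Finset β)
    (f : β → Matrix n n ℂ) (h : ∀ b ∈ s, (f b).PosSemidef) :
    (∑ b ∈ s, f b).PosSemidef :=
  Finset.sum_induction f _ (fun _ _ ha hb => ha.add hb) Matrix.PosSemidef.zero h

lemma posSemidef_smul_complex {n : Type} [Fintype n] {A : Matrix n n ℂ}
    (hA : A.PosSemidef) {c : ℂ} (hc : 0 ≤ c) : (c • A).PosSemidef := by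
  constructor
  · have him : c.im = 0 := ((Complex.le_def.mp hc).2).symm
    have hstar : star c = c := by
      rw [Complex.star_def]
      exact Complex.conj_eq_iff_im.mpr him
    show (c • A)ᴴ = c • A
    rw [Matrix.conjTranspose_smul, hstar, hA.1]
  · intro x
    exact (hA.smul hc).2 x

lemma natCast_nonneg_complex (k : ℕ) : (0 : ℂ) ≤ (k : ℂ) := by
  rw [Complex.le_def]
  simp

lemma realCast_nonneg_complex {r : ℝ} (hr : 0 ≤ r) : (0 : ℂ) ≤ ((r : ℝ) : ℂ) := by
  rw [Complex.le_def]
  simp [hr]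

lemma posSemidef_of_smul_real {n : Type} [Fintype n] {A : Matrix n n ℂ} {c : ℝ}
    (hc : 0 < c) (h : (((c : ℝ) : ℂ) • A).PosSemidef) : A.PosSemidef := by
  have h2 := posSemidef_smul_complex h (realCast_nonneg_complex (inv_nonneg.mpr hc.le))
  rw [smul_smul, ← Complex.ofReal_mul, inv_mul_cancel₀ hc.ne', Complex.ofReal_one,
    one_smul] at h2
  exact h2

lemma psd_pinch [∀ i, Nonempty (F i)] (S : Finset ι)
    {M : Matrix ((i : ι) → F i) ((i : ι) → F i) ℂ} (hM : M.PosSemidef) :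
    ((2 * (Fintype.card ((i : ι) → F i) : ℂ))
        • (∑ a : (i : ι) → F i, Eop S a a * M * (Eop S a a)ᴴ)
      - (2 * (nC (F := F) Sᶜ : ℂ) * (nC (F := F) Sᶜ : ℂ)) • M).PosSemidef := by
  have expand : ∀ a c : (i : ι) → F i,
      (Eop S a a - Eop S c c) * M * (Eop S a a - Eop S c c)ᴴ
        = Eop S a a * M * (Eop S a a)ᴴ + Eop S c c * M * (Eop S c c)ᴴ
          - Eop S a a * M * (Eop S c c)ᴴ - Eop S c c * M * (Eop S a a)ᴴ := by
    intro a c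
    rw [Matrix.conjTranspose_sub]
    noncomm_ring
  have hP : ∀ (f : ((i : ι) → F i) → Matrix ((i : ι) → F i) ((i : ι) → F i) ℂ),
      (∑ a : (i : ι) → F i, ∑ c : (i : ι) → F i, f a)
        = (Fintype.card ((i : ι) → F i) : ℂ) • ∑ a : (i : ι) → F i, f a := by
    intro f
    have h0 : ∀ a : (i : ι) → F i, (∑ _c : (i : ι) → F i, f a)
        = (Fintype.card ((i : ι) → F i)) • f a := fun a => by
      rw [Finset.sum_const, Finset.card_univ]
    simp only [h0]
    rw [← Finset.smul_sum]
    exact (Nat.cast_smul_eq_nsmul ℂ _ _).symm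
  have hcross1 : (∑ a : (i : ι) → F i, ∑ c : (i : ι) → F i,
      Eop S a a * M * (Eop S c c)ᴴ)
        = ((nC (F := F) Sᶜ : ℂ) * (nC (F := F) Sᶜ : ℂ)) • M := by
    have hfact : (∑ a : (i : ι) → F i, Eop (F := F) S a a) * M
          * (∑ c : (i : ι) → F i, Eop (F := F) S c c)ᴴ
        = (∑ a : (i : ι) → F i, ∑ c : (i : ι) → F i, Eop S a a * M * (Eop S c c)ᴴ) := by
      rw [Matrix.conjTranspose_sum, Finset.sum_mul, Finset.sum_mul]
      refine Finset.sum_congr rfl fun a _ => ?_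
      rw [Matrix.mul_sum]
    rw [← hfact, sum_Eop_diag]
    rw [Matrix.conjTranspose_smul, Matrix.conjTranspose_one]
    have hstar : star ((nC (F := F) Sᶜ : ℂ)) = ((nC (F := F) Sᶜ : ℂ)) := by
      simp
    rw [hstar]
    simp [Matrix.smul_mul, Matrix.mul_smul, smul_smul, mul_comm]
  have hcross2 : (∑ a : (i : ι) → F i, ∑ c : (i : ι) → F i,
      Eop S c c * M * (Eop S a a)ᴴ)
        = ((nC (F := F) Sᶜ : ℂ) * (nC (F := F) Sᶜ : ℂ)) • M := by
    rw [Finset.sum_comm]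
    exact hcross1
  have key : ((2 * (Fintype.card ((i : ι) → F i) : ℂ))
        • (∑ a : (i : ι) → F i, Eop S a a * M * (Eop S a a)ᴴ)
      - (2 * (nC (F := F) Sᶜ : ℂ) * (nC (F := F) Sᶜ : ℂ)) • M)
      = ∑ a : (i : ι) → F i, ∑ c : (i : ι) → F i,
          (Eop S a a - Eop S c c) * M * (Eop S a a - Eop S c c)ᴴ := by
    simp only [expand]
    simp only [Finset.sum_sub_distrib, Finset.sum_add_distrib]
    rw [hP (fun a => Eop S a a * M * (Eop S a a)ᴴ)]
    rw [show (∑ a : (i : ι) → F i, ∑ c : (i : ι) → F i, Eop S c c * M * (Eop S c c)ᴴ)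
        = (Fintype.card ((i : ι) → F i) : ℂ)
          • ∑ c : (i : ι) → F i, Eop S c c * M * (Eop S c c)ᴴ from by
      rw [Finset.sum_comm]
      exact hP (fun c => Eop S c c * M * (Eop S c c)ᴴ)]
    rw [hcross1, hcross2]
    module
  rw [key]
  refine posSemidef_sum _ _ fun a _ => posSemidef_sum _ _ fun c _ => ?_
  exact hM.mul_mul_conjTranspose_same _

lemma psd_offdiag [∀ i, Nonempty (F i)] (S : Finset ι)
    {M : Matrix ((i : ι) → F i) ((i : ι) → F i) ℂ} (hM : M.PosSemidef) :
    (((nC (F := F) S : ℂ) * (nC (F := F) Sᶜ : ℂ) * (nC (F := F) Sᶜ : ℂ)) • Dset S M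
      - (nC (F := F) Sᶜ : ℂ)
          • (∑ a : (i : ι) → F i, Eop S a a * M * (Eop S a a)ᴴ)).PosSemidef := by
  have hdiag : (∑ r : (i : ι) → F i, ∑ t : (i : ι) → F i,
      if ∀ i ∈ S, r i = t i then Eop S r t * M * (Eop S r t)ᴴ else 0)
      = (nC (F := F) Sᶜ : ℂ)
          • (∑ a : (i : ι) → F i, Eop S a a * M * (Eop S a a)ᴴ) := by
    rw [Finset.sum_comm]
    have h1 : ∀ t r : (i : ι) → F i,
        (if ∀ i ∈ S, r i = t i then Eop S r t * M * (Eop S r t)ᴴ else 0)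
          = (if ∀ i ∈ S, r i = t i then (1 : ℂ) else 0)
            • (Eop S t t * M * (Eop S t t)ᴴ) := by
      intro t r
      split_ifs with h
      · rw [Eop_congr S h, one_smul]
      · rw [zero_smul]
    simp only [h1]
    rw [Finset.smul_sum]
    refine Finset.sum_congr rfl fun t _ => ?_
    rw [← Finset.sum_smul, sum_indicator S t]
  have hsplit : (∑ r : (i : ι) → F i, ∑ t : (i : ι) → F i, Eop S r t * M * (Eop S r t)ᴴ)
      = (∑ r : (i : ι) → F i, ∑ t : (i : ι) → F i,
          if ∀ i ∈ S, r i = t i then Eop S r t * M * (Eop S r t)ᴴ else 0)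
        + (∑ r : (i : ι) → F i, ∑ t : (i : ι) → F i,
          if ∀ i ∈ S, r i = t i then 0 else Eop S r t * M * (Eop S r t)ᴴ) := by
    rw [← Finset.sum_add_distrib]
    refine Finset.sum_congr rfl fun r _ => ?_
    rw [← Finset.sum_add_distrib]
    refine Finset.sum_congr rfl fun t _ => ?_
    split_ifs <;> simp
  have key : (((nC (F := F) S : ℂ) * (nC (F := F) Sᶜ : ℂ) * (nC (F := F) Sᶜ : ℂ)) • Dset S M
      - (nC (F := F) Sᶜ : ℂ)
          • (∑ a : (i : ι) → F i, Eop S a a * M * (Eop S a a)ᴴ))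
      = (∑ r : (i : ι) → F i, ∑ t : (i : ι) → F i,
          if ∀ i ∈ S, r i = t i then 0 else Eop S r t * M * (Eop S r t)ᴴ) := by
    rw [← sum_Eop S M, ← hdiag, hsplit]
    abel
  rw [key]
  refine posSemidef_sum _ _ fun r _ => posSemidef_sum _ _ fun t _ => ?_
  split_ifs
  · exact Matrix.PosSemidef.zero
  · exact hM.mul_mul_conjTranspose_same _

lemma psd_twirl [∀ i, Nonempty (F i)] (S : Finset ι)
    {M : Matrix ((i : ι) → F i) ((i : ι) → F i) ℂ} (hM : M.PosSemidef) :
    (((nC (F := F) S : ℂ) * (nC (F := F) S : ℂ)) • Dset S M - M).PosSemidef := by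
  have h1 := psd_pinch S hM
  have h2 := psd_offdiag S hM
  have h3 := (posSemidef_smul_complex h2
      (natCast_nonneg_complex (2 * nC (F := F) S))).add h1
  have hcast : ((2 * nC (F := F) S : ℕ) : ℂ) = 2 * (nC (F := F) S : ℂ) := by push_cast; ring
  rw [hcast] at h3
  have hcard : (Fintype.card ((i : ι) → F i) : ℂ)
      = (nC (F := F) S : ℂ) * (nC (F := F) Sᶜ : ℂ) := by
    exact_mod_cast (nC_mul_compl S).symm
  have key : ((2 * (nC (F := F) S : ℂ))
        • (((nC (F := F) S : ℂ) * (nC (F := F) Sᶜ : ℂ) * (nC (F := F) Sᶜ : ℂ)) • Dset S M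
          - (nC (F := F) Sᶜ : ℂ)
            • (∑ a : (i : ι) → F i, Eop S a a * M * (Eop S a a)ᴴ))
      + ((2 * (Fintype.card ((i : ι) → F i) : ℂ))
          • (∑ a : (i : ι) → F i, Eop S a a * M * (Eop S a a)ᴴ)
        - (2 * (nC (F := F) Sᶜ : ℂ) * (nC (F := F) Sᶜ : ℂ)) • M))
      = (((2 * (nC (F := F) Sᶜ : ℝ) ^ 2 : ℝ)) : ℂ)
        • ((((nC (F := F) S : ℂ) * (nC (F := F) S : ℂ))) • Dset S M - M) := by
    rw [hcard]
    push_cast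
    module
  rw [key] at h3
  have hpos : (0 : ℝ) < 2 * (nC (F := F) Sᶜ : ℝ) ^ 2 := by
    have := nC_pos (F := F) Sᶜ
    have h0 : (0 : ℝ) < (nC (F := F) Sᶜ : ℝ) := by exact_mod_cast this
    positivity
  exact posSemidef_of_smul_real hpos h3

lemma Dset_posSemidef [∀ i, Nonempty (F i)] (S : Finset ι)
    {M : Matrix ((i : ι) → F i) ((i : ι) → F i) ℂ} (hM : M.PosSemidef) :
    (Dset S M).PosSemidef := by
  have hsum : (∑ r : (i : ι) → F i, ∑ t : (i : ι) → F i,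
      Eop S r t * M * (Eop S r t)ᴴ).PosSemidef :=
    posSemidef_sum _ _ fun r _ => posSemidef_sum _ _ fun t _ =>
      hM.mul_mul_conjTranspose_same _
  rw [sum_Eop S M] at hsum
  have hpos : (0 : ℝ) < ((nC (F := F) S * nC (F := F) Sᶜ * nC (F := F) Sᶜ : ℕ) : ℝ) := by
    have h1 := nC_pos (F := F) S
    have h2 := nC_pos (F := F) Sᶜ
    positivity
  refine posSemidef_of_smul_real hpos ?_
  have : ((((nC (F := F) S * nC (F := F) Sᶜ * nC (F := F) Sᶜ : ℕ) : ℝ)) : ℂ)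
      = ((nC (F := F) S : ℂ) * (nC (F := F) Sᶜ : ℂ) * (nC (F := F) Sᶜ : ℂ)) := by
    push_cast
    ring
  rw [this]
  exact hsum

end Prop2Aux


/-- Index of the two-party space `A_I ⊗ A_O ⊗ B_I ⊗ B_O`:
slot `0 = A_I`, `1 = A_O`, `2 = B_I`, `3 = B_O`, with dimensions `d i`. -/
abbrev PIdx (d : Fin 4 → ℕ) : Type := (i : Fin 4) → Fin (d i)

abbrev PMat (d : Fin 4 → ℕ) : Type := Matrix (PIdx d) (PIdx d) ℂ

/-- The projector `L_V` onto the subspace of valid two-party process matrices. -/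
noncomputable def LV {d : Fin 4 → ℕ} (W : PMat d) : PMat d :=
  Dset ({1} : Finset (Fin 4)) W + Dset ({3} : Finset (Fin 4)) W
    - Dset ({1, 3} : Finset (Fin 4)) W - Dset ({2, 3} : Finset (Fin 4)) W
    + Dset ({1, 2, 3} : Finset (Fin 4)) W - Dset ({0, 1} : Finset (Fin 4)) W
    + Dset ({0, 1, 3} : Finset (Fin 4)) W

/-- Two-party process matrix: positive semidefinite, `L_V(W) = W`,
and `tr W = d_{A_O} * d_{B_O}`. -/
def IsProc {d : Fin 4 → ℕ} (W : PMat d) : Prop :=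
  W.PosSemidef ∧ LV W = W ∧ W.trace = (d 1 : ℂ) * (d 3 : ℂ)

/-- Free (non-signalling) process matrix: a process matrix with `D_{A_O B_O}(W) = W`. -/
def IsFree {d : Fin 4 → ℕ} (W : PMat d) : Prop :=
  IsProc W ∧ Dset ({1, 3} : Finset (Fin 4)) W = W

/-- Signalling robustness. -/
noncomputable def Rs {d : Fin 4 → ℕ} (W : PMat d) : ℝ :=
  sInf { s : ℝ | 0 ≤ s ∧ ∃ T C : PMat d, IsProc T ∧ IsFree C ∧
    W + (s : ℂ) • T = ((1 + s : ℝ) : ℂ) • C }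

/-- Causal order `A ≺ B`: `D_{B_O}(W) = W` and `D_{B_O B_I}(W) = D_{B_O B_I A_O}(W)`. -/
def OrderedAB {d : Fin 4 → ℕ} (W : PMat d) : Prop :=
  Dset ({3} : Finset (Fin 4)) W = W ∧
    Dset ({2, 3} : Finset (Fin 4)) W = Dset ({1, 2, 3} : Finset (Fin 4)) W

/-- Causal order `B ≺ A`: `D_{A_O}(W) = W` and `D_{A_O A_I}(W) = D_{A_O A_I B_O}(W)`. -/
def OrderedBA {d : Fin 4 → ℕ} (W : PMat d) : Prop :=
  Dset ({1} : Finset (Fin 4)) W = W ∧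
    Dset ({0, 1} : Finset (Fin 4)) W = Dset ({0, 1, 3} : Finset (Fin 4)) W

namespace Prop2Aux

variable {d : Fin 4 → ℕ}

lemma LV_add (A B : PMat d) : LV (A + B) = LV A + LV B := by
  unfold LV
  simp only [Dset_add]
  abel

lemma LV_sub (A B : PMat d) : LV (A - B) = LV A - LV B := by
  unfold LV
  simp only [Dset_sub]
  abel

lemma LV_smul (c : ℂ) (A : PMat d) : LV (c • A) = c • LV A := by
  unfold LV
  simp only [Dset_smul, smul_sub, smul_add]

lemma LV_dset13 (hd : ∀ i, 0 < d i) (M : PMat d) : LV (Dset ({1, 3} : Finset (Fin 4)) M)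
    = Dset ({1, 3} : Finset (Fin 4)) M := by
  haveI : ∀ i, Nonempty (Fin (d i)) := fun i => ⟨⟨0, hd i⟩⟩
  unfold LV
  rw [Dset_Dset, Dset_Dset, Dset_Dset, Dset_Dset, Dset_Dset, Dset_Dset, Dset_Dset]
  rw [show ({1} : Finset (Fin 4)) ∪ {1, 3} = {1, 3} from by decide,
    show ({3} : Finset (Fin 4)) ∪ {1, 3} = {1, 3} from by decide,
    show ({1, 3} : Finset (Fin 4)) ∪ {1, 3} = {1, 3} from by decide,
    show ({2, 3} : Finset (Fin 4)) ∪ {1, 3} = {1, 2, 3} from by decide,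
    show ({1, 2, 3} : Finset (Fin 4)) ∪ {1, 3} = {1, 2, 3} from by decide,
    show ({0, 1} : Finset (Fin 4)) ∪ {1, 3} = {0, 1, 3} from by decide,
    show ({0, 1, 3} : Finset (Fin 4)) ∪ {1, 3} = {0, 1, 3} from by decide]
  abel

lemma Q_LV (hd : ∀ i, 0 < d i) (N : PMat d) :
    Dset ({1} : Finset (Fin 4)) (LV N) + Dset ({3} : Finset (Fin 4)) (LV N)
      - Dset ({1, 3} : Finset (Fin 4)) (LV N) = LV N := by
  haveI : ∀ i, Nonempty (Fin (d i)) := fun i => ⟨⟨0, hd i⟩⟩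
  unfold LV
  simp only [Dset_add, Dset_sub, Dset_Dset]
  rw [show ({1} : Finset (Fin 4)) ∪ {1} = {1} from by decide,
    show ({1} : Finset (Fin 4)) ∪ {3} = {1, 3} from by decide,
    show ({1} : Finset (Fin 4)) ∪ {1, 3} = {1, 3} from by decide,
    show ({1} : Finset (Fin 4)) ∪ {2, 3} = {1, 2, 3} from by decide,
    show ({1} : Finset (Fin 4)) ∪ {1, 2, 3} = {1, 2, 3} from by decide,
    show ({1} : Finset (Fin 4)) ∪ {0, 1} = {0, 1} from by decide,
    show ({1} : Finset (Fin 4)) ∪ {0, 1, 3} = {0, 1, 3} from by decide,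
    show ({3} : Finset (Fin 4)) ∪ {1} = {1, 3} from by decide,
    show ({3} : Finset (Fin 4)) ∪ {3} = {3} from by decide,
    show ({3} : Finset (Fin 4)) ∪ {1, 3} = {1, 3} from by decide,
    show ({3} : Finset (Fin 4)) ∪ {2, 3} = {2, 3} from by decide,
    show ({3} : Finset (Fin 4)) ∪ {1, 2, 3} = {1, 2, 3} from by decide,
    show ({3} : Finset (Fin 4)) ∪ {0, 1} = {0, 1, 3} from by decide,
    show ({3} : Finset (Fin 4)) ∪ {0, 1, 3} = {0, 1, 3} from by decide,
    show ({1, 3} : Finset (Fin 4)) ∪ {1} = {1, 3} from by decide,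
    show ({1, 3} : Finset (Fin 4)) ∪ {3} = {1, 3} from by decide,
    show ({1, 3} : Finset (Fin 4)) ∪ {1, 3} = {1, 3} from by decide,
    show ({1, 3} : Finset (Fin 4)) ∪ {2, 3} = {1, 2, 3} from by decide,
    show ({1, 3} : Finset (Fin 4)) ∪ {1, 2, 3} = {1, 2, 3} from by decide,
    show ({1, 3} : Finset (Fin 4)) ∪ {0, 1} = {0, 1, 3} from by decide,
    show ({1, 3} : Finset (Fin 4)) ∪ {0, 1, 3} = {0, 1, 3} from by decide]
  abel

lemma three_term (hd : ∀ i, 0 < d i) {W : PMat d} (hlv : LV W = W) :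
    W = Dset ({1} : Finset (Fin 4)) W + Dset ({3} : Finset (Fin 4)) W
      - Dset ({1, 3} : Finset (Fin 4)) W := by
  conv_lhs => rw [← hlv]
  rw [← Q_LV hd W, hlv]

end Prop2Aux

namespace Prop2Aux

variable {d : Fin 4 → ℕ}

lemma main_psd (hd : ∀ i, 0 < d i) (hbar : 2 ≤ max (d 1) (d 3)) {W : PMat d}
    (hpsd : W.PosSemidef) (hlv : LV W = W) :
    ((((((max (d 1) (d 3) : ℕ) : ℝ) ^ 2 : ℝ)) : ℂ) • Dset ({1, 3} : Finset (Fin 4)) W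
      - W).PosSemidef := by
  haveI : ∀ i, Nonempty (Fin (d i)) := fun i => ⟨⟨0, hd i⟩⟩
  set X := Dset ({1} : Finset (Fin 4)) W with hX
  set Y := Dset ({3} : Finset (Fin 4)) W with hY
  set Z := Dset ({1, 3} : Finset (Fin 4)) W with hZ
  have hiii : W = X + Y - Z := three_term hd hlv
  have hn1 : (nC (F := fun i => Fin (d i)) ({1} : Finset (Fin 4)) : ℂ) = (d 1 : ℂ) := by
    simp [nC]
  have hn3 : (nC (F := fun i => Fin (d i)) ({3} : Finset (Fin 4)) : ℂ) = (d 3 : ℂ) := by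
    simp [nC]
  have hZ1 : Dset ({1} : Finset (Fin 4)) Y = Z := by
    rw [hY, hZ, Dset_Dset, show ({1} : Finset (Fin 4)) ∪ {3} = {1, 3} from by decide]
  have hZ3 : Dset ({3} : Finset (Fin 4)) X = Z := by
    rw [hX, hZ, Dset_Dset, show ({3} : Finset (Fin 4)) ∪ {1} = {1, 3} from by decide]
  have hXpsd : X.PosSemidef := Dset_posSemidef _ hpsd
  have hYpsd : Y.PosSemidef := Dset_posSemidef _ hpsd
  have t3 : (((d 3 : ℂ) * (d 3 : ℂ)) • Y - W).PosSemidef := by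
    have h0 := psd_twirl ({3} : Finset (Fin 4)) hpsd
    rwa [hn3, ← hY] at h0
  have t1 : (((d 1 : ℂ) * (d 1 : ℂ)) • X - W).PosSemidef := by
    have h0 := psd_twirl ({1} : Finset (Fin 4)) hpsd
    rwa [hn1, ← hX] at h0
  have p2a : (((d 1 : ℂ) * (d 1 : ℂ)) • Z - Y).PosSemidef := by
    have h0 := psd_twirl ({1} : Finset (Fin 4)) hYpsd
    rwa [hn1, hZ1] at h0
  have p2b : (((d 3 : ℂ) * (d 3 : ℂ)) • Z - X).PosSemidef := by
    have h0 := psd_twirl ({3} : Finset (Fin 4)) hXpsd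
    rwa [hn3, hZ3] at h0
  have p1 : (((d 1 : ℂ) * (d 1 : ℂ) * (d 3 : ℂ) * (d 3 : ℂ)) • Z
      - ((d 1 : ℂ) * (d 1 : ℂ)) • X - ((d 3 : ℂ) * (d 3 : ℂ)) • Y + W).PosSemidef := by
    have h0 := psd_twirl ({1} : Finset (Fin 4)) t3
    rw [hn1, Dset_sub, Dset_smul, hZ1, ← hX] at h0
    have heq : (((d 1 : ℂ) * (d 1 : ℂ)) • (((d 3 : ℂ) * (d 3 : ℂ)) • Z - X)
        - (((d 3 : ℂ) * (d 3 : ℂ)) • Y - W))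
        = (((d 1 : ℂ) * (d 1 : ℂ) * (d 3 : ℂ) * (d 3 : ℂ)) • Z
          - ((d 1 : ℂ) * (d 1 : ℂ)) • X - ((d 3 : ℂ) * (d 3 : ℂ)) • Y + W) := by
      module
    rwa [heq] at h0
  rcases le_total (d 3) (d 1) with hcase | hcase
  · have hmax : max (d 1) (d 3) = d 1 := max_eq_left hcase
    rw [hmax] at hbar ⊢
    have hd31 : ((d 3 : ℝ)) ≤ ((d 1 : ℝ)) := by exact_mod_cast hcase
    have hd3nn : (0 : ℝ) ≤ (d 3 : ℝ) := by positivity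
    have h21 : (2 : ℝ) ≤ (d 1 : ℝ) := by exact_mod_cast hbar
    have key : ((((d 1 : ℝ) ^ 2 - 1 : ℝ)) : ℂ)
          • (((((d 1 : ℕ) : ℝ) ^ 2 : ℝ) : ℂ) • Z - W)
        = (((d 1 : ℂ) * (d 1 : ℂ) * (d 3 : ℂ) * (d 3 : ℂ)) • Z
            - ((d 1 : ℂ) * (d 1 : ℂ)) • X - ((d 3 : ℂ) * (d 3 : ℂ)) • Y + W)
          + ((((d 1 : ℝ) ^ 2 - (d 3 : ℝ) ^ 2 : ℝ)) : ℂ)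
            • (((d 1 : ℂ) * (d 1 : ℂ)) • Z - Y) := by
      rw [hiii]
      push_cast
      module
    have hsum := p1.add (posSemidef_smul_complex p2a
      (realCast_nonneg_complex (by nlinarith : (0 : ℝ) ≤ (d 1 : ℝ) ^ 2 - (d 3 : ℝ) ^ 2)))
    rw [← key] at hsum
    exact posSemidef_of_smul_real (by nlinarith : (0 : ℝ) < (d 1 : ℝ) ^ 2 - 1) hsum
  · have hmax : max (d 1) (d 3) = d 3 := max_eq_right hcase
    rw [hmax] at hbar ⊢
    have hd13 : ((d 1 : ℝ)) ≤ ((d 3 : ℝ)) := by exact_mod_cast hcase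
    have hd1nn : (0 : ℝ) ≤ (d 1 : ℝ) := by positivity
    have h23 : (2 : ℝ) ≤ (d 3 : ℝ) := by exact_mod_cast hbar
    have key : ((((d 3 : ℝ) ^ 2 - 1 : ℝ)) : ℂ)
          • (((((d 3 : ℕ) : ℝ) ^ 2 : ℝ) : ℂ) • Z - W)
        = (((d 1 : ℂ) * (d 1 : ℂ) * (d 3 : ℂ) * (d 3 : ℂ)) • Z
            - ((d 1 : ℂ) * (d 1 : ℂ)) • X - ((d 3 : ℂ) * (d 3 : ℂ)) • Y + W)
          + ((((d 3 : ℝ) ^ 2 - (d 1 : ℝ) ^ 2 : ℝ)) : ℂ)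
            • (((d 3 : ℂ) * (d 3 : ℂ)) • Z - X) := by
      rw [hiii]
      push_cast
      module
    have hsum := p1.add (posSemidef_smul_complex p2b
      (realCast_nonneg_complex (by nlinarith : (0 : ℝ) ≤ (d 3 : ℝ) ^ 2 - (d 1 : ℝ) ^ 2)))
    rw [← key] at hsum
    exact posSemidef_of_smul_real (by nlinarith : (0 : ℝ) < (d 3 : ℝ) ^ 2 - 1) hsum

end Prop2Aux


/-- Proposition 2: for every two-party process matrix `W`,
the signalling robustness satisfies `R_s(W) ≤ dbar^2 - 1`, `dbar = max(d_{A_O}, d_{B_O})`. -/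
theorem prop2 {d : Fin 4 → ℕ} (hd : ∀ i, 0 < d i)
    (hbar : 2 ≤ max (d 1) (d 3))
    (W : PMat d) (hW : IsProc W) :
    Rs W ≤ (max (d 1) (d 3) : ℝ) ^ 2 - 1 := by
  classical
  haveI : ∀ i, Nonempty (Fin (d i)) := fun i => ⟨⟨0, hd i⟩⟩
  obtain ⟨hpsd, hlv, htr⟩ := hW
  set m : ℕ := max (d 1) (d 3) with hm
  have hm2 : (2 : ℝ) ≤ (m : ℝ) := by exact_mod_cast hbar
  have hs0 : (0 : ℝ) < (m : ℝ) ^ 2 - 1 := by nlinarith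
  set C := Dset ({1, 3} : Finset (Fin 4)) W with hC
  have hCpsd : C.PosSemidef := Prop2Aux.Dset_posSemidef _ hpsd
  have hClv : LV C = C := Prop2Aux.LV_dset13 hd W
  have hCtr : C.trace = (d 1 : ℂ) * (d 3 : ℂ) := by
    rw [hC, Prop2Aux.Dset_trace, htr]
  have hCfree : IsFree C := by
    refine ⟨⟨hCpsd, hClv, hCtr⟩, ?_⟩
    rw [hC, Prop2Aux.Dset_Dset,
      show ({1, 3} : Finset (Fin 4)) ∪ {1, 3} = {1, 3} from by decide]
  have hmain : (((((m : ℝ) ^ 2 : ℝ)) : ℂ) • C - W).PosSemidef :=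
    Prop2Aux.main_psd hd hbar hpsd hlv
  set T : PMat d := (((((m : ℝ) ^ 2 - 1 : ℝ)⁻¹ : ℝ)) : ℂ)
      • (((((m : ℝ) ^ 2 : ℝ)) : ℂ) • C - W) with hT
  have hTpsd : T.PosSemidef :=
    Prop2Aux.posSemidef_smul_complex hmain
      (Prop2Aux.realCast_nonneg_complex (inv_nonneg.mpr hs0.le))
  have hTlv : LV T = T := by
    rw [hT, Prop2Aux.LV_smul, Prop2Aux.LV_sub, Prop2Aux.LV_smul, hClv, hlv]
  have hTtr : T.trace = (d 1 : ℂ) * (d 3 : ℂ) := by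
    rw [hT, Matrix.trace_smul, Matrix.trace_sub, Matrix.trace_smul, hCtr, htr]
    have hne : ((((m : ℝ) ^ 2 - 1 : ℝ)) : ℂ) ≠ 0 := by
      exact_mod_cast Complex.ofReal_ne_zero.mpr hs0.ne'
    have hexp : ((((m : ℝ) ^ 2 : ℝ)) : ℂ) • ((d 1 : ℂ) * (d 3 : ℂ))
        - (d 1 : ℂ) * (d 3 : ℂ)
        = ((((m : ℝ) ^ 2 - 1 : ℝ)) : ℂ) * ((d 1 : ℂ) * (d 3 : ℂ)) := by
      rw [smul_eq_mul]
      push_cast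
      ring
    rw [hexp, smul_eq_mul, ← mul_assoc]
    rw [show ((((m : ℝ) ^ 2 - 1 : ℝ)⁻¹ : ℝ) : ℂ) * ((((m : ℝ) ^ 2 - 1 : ℝ)) : ℂ) = 1 from by
      rw [← Complex.ofReal_mul, inv_mul_cancel₀ hs0.ne', Complex.ofReal_one]]
    rw [one_mul]
  have hmem : ((m : ℝ) ^ 2 - 1) ∈ { s : ℝ | 0 ≤ s ∧ ∃ T' C' : PMat d,
      IsProc T' ∧ IsFree C' ∧ W + (s : ℂ) • T' = ((1 + s : ℝ) : ℂ) • C' } := by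
    refine ⟨hs0.le, T, C, ⟨hTpsd, hTlv, hTtr⟩, hCfree, ?_⟩
    rw [hT, smul_smul]
    rw [show (((((m : ℝ) ^ 2 - 1 : ℝ)) : ℂ)) * ((((m : ℝ) ^ 2 - 1 : ℝ)⁻¹ : ℝ) : ℂ) = 1 from by
      rw [← Complex.ofReal_mul, mul_inv_cancel₀ hs0.ne', Complex.ofReal_one]]
    rw [one_smul]
    rw [show ((1 + ((m : ℝ) ^ 2 - 1) : ℝ) : ℂ) = ((((m : ℝ) ^ 2 : ℝ)) : ℂ) from by
      push_cast; ring]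
    abel
  have hb : BddBelow { s : ℝ | 0 ≤ s ∧ ∃ T' C' : PMat d,
      IsProc T' ∧ IsFree C' ∧ W + (s : ℂ) • T' = ((1 + s : ℝ) : ℂ) • C' } :=
    ⟨0, fun x hx => hx.1⟩
  have hgoal : ((max (d 1) (d 3) : ℕ) : ℝ) = max ((d 1 : ℕ) : ℝ) ((d 3 : ℕ) : ℝ) :=
    Nat.cast_max _ _
  rw [← hgoal, ← hm]
  exact csInf_le hb hmem
end

section
/- Proposition 4 (degradation to a one-way signalling ordered process): Let W be a two-party process matrix on A_I ⊗ A_O ⊗ B_I ⊗ B_O. Then (a) D_{A_O}(W) is a two-party process matrix causally ordered B≺A, and D_{B_O}(W) is a two-party process matrix causally ordered A≺B; and (b) if W is not free (i.e., D_{A_O B_O}(W) ≠ W), then at least one of D_{A_O}(W), D_{B_O}(W) is not free. Equivalently, if both D_{A_O}(W) = D_{A_O B_O}(W) and D_{B_O}(W) = D_{A_O B_O}(W) hold, then W = D_{A_O B_O}(W). -/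
open scoped BigOperators ComplexOrder

namespace Prop4Aux

variable {d : Fin 4 → ℕ}

/-- merge: take `a` on `S`, `b` off `S`. -/
def mg (S : Finset (Fin 4)) (a b : (i : Fin 4) → Fin (d i)) : (i : Fin 4) → Fin (d i) :=
  fun i => if i ∈ S then a i else b i

@[simp] lemma mg_self (S : Finset (Fin 4)) (a : (i : Fin 4) → Fin (d i)) : mg S a a = a := by
  funext i; simp [mg]

@[simp] lemma mg_mg_left (S : Finset (Fin 4)) (a b c : (i : Fin 4) → Fin (d i)) :
    mg S (mg S a b) c = mg S a c := by
  funext i; by_cases h : i ∈ S <;> simp [mg, h]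

@[simp] lemma mg_mg_right (S : Finset (Fin 4)) (a b c : (i : Fin 4) → Fin (d i)) :
    mg S a (mg S b c) = mg S a c := by
  funext i; by_cases h : i ∈ S <;> simp [mg, h]

lemma mg_mg_self (S : Finset (Fin 4)) (p r : (i : Fin 4) → Fin (d i)) :
    mg S (mg S p r) (mg S r p) = p := by
  funext i; by_cases h : i ∈ S <;> simp [mg, h]

lemma sum_swap_pair (S : Finset (Fin 4)) (f : ((i : Fin 4) → Fin (d i)) → ((i : Fin 4) → Fin (d i)) → ℂ) :
    (∑ p, ∑ r, f p r) = ∑ p, ∑ r, f (mg S r p) (mg S p r) := by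
  have h1 := Fintype.sum_prod_type (f := fun pr : ((i : Fin 4) → Fin (d i)) × ((i : Fin 4) → Fin (d i)) => f pr.1 pr.2)
  have h2 := Fintype.sum_prod_type (f := fun pr : ((i : Fin 4) → Fin (d i)) × ((i : Fin 4) → Fin (d i)) => f (mg S pr.2 pr.1) (mg S pr.1 pr.2))
  rw [← h1, ← h2]
  refine (Fintype.sum_bijective
    (fun pr : ((i : Fin 4) → Fin (d i)) × ((i : Fin 4) → Fin (d i)) => (mg S pr.2 pr.1, mg S pr.1 pr.2))
    ?_ (fun pr => f (mg S pr.2 pr.1) (mg S pr.1 pr.2)) (fun pr => f pr.1 pr.2) (fun x => rfl)).symm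
  apply Function.Involutive.bijective
  intro ⟨p, r⟩
  simp only [Prod.mk.injEq]
  exact ⟨mg_mg_self S p r, mg_mg_self S r p⟩

lemma sum_mg (S : Finset (Fin 4)) (f : ((i : Fin 4) → Fin (d i)) → ℂ) :
    (∑ p : PIdx d, ∑ r : PIdx d, f (mg S r p)) = (∏ i, (d i : ℂ)) * ∑ u, f u := by
  rw [sum_swap_pair S (fun p r => f (mg S r p))]
  simp only [mg_mg_left, mg_mg_right, mg_self]
  rw [Finset.sum_comm]
  simp [Finset.sum_const, Finset.card_univ, Fintype.card_pi, Finset.mul_sum]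

lemma sum_chi (S : Finset (Fin 4)) (g : PIdx d) :
    (∑ r : PIdx d, if ∀ i ∈ S, g i = r i then (1:ℂ) else 0) = ∏ i ∈ Sᶜ, (d i : ℂ) := by
  have h1 : ∀ r : PIdx d, (if ∀ i ∈ S, g i = r i then (1:ℂ) else 0)
      = ∏ i : Fin 4, (if i ∈ S then (if g i = r i then (1:ℂ) else 0) else 1) := by
    intro r
    rw [Finset.prod_ite_mem, Finset.univ_inter, Finset.prod_boole]
    simp
  simp only [h1]
  have := (Finset.prod_univ_sum (fun _ : Fin 4 => (Finset.univ : Finset (Fin _)))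
    (fun i y => if i ∈ S then (if g i = y then (1:ℂ) else 0) else 1))
  rw [Fintype.piFinset_univ] at this
  rw [← this]
  have h2 : ∀ i : Fin 4, (∑ y : Fin (d i), if i ∈ S then (if g i = y then (1:ℂ) else 0) else 1)
      = if i ∈ Sᶜ then (d i : ℂ) else 1 := by
    intro i
    by_cases h : i ∈ S <;> simp [h, Finset.sum_ite_eq]
  rw [Finset.prod_congr rfl (fun i _ => h2 i), Finset.prod_ite_mem, Finset.univ_inter]

lemma sum_chi2 (S : Finset (Fin 4)) (p q : PIdx d) :
    (∑ c : PIdx d, (if ∀ i ∈ S, p i = c i then (1:ℂ) else 0) * (if ∀ i ∈ S, q i = c i then (1:ℂ) else 0))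
      = (if ∀ i ∈ S, p i = q i then (1:ℂ) else 0) * ∏ i ∈ Sᶜ, (d i : ℂ) := by
  by_cases hpq : ∀ i ∈ S, p i = q i
  · rw [if_pos hpq, one_mul, ← sum_chi S p]
    refine Finset.sum_congr rfl (fun c _ => ?_)
    by_cases h : ∀ i ∈ S, p i = c i
    · rw [if_pos h, if_pos (fun i hi => (hpq i hi).symm.trans (h i hi)), one_mul]
    · rw [if_neg h, zero_mul]
  · rw [if_neg hpq, zero_mul]
    refine Finset.sum_eq_zero (fun c _ => ?_)
    by_cases h : ∀ i ∈ S, p i = c i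
    · have hq : ¬ ∀ i ∈ S, q i = c i := fun h2 => hpq (fun i hi => (h i hi).trans ((h2 i hi)).symm)
      simp [hq]
    · simp [h]

lemma Dset_apply (S : Finset (Fin 4)) (M : PMat d) (p q : PIdx d) :
    Dset S M p q = (if ∀ i ∈ S, p i = q i then (1:ℂ) else 0)
      * (∑ r : PIdx d, M (mg S r p) (mg S r q)) / ∏ i, (d i : ℂ) := by
  have h0 : Dset S M p q = ((if ∀ i ∈ S, p i = q i then (1:ℂ) else 0) / ∏ i ∈ S, ((Fintype.card (Fin (d i)) : ℂ)))
      * ((∑ r : PIdx d, M (mg S r p) (mg S r q)) / ∏ i ∈ Sᶜ, ((Fintype.card (Fin (d i)) : ℂ))) := by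
    simp only [Dset]
    congr 1
    congr 1
    congr 1
  rw [h0, div_mul_div_comm]
  simp only [Fintype.card_fin]
  rw [Finset.prod_mul_prod_compl]
lemma chi_mul (S T : Finset (Fin 4)) (p q r : PIdx d) :
    (if ∀ i ∈ S, p i = q i then (1:ℂ) else 0) * (if ∀ i ∈ T, mg S r p i = mg S r q i then (1:ℂ) else 0)
      = if ∀ i ∈ S ∪ T, p i = q i then 1 else 0 := by
  by_cases h1 : ∀ i ∈ S, p i = q i
  · rw [if_pos h1, one_mul]
    have hiff : (∀ i ∈ T, mg S r p i = mg S r q i) ↔ (∀ i ∈ S ∪ T, p i = q i) := by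
      constructor
      · intro h i hi
        rcases Finset.mem_union.mp hi with hS | hT
        · exact h1 i hS
        · by_cases hS : i ∈ S
          · exact h1 i hS
          · simpa [mg, hS] using h i hT
      · intro h i hi
        by_cases hS : i ∈ S
        · simp [mg, hS]
        · simpa [mg, hS] using h i (Finset.mem_union_right _ hi)
    simp only [hiff]
  · rw [if_neg h1, zero_mul,
      if_neg (fun h => h1 fun i hi => h i (Finset.mem_union_left _ hi))]

lemma prodd_ne_zero (hd : ∀ i, 0 < d i) : (∏ i, (d i : ℂ)) ≠ 0 := by
  refine Finset.prod_ne_zero_iff.mpr fun i _ => ?_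
  exact_mod_cast (hd i).ne'

lemma prodc_ne_zero (hd : ∀ i, 0 < d i) (S : Finset (Fin 4)) : (∏ i ∈ Sᶜ, (d i : ℂ)) ≠ 0 := by
  refine Finset.prod_ne_zero_iff.mpr fun i _ => ?_
  exact_mod_cast (hd i).ne'

lemma Dset_comp (hd : ∀ i, 0 < d i) (S T : Finset (Fin 4)) (M : PMat d) :
    Dset S (Dset T M) = Dset (S ∪ T) M := by
  have hN := prodd_ne_zero hd
  funext p q
  rw [Dset_apply, Dset_apply]
  have hinner : ∀ r : PIdx d, Dset T M (mg S r p) (mg S r q)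
      = (if ∀ i ∈ T, mg S r p i = mg S r q i then (1:ℂ) else 0)
        * (∑ s : PIdx d, M (mg (S ∪ T) (mg T s r) p) (mg (S ∪ T) (mg T s r) q)) / ∏ i, (d i : ℂ) := by
    intro r
    rw [Dset_apply]
    congr 2
    refine Finset.sum_congr rfl fun s _ => ?_
    congr 1 <;>
    · funext i
      by_cases hT : i ∈ T <;> by_cases hS : i ∈ S <;>
        simp [mg, hT, hS, Finset.mem_union]
  simp only [hinner]
  congr 1
  rw [Finset.mul_sum]
  have h2 : ∀ r : PIdx d, (if ∀ i ∈ S, p i = q i then (1:ℂ) else 0) *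
      ((if ∀ i ∈ T, mg S r p i = mg S r q i then (1:ℂ) else 0)
        * (∑ s : PIdx d, M (mg (S ∪ T) (mg T s r) p) (mg (S ∪ T) (mg T s r) q)) / ∏ i, (d i : ℂ))
      = (if ∀ i ∈ S ∪ T, p i = q i then (1:ℂ) else 0)
        * (∑ s : PIdx d, M (mg (S ∪ T) (mg T s r) p) (mg (S ∪ T) (mg T s r) q)) / ∏ i, (d i : ℂ) := by
    intro r
    rw [mul_div_assoc, ← mul_assoc, chi_mul S T p q r, mul_div_assoc]
  simp only [h2]
  rw [← Finset.sum_div, ← Finset.mul_sum,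
    sum_mg T (fun u => M (mg (S ∪ T) u p) (mg (S ∪ T) u q)),
    mul_div_assoc, mul_div_cancel_left₀ _ hN]

lemma Dset_add (S : Finset (Fin 4)) (M M' : PMat d) :
    Dset S (M + M') = Dset S M + Dset S M' := by
  funext p q
  simp only [Matrix.add_apply, Dset_apply, Finset.sum_add_distrib, mul_add, add_div]

lemma Dset_sub (S : Finset (Fin 4)) (M M' : PMat d) :
    Dset S (M - M') = Dset S M - Dset S M' := by
  funext p q
  simp only [Matrix.sub_apply, Dset_apply, Finset.sum_sub_distrib, mul_sub, sub_div]

lemma Dset_trace (hd : ∀ i, 0 < d i) (S : Finset (Fin 4)) (M : PMat d) :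
    (Dset S M).trace = M.trace := by
  have hN := prodd_ne_zero hd
  have h1 : ∀ p : PIdx d, (Dset S M) p p = (∑ r : PIdx d, M (mg S r p) (mg S r p)) / ∏ i, (d i : ℂ) := by
    intro p
    rw [Dset_apply, if_pos (fun i _ => rfl), one_mul]
  simp only [Matrix.trace, Matrix.diag, h1]
  rw [← Finset.sum_div, sum_mg S (fun u => M u u), mul_div_cancel_left₀ _ hN]

lemma Dset_isHermitian (S : Finset (Fin 4)) {M : PMat d} (h : M.IsHermitian) :
    (Dset S M).IsHermitian := by
  rw [Matrix.IsHermitian]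
  ext p q
  rw [Matrix.conjTranspose_apply, Dset_apply, Dset_apply, star_div₀, star_mul']
  have h1 : star (∏ i, (d i : ℂ)) = ∏ i, (d i : ℂ) := by simp
  have h2 : star (if ∀ i ∈ S, q i = p i then (1:ℂ) else 0)
      = (if ∀ i ∈ S, p i = q i then (1:ℂ) else 0) := by
    by_cases hc : ∀ i ∈ S, q i = p i
    · rw [if_pos hc, if_pos (fun i hi => (hc i hi).symm), star_one]
    · rw [if_neg hc, if_neg (fun hb => hc fun i hi => (hb i hi).symm), star_zero]
  have h3 : star (∑ r : PIdx d, M (mg S r q) (mg S r p))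
      = ∑ r : PIdx d, M (mg S r p) (mg S r q) := by
    rw [star_sum]
    exact Finset.sum_congr rfl fun r _ => h.apply _ _
  rw [h1, h2, h3]
lemma chi_mg_left (S : Finset (Fin 4)) (r p q : PIdx d) :
    (∀ i ∈ S, mg S r p i = q i) ↔ (∀ i ∈ S, r i = q i) := by
  refine ⟨fun h i hi => ?_, fun h i hi => ?_⟩
  · simpa [mg, hi] using h i hi
  · simpa [mg, hi] using h i hi

lemma chi_mg_both (S : Finset (Fin 4)) (q r : PIdx d) :
    (∀ i ∈ S, mg S q r i = mg S r q i) ↔ (∀ i ∈ S, q i = r i) := by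
  refine ⟨fun h i hi => ?_, fun h i hi => ?_⟩
  · simpa [mg, hi] using h i hi
  · simpa [mg, hi] using h i hi

lemma chi_mg_right (S : Finset (Fin 4)) (p a q : PIdx d) :
    (∀ i ∈ S, p i = mg S a q i) ↔ (∀ i ∈ S, p i = a i) := by
  refine ⟨fun h i hi => ?_, fun h i hi => ?_⟩
  · simpa [mg, hi] using h i hi
  · simpa [mg, hi] using h i hi

lemma mg_congr (S : Finset (Fin 4)) {p a : PIdx d} (w : PIdx d)
    (hc : ∀ i ∈ S, p i = a i) : mg S a w = mg S p w := by
  funext i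
  by_cases hi : i ∈ S
  · simpa [mg, hi] using (hc i hi).symm
  · simp [mg, hi]

lemma Dset_posSemidef (hd : ∀ i, 0 < d i) (S : Finset (Fin 4)) {M : PMat d} (h : M.PosSemidef) :
    (Dset S M).PosSemidef := by
  have hN := prodd_ne_zero hd
  have hNc := prodc_ne_zero hd S
  refine Matrix.PosSemidef.of_dotProduct_mulVec_nonneg ?_ ?_
  · exact Dset_isHermitian S h.1
  intro x
  set v : PIdx d → PIdx d → PIdx d → ℂ :=
    fun a c p => (if ∀ i ∈ S, p i = c i then (1:ℂ) else 0) * x (mg S a p) with hv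
  set Core : ℂ := ∑ p : PIdx d, ∑ q : PIdx d,
    star (x (mg S q p)) * (x q * M p (mg S p q)) with hCore
  -- Step 1: the quadratic form of Dset S M
  have step1 : dotProduct (star x) ((Dset S M).mulVec x)
      = (∑ p : PIdx d, ∑ q : PIdx d, ∑ r : PIdx d,
          (if ∀ i ∈ S, p i = q i then (1:ℂ) else 0)
            * (star (x p) * (x q * M (mg S r p) (mg S r q)))) / ∏ i, (d i : ℂ) := by
    have hp : ∀ p : PIdx d, (star x) p * ((Dset S M).mulVec x p)
        = (∑ q : PIdx d, ∑ r : PIdx d, (if ∀ i ∈ S, p i = q i then (1:ℂ) else 0)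
            * (star (x p) * (x q * M (mg S r p) (mg S r q)))) / ∏ i, (d i : ℂ) := by
      intro p
      simp only [Matrix.mulVec, dotProduct, Pi.star_apply]
      rw [Finset.mul_sum, Finset.sum_div]
      refine Finset.sum_congr rfl fun q _ => ?_
      rw [Dset_apply, ← Finset.mul_sum, ← Finset.mul_sum, ← Finset.mul_sum]
      ring
    rw [dotProduct]
    simp only [hp]
    rw [← Finset.sum_div]
  -- Step 2: the triple sum evaluates to Nc * Core
  have step2 : (∑ p : PIdx d, ∑ q : PIdx d, ∑ r : PIdx d,
        (if ∀ i ∈ S, p i = q i then (1:ℂ) else 0)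
          * (star (x p) * (x q * M (mg S r p) (mg S r q))))
      = (∏ i ∈ Sᶜ, (d i : ℂ)) * Core := by
    have e1 : (∑ p : PIdx d, ∑ q : PIdx d, ∑ r : PIdx d,
          (if ∀ i ∈ S, p i = q i then (1:ℂ) else 0)
            * (star (x p) * (x q * M (mg S r p) (mg S r q))))
        = ∑ p : PIdx d, ∑ r : PIdx d, ∑ q : PIdx d,
          (if ∀ i ∈ S, p i = q i then (1:ℂ) else 0)
            * (star (x p) * (x q * M (mg S r p) (mg S r q))) :=
      Finset.sum_congr rfl fun p _ => Finset.sum_comm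
    rw [e1, sum_swap_pair S (fun p r => ∑ q : PIdx d,
      (if ∀ i ∈ S, p i = q i then (1:ℂ) else 0)
        * (star (x p) * (x q * M (mg S r p) (mg S r q))))]
    simp only [mg_mg_left, mg_mg_right, mg_self, chi_mg_left]
    have e2 : ∀ p : PIdx d, (∑ r : PIdx d, ∑ q : PIdx d,
          (if ∀ i ∈ S, r i = q i then (1:ℂ) else 0)
            * (star (x (mg S r p)) * (x q * M p (mg S p q))))
        = ∑ q : PIdx d, ∑ r : PIdx d,
          (if ∀ i ∈ S, q i = r i then (1:ℂ) else 0)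
            * (star (x (mg S q p)) * (x (mg S r q) * M p (mg S p q))) := by
      intro p
      rw [Finset.sum_comm]
      rw [sum_swap_pair S (fun q r =>
        (if ∀ i ∈ S, r i = q i then (1:ℂ) else 0)
          * (star (x (mg S r p)) * (x q * M p (mg S p q))))]
      simp only [mg_mg_left, mg_mg_right, mg_self, chi_mg_both]
    simp only [e2]
    have e3 : ∀ p q : PIdx d, (∑ r : PIdx d,
          (if ∀ i ∈ S, q i = r i then (1:ℂ) else 0)
            * (star (x (mg S q p)) * (x (mg S r q) * M p (mg S p q))))
        = (∏ i ∈ Sᶜ, (d i : ℂ)) * (star (x (mg S q p)) * (x q * M p (mg S p q))) := by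
      intro p q
      have e4 : ∀ r : PIdx d,
          (if ∀ i ∈ S, q i = r i then (1:ℂ) else 0)
            * (star (x (mg S q p)) * (x (mg S r q) * M p (mg S p q)))
          = (if ∀ i ∈ S, q i = r i then (1:ℂ) else 0)
            * (star (x (mg S q p)) * (x q * M p (mg S p q))) := by
        intro r
        by_cases hc : ∀ i ∈ S, q i = r i
        · rw [mg_congr S q hc, mg_self]
        · rw [if_neg hc, zero_mul, zero_mul]
      simp only [e4]
      rw [← Finset.sum_mul, sum_chi]
    simp only [e3, ← Finset.mul_sum]
    rw [hCore]
  -- Step 3: the sum of PSD quadratic forms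
  have hq1 : ∀ a c : PIdx d, dotProduct (star (v a c)) (M.mulVec (v a c))
      = ∑ p : PIdx d, ∑ q : PIdx d,
          ((if ∀ i ∈ S, p i = c i then (1:ℂ) else 0) * (if ∀ i ∈ S, q i = c i then (1:ℂ) else 0))
            * (star (x (mg S a p)) * (x (mg S a q) * M p q)) := by
    intro a c
    simp only [dotProduct, Matrix.mulVec, Pi.star_apply, hv, star_mul']
    refine Finset.sum_congr rfl fun p _ => ?_
    rw [Finset.mul_sum]
    refine Finset.sum_congr rfl fun q _ => ?_
    have : star (if ∀ i ∈ S, p i = c i then (1:ℂ) else 0)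
        = (if ∀ i ∈ S, p i = c i then (1:ℂ) else 0) := by
      by_cases hc : ∀ i ∈ S, p i = c i <;> simp [hc]
    rw [this]
    ring
  have hQ : (∑ a : PIdx d, ∑ c : PIdx d, dotProduct (star (v a c)) (M.mulVec (v a c)))
      = (∏ i ∈ Sᶜ, (d i : ℂ)) * ((∏ i ∈ Sᶜ, (d i : ℂ)) * Core) := by
    simp only [hq1]
    -- move the c-sum innermost
    have e5 : ∀ a : PIdx d, (∑ c : PIdx d, ∑ p : PIdx d, ∑ q : PIdx d,
          ((if ∀ i ∈ S, p i = c i then (1:ℂ) else 0) * (if ∀ i ∈ S, q i = c i then (1:ℂ) else 0))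
            * (star (x (mg S a p)) * (x (mg S a q) * M p q)))
        = ∑ p : PIdx d, ∑ q : PIdx d,
            ((if ∀ i ∈ S, p i = q i then (1:ℂ) else 0) * ∏ i ∈ Sᶜ, (d i : ℂ))
              * (star (x (mg S a p)) * (x (mg S a q) * M p q)) := by
      intro a
      rw [Finset.sum_comm]
      refine Finset.sum_congr rfl fun p _ => ?_
      rw [Finset.sum_comm]
      refine Finset.sum_congr rfl fun q _ => ?_
      rw [← Finset.sum_mul, sum_chi2]
    simp only [e5]
    -- now reorder a innermost
    rw [Finset.sum_comm]
    have e6 : ∀ p : PIdx d, (∑ a : PIdx d, ∑ q : PIdx d,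
          ((if ∀ i ∈ S, p i = q i then (1:ℂ) else 0) * ∏ i ∈ Sᶜ, (d i : ℂ))
            * (star (x (mg S a p)) * (x (mg S a q) * M p q)))
        = (∏ i ∈ Sᶜ, (d i : ℂ)) * ((∏ i ∈ Sᶜ, (d i : ℂ))
            * ∑ q : PIdx d, star (x (mg S q p)) * (x q * M p (mg S p q))) := by
      intro p
      rw [Finset.sum_comm]
      -- swap the (q, a) pair
      have e7 : (∑ q : PIdx d, ∑ a : PIdx d,
            ((if ∀ i ∈ S, p i = q i then (1:ℂ) else 0) * ∏ i ∈ Sᶜ, (d i : ℂ))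
              * (star (x (mg S a p)) * (x (mg S a q) * M p q)))
          = ∑ q : PIdx d, ∑ a : PIdx d,
            ((if ∀ i ∈ S, p i = a i then (1:ℂ) else 0) * ∏ i ∈ Sᶜ, (d i : ℂ))
              * (star (x (mg S q p)) * (x q * M p (mg S a q))) := by
        rw [sum_swap_pair S (fun q a =>
          ((if ∀ i ∈ S, p i = q i then (1:ℂ) else 0) * ∏ i ∈ Sᶜ, (d i : ℂ))
            * (star (x (mg S a p)) * (x (mg S a q) * M p q)))]
        simp only [mg_mg_left, mg_mg_right, mg_self, chi_mg_right]
      rw [e7]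
      have e8 : ∀ q : PIdx d, (∑ a : PIdx d,
            ((if ∀ i ∈ S, p i = a i then (1:ℂ) else 0) * ∏ i ∈ Sᶜ, (d i : ℂ))
              * (star (x (mg S q p)) * (x q * M p (mg S a q))))
          = (∏ i ∈ Sᶜ, (d i : ℂ)) * ((∏ i ∈ Sᶜ, (d i : ℂ))
              * (star (x (mg S q p)) * (x q * M p (mg S p q)))) := by
        intro q
        have e9 : ∀ a : PIdx d,
            ((if ∀ i ∈ S, p i = a i then (1:ℂ) else 0) * ∏ i ∈ Sᶜ, (d i : ℂ))
              * (star (x (mg S q p)) * (x q * M p (mg S a q)))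
            = (if ∀ i ∈ S, p i = a i then (1:ℂ) else 0)
              * ((∏ i ∈ Sᶜ, (d i : ℂ)) * (star (x (mg S q p)) * (x q * M p (mg S p q)))) := by
          intro a
          by_cases hc : ∀ i ∈ S, p i = a i
          · rw [mg_congr S q hc]; ring
          · rw [if_neg hc, zero_mul, zero_mul, zero_mul]
        simp only [e9]
        rw [← Finset.sum_mul, sum_chi]
      simp only [e8]
      rw [← Finset.mul_sum, ← Finset.mul_sum]
    simp only [e6]
    rw [← Finset.mul_sum, ← Finset.mul_sum, hCore]
  have hQpos : 0 ≤ ∑ a : PIdx d, ∑ c : PIdx d,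
      dotProduct (star (v a c)) (M.mulVec (v a c)) :=
    Finset.sum_nonneg fun a _ => Finset.sum_nonneg fun c _ => h.dotProduct_mulVec_nonneg (v a c)
  rw [hQ] at hQpos
  have hfinal : dotProduct (star x) ((Dset S M).mulVec x)
      = ((∏ i ∈ Sᶜ, (d i : ℂ)) * ((∏ i ∈ Sᶜ, (d i : ℂ)) * Core)) * ((∏ i, (d i : ℂ)) * ∏ i ∈ Sᶜ, (d i : ℂ))⁻¹ := by
    rw [step1, step2]
    field_simp
  rw [hfinal]
  refine mul_nonneg hQpos ?_
  have hcast : ((∏ i, (d i : ℂ)) * ∏ i ∈ Sᶜ, (d i : ℂ))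
      = ((((∏ i, d i) * ∏ i ∈ Sᶜ, d i : ℕ) : ℝ) : ℂ) := by
    push_cast
    ring
  rw [hcast, ← Complex.ofReal_inv]
  rw [Complex.zero_le_real]
  positivity
lemma Dset_LV (hd : ∀ i, 0 < d i) (S : Finset (Fin 4)) (W : PMat d) :
    Dset S (LV W) = Dset (S ∪ {1}) W + Dset (S ∪ {3}) W - Dset (S ∪ {1, 3}) W
      - Dset (S ∪ {2, 3}) W + Dset (S ∪ {1, 2, 3}) W - Dset (S ∪ {0, 1}) W
      + Dset (S ∪ {0, 1, 3}) W := by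
  rw [LV]
  simp only [Dset_add, Dset_sub, Dset_comp hd]

end Prop4Aux

open Prop4Aux

/-- Proposition 4: degradation to a one-way signalling ordered process.
(a) `D_{A_O}(W)` is a process causally ordered `B ≺ A`, `D_{B_O}(W)` is a process causally
ordered `A ≺ B`; (b) if `W` is not free then at least one of them is not free;
equivalently, if both are free then `W = D_{A_O B_O}(W)`. -/
theorem prop4 {d : Fin 4 → ℕ} (hd : ∀ i, 0 < d i)
    (W : PMat d) (hW : IsProc W) :
    (IsProc (Dset ({1} : Finset (Fin 4)) W) ∧ OrderedBA (Dset ({1} : Finset (Fin 4)) W)) ∧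
    (IsProc (Dset ({3} : Finset (Fin 4)) W) ∧ OrderedAB (Dset ({3} : Finset (Fin 4)) W)) ∧
    (Dset ({1, 3} : Finset (Fin 4)) W ≠ W →
      (¬ IsFree (Dset ({1} : Finset (Fin 4)) W) ∨ ¬ IsFree (Dset ({3} : Finset (Fin 4)) W))) ∧
    ((Dset ({1} : Finset (Fin 4)) W = Dset ({1, 3} : Finset (Fin 4)) W ∧
        Dset ({3} : Finset (Fin 4)) W = Dset ({1, 3} : Finset (Fin 4)) W) →
      W = Dset ({1, 3} : Finset (Fin 4)) W) := by
  obtain ⟨hPSD, hLV, htr⟩ := hW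
  have h01 : Dset ({0, 1} : Finset (Fin 4)) W = Dset ({0, 1, 3} : Finset (Fin 4)) W := by
    have h := congrArg (Dset ({0, 1} : Finset (Fin 4))) hLV
    rw [Dset_LV hd] at h
    rw [show ({0,1} : Finset (Fin 4)) ∪ {1} = {0,1} by decide,
        show ({0,1} : Finset (Fin 4)) ∪ {3} = {0,1,3} by decide,
        show ({0,1} : Finset (Fin 4)) ∪ {1,3} = {0,1,3} by decide,
        show ({0,1} : Finset (Fin 4)) ∪ {2,3} = {0,1,2,3} by decide,
        show ({0,1} : Finset (Fin 4)) ∪ {1,2,3} = {0,1,2,3} by decide,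
        show ({0,1} : Finset (Fin 4)) ∪ {0,1} = {0,1} by decide,
        show ({0,1} : Finset (Fin 4)) ∪ {0,1,3} = {0,1,3} by decide] at h
    have h2 : Dset ({0,1,3} : Finset (Fin 4)) W = Dset ({0,1} : Finset (Fin 4)) W := by
      rw [← h]; abel
    exact h2.symm
  have h23 : Dset ({2, 3} : Finset (Fin 4)) W = Dset ({1, 2, 3} : Finset (Fin 4)) W := by
    have h := congrArg (Dset ({2, 3} : Finset (Fin 4))) hLV
    rw [Dset_LV hd] at h
    rw [show ({2,3} : Finset (Fin 4)) ∪ {1} = {1,2,3} by decide,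
        show ({2,3} : Finset (Fin 4)) ∪ {3} = {2,3} by decide,
        show ({2,3} : Finset (Fin 4)) ∪ {1,3} = {1,2,3} by decide,
        show ({2,3} : Finset (Fin 4)) ∪ {2,3} = {2,3} by decide,
        show ({2,3} : Finset (Fin 4)) ∪ {1,2,3} = {1,2,3} by decide,
        show ({2,3} : Finset (Fin 4)) ∪ {0,1} = {0,1,2,3} by decide,
        show ({2,3} : Finset (Fin 4)) ∪ {0,1,3} = {0,1,2,3} by decide] at h
    have h2 : Dset ({1,2,3} : Finset (Fin 4)) W = Dset ({2,3} : Finset (Fin 4)) W := by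
      rw [← h]; abel
    exact h2.symm
  have procA : IsProc (Dset ({1} : Finset (Fin 4)) W) := by
    refine ⟨Dset_posSemidef hd _ hPSD, ?_, ?_⟩
    · rw [LV]
      simp only [Dset_comp hd]
      rw [show ({1} : Finset (Fin 4)) ∪ {1} = {1} by decide,
          show ({3} : Finset (Fin 4)) ∪ {1} = {1,3} by decide,
          show ({1,3} : Finset (Fin 4)) ∪ {1} = {1,3} by decide,
          show ({2,3} : Finset (Fin 4)) ∪ {1} = {1,2,3} by decide,
          show ({1,2,3} : Finset (Fin 4)) ∪ {1} = {1,2,3} by decide,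
          show ({0,1} : Finset (Fin 4)) ∪ {1} = {0,1} by decide,
          show ({0,1,3} : Finset (Fin 4)) ∪ {1} = {0,1,3} by decide, h01]
      abel
    · rw [Dset_trace hd, htr]
  have ordBA : OrderedBA (Dset ({1} : Finset (Fin 4)) W) := by
    constructor
    · rw [Dset_comp hd, show ({1} : Finset (Fin 4)) ∪ {1} = {1} by decide]
    · rw [Dset_comp hd, Dset_comp hd,
        show ({0,1} : Finset (Fin 4)) ∪ {1} = {0,1} by decide,
        show ({0,1,3} : Finset (Fin 4)) ∪ {1} = {0,1,3} by decide, h01]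
  have procB : IsProc (Dset ({3} : Finset (Fin 4)) W) := by
    refine ⟨Dset_posSemidef hd _ hPSD, ?_, ?_⟩
    · rw [LV]
      simp only [Dset_comp hd]
      rw [show ({1} : Finset (Fin 4)) ∪ {3} = {1,3} by decide,
          show ({3} : Finset (Fin 4)) ∪ {3} = {3} by decide,
          show ({1,3} : Finset (Fin 4)) ∪ {3} = {1,3} by decide,
          show ({2,3} : Finset (Fin 4)) ∪ {3} = {2,3} by decide,
          show ({1,2,3} : Finset (Fin 4)) ∪ {3} = {1,2,3} by decide,
          show ({0,1} : Finset (Fin 4)) ∪ {3} = {0,1,3} by decide,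
          show ({0,1,3} : Finset (Fin 4)) ∪ {3} = {0,1,3} by decide, h23]
      abel
    · rw [Dset_trace hd, htr]
  have ordAB : OrderedAB (Dset ({3} : Finset (Fin 4)) W) := by
    constructor
    · rw [Dset_comp hd, show ({3} : Finset (Fin 4)) ∪ {3} = {3} by decide]
    · rw [Dset_comp hd, Dset_comp hd,
        show ({2,3} : Finset (Fin 4)) ∪ {3} = {2,3} by decide,
        show ({1,2,3} : Finset (Fin 4)) ∪ {3} = {1,2,3} by decide, h23]
  have key : (Dset ({1} : Finset (Fin 4)) W = Dset ({1, 3} : Finset (Fin 4)) W ∧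
        Dset ({3} : Finset (Fin 4)) W = Dset ({1, 3} : Finset (Fin 4)) W) →
      W = Dset ({1, 3} : Finset (Fin 4)) W := by
    rintro ⟨ha, hb⟩
    conv_lhs => rw [← hLV]
    rw [LV, ha, hb, h23, h01]
    abel
  refine ⟨⟨procA, ordBA⟩, ⟨procB, ordAB⟩, ?_, key⟩
  intro hne
  by_contra hcon
  push_neg at hcon
  obtain ⟨hf1, hf2⟩ := hcon
  have ha : Dset ({1} : Finset (Fin 4)) W = Dset ({1, 3} : Finset (Fin 4)) W := by
    have h := hf1.2
    rw [Dset_comp hd, show ({1,3} : Finset (Fin 4)) ∪ {1} = {1,3} by decide] at h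
    exact h.symm
  have hb : Dset ({3} : Finset (Fin 4)) W = Dset ({1, 3} : Finset (Fin 4)) W := by
    have h := hf2.2
    rw [Dset_comp hd, show ({1,3} : Finset (Fin 4)) ∪ {3} = {1,3} by decide] at h
    exact h.symm
  exact hne (key ⟨ha, hb⟩).symm
end

section
/- Every causally non-separable bipartite process can be freely degraded to either definite causal order: Let W be a two-party process matrix on A_I ⊗ A_O ⊗ B_I ⊗ B_O that is causally non-separable. For a unit vector psi in A_O, let sigma_psi := (1_{A_I} ⊗ <psi|_{A_O} ⊗ 1_{B_I B_O}) W (1_{A_I} ⊗ |psi>_{A_O} ⊗ 1_{B_I B_O}) (a matrix on A_I ⊗ B_I ⊗ B_O) and let W_psi be the matrix on A_I ⊗ A_O ⊗ B_I ⊗ B_O obtained by tensoring sigma_psi with the identity 1_{A_O} in the A_O slot; define W_phi for unit vectors phi in B_O analogously with the roles of A and B exchanged. Then: (a) there exists a unit vector psi in A_O such that W_psi is a two-party process matrix that is causally ordered B≺A and is not free; and (b) there exists a unit vector phi in B_O such that W_phi is a two-party process matrix that is causally ordered A≺B and is not free. -/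
open scoped BigOperators ComplexOrder

/-- Causally separable two-party process: a convex mixture of an `A ≺ B` and a `B ≺ A`
ordered process matrix. -/
def CausallySep {d : Fin 4 → ℕ} (W : PMat d) : Prop :=
  ∃ p : ℝ, 0 ≤ p ∧ p ≤ 1 ∧ ∃ W1 W2 : PMat d,
    IsProc W1 ∧ OrderedAB W1 ∧ IsProc W2 ∧ OrderedBA W2 ∧
    W = (p : ℂ) • W1 + ((1 - p : ℝ) : ℂ) • W2

/-- `W_ψ = ((1 ⊗ ⟨ψ|_{A_O} ⊗ 1) W (1 ⊗ |ψ⟩_{A_O} ⊗ 1)) ⊗ 1_{A_O}`, written entrywise. -/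
noncomputable def Wpsi {d : Fin 4 → ℕ} (W : PMat d) (ψ : Fin (d 1) → ℂ) : PMat d :=
  fun p q =>
    (if p 1 = q 1 then (1 : ℂ) else 0) *
      ∑ x : Fin (d 1), ∑ y : Fin (d 1),
        (starRingEnd ℂ) (ψ x) * W (Function.update p 1 x) (Function.update q 1 y) * ψ y

/-- `W_φ = ((1 ⊗ ⟨φ|_{B_O}) W (1 ⊗ |φ⟩_{B_O})) ⊗ 1_{B_O}`, written entrywise. -/
noncomputable def Wphi {d : Fin 4 → ℕ} (W : PMat d) (φ : Fin (d 3) → ℂ) : PMat d :=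
  fun p q =>
    (if p 3 = q 3 then (1 : ℂ) else 0) *
      ∑ x : Fin (d 3), ∑ y : Fin (d 3),
        (starRingEnd ℂ) (φ x) * W (Function.update p 3 x) (Function.update q 3 y) * φ y

section AuxCNS

variable {d : Fin 4 → ℕ}

/-- mixing of two index tuples along a finset -/
def mixS (S : Finset (Fin 4)) (r p : PIdx d) : PIdx d := fun i => if i ∈ S then r i else p i

lemma Dset_apply (S : Finset (Fin 4)) (M : PMat d) (p q : PIdx d) :
    Dset S M p q = ((if ∀ i ∈ S, p i = q i then (1:ℂ) else 0) / ∏ i ∈ S, (d i : ℂ)) *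
      ((∑ r : PIdx d, M (mixS S r p) (mixS S r q)) / ∏ i ∈ Sᶜ, (d i : ℂ)) := by
  simp only [Dset, Fintype.card_fin]
  congr

lemma prodS_ne (hd : ∀ i, 0 < d i) (S : Finset (Fin 4)) : (∏ i ∈ S, (d i : ℂ)) ≠ 0 := by
  rw [Finset.prod_ne_zero_iff]
  intro i _
  exact_mod_cast (hd i).ne'

lemma prod_d_mul (S : Finset (Fin 4)) :
    (∏ i ∈ S, (d i : ℂ)) * (∏ i ∈ Sᶜ, (d i : ℂ)) = (Fintype.card (PIdx d) : ℂ) := by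
  rw [Finset.prod_mul_prod_compl, Fintype.card_pi]
  push_cast
  simp [Fintype.card_fin]

lemma cardPIdx_ne (hd : ∀ i, 0 < d i) : (Fintype.card (PIdx d) : ℂ) ≠ 0 := by
  rw [← prod_d_mul (d := d) (S := (∅ : Finset (Fin 4)))]
  simp only [Finset.prod_empty, one_mul]
  exact prodS_ne hd _

/-- normalized form of `Dset` : the overall scalar is always `1 / card`. -/
lemma Dset_apply' (S : Finset (Fin 4)) (M : PMat d) (p q : PIdx d) :
    Dset S M p q = (if ∀ i ∈ S, p i = q i then (1:ℂ) else 0) *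
      ((∑ r : PIdx d, M (mixS S r p) (mixS S r q)) / (Fintype.card (PIdx d) : ℂ)) := by
  rw [Dset_apply, div_mul_div_comm, prod_d_mul, mul_div_assoc]

/-- self-inverse block swap used to resum mixings -/
def mixEquiv (S : Finset (Fin 4)) : (PIdx d × PIdx d) ≃ (PIdx d × PIdx d) where
  toFun x := (mixS S x.1 x.2, mixS S x.2 x.1)
  invFun x := (mixS S x.1 x.2, mixS S x.2 x.1)
  left_inv := by
    rintro ⟨s, r⟩
    refine Prod.ext ?_ ?_ <;> · funext i; by_cases h : i ∈ S <;> simp [mixS, h]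
  right_inv := by
    rintro ⟨s, r⟩
    refine Prod.ext ?_ ?_ <;> · funext i; by_cases h : i ∈ S <;> simp [mixS, h]

lemma sum_mix (S : Finset (Fin 4)) (Φ : PIdx d → ℂ) :
    ∑ s : PIdx d, ∑ r : PIdx d, Φ (mixS S s r)
      = (Fintype.card (PIdx d) : ℂ) * ∑ t : PIdx d, Φ t := by
  have h1 : ∑ s : PIdx d, ∑ r : PIdx d, Φ (mixS S s r)
      = ∑ x : PIdx d × PIdx d, Φ ((mixEquiv S x).1) := by
    rw [Fintype.sum_prod_type]; rfl
  rw [h1, Equiv.sum_comp (mixEquiv S) (fun x => Φ x.1), Fintype.sum_prod_type]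
  simp [Finset.sum_const, Finset.mul_sum, mul_comm]

lemma mix_mix (S T : Finset (Fin 4)) (s r p : PIdx d) :
    mixS T s (mixS S r p) = mixS (S ∪ T) (mixS T s r) p := by
  funext i
  by_cases hT : i ∈ T <;> by_cases hS : i ∈ S <;> simp [mixS, hT, hS]

lemma Dset_comp (hd : ∀ i, 0 < d i) {S T U : Finset (Fin 4)} (hU : S ∪ T = U) (M : PMat d) :
    Dset S (Dset T M) = Dset U M := by
  subst hU
  ext p q
  rw [Dset_apply', Dset_apply']
  by_cases hS : ∀ i ∈ S, p i = q i
  · have hmixδ : ∀ r : PIdx d,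
        (∀ i ∈ T, mixS S r p i = mixS S r q i) ↔ (∀ i ∈ T, p i = q i) := by
      intro r
      constructor
      · intro h i hiT
        by_cases hiS : i ∈ S
        · exact hS i hiS
        · have := h i hiT; simpa [mixS, hiS] using this
      · intro h i hiT
        by_cases hiS : i ∈ S <;> simp [mixS, hiS, h i hiT]
    by_cases hT : ∀ i ∈ T, p i = q i
    · have hUc : ∀ i ∈ S ∪ T, p i = q i := by
        intro i hi
        rcases Finset.mem_union.mp hi with h | h
        · exact hS i h
        · exact hT i h
      rw [if_pos hS, if_pos hUc, one_mul, one_mul]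
      have hinner : ∀ r : PIdx d, Dset T M (mixS S r p) (mixS S r q)
          = (∑ s : PIdx d, M (mixS (S ∪ T) (mixS T s r) p) (mixS (S ∪ T) (mixS T s r) q)) /
              (Fintype.card (PIdx d) : ℂ) := by
        intro r
        rw [Dset_apply', if_pos ((hmixδ r).mpr hT), one_mul]
        simp only [mix_mix]
      rw [Finset.sum_congr rfl (fun r _ => hinner r), ← Finset.sum_div, Finset.sum_comm,
        sum_mix T (fun u => M (mixS (S ∪ T) u p) (mixS (S ∪ T) u q)),
        div_div, mul_div_mul_left _ _ (cardPIdx_ne hd)]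
    · have hUneg : ¬ ∀ i ∈ S ∪ T, p i = q i := by
        intro h; exact hT fun i hi => h i (Finset.mem_union_right _ hi)
      rw [if_neg hUneg]
      have hinner : ∀ r : PIdx d, Dset T M (mixS S r p) (mixS S r q) = 0 := by
        intro r
        rw [Dset_apply', if_neg (fun h => hT ((hmixδ r).mp h))]
        simp
      rw [Finset.sum_congr rfl (fun r _ => hinner r)]
      simp
  · have hUneg : ¬ ∀ i ∈ S ∪ T, p i = q i := by
      intro h; exact hS fun i hi => h i (Finset.mem_union_left _ hi)
    rw [if_neg hS, if_neg hUneg]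
    simp

lemma Dset_add (S : Finset (Fin 4)) (M N : PMat d) :
    Dset S (M + N) = Dset S M + Dset S N := by
  ext p q
  simp only [Matrix.add_apply, Dset_apply', Finset.sum_add_distrib, add_div, mul_add]

lemma Dset_sub (S : Finset (Fin 4)) (M N : PMat d) :
    Dset S (M - N) = Dset S M - Dset S N := by
  ext p q
  simp only [Matrix.sub_apply, Dset_apply', Finset.sum_sub_distrib, sub_div, mul_sub]

lemma Dset_smul (S : Finset (Fin 4)) (c : ℂ) (M : PMat d) :
    Dset S (c • M) = c • Dset S M := by
  ext p q
  simp only [Matrix.smul_apply, Dset_apply', smul_eq_mul, ← Finset.mul_sum]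
  ring

lemma trace_Dset (hd : ∀ i, 0 < d i) (S : Finset (Fin 4)) (M : PMat d) :
    (Dset S M).trace = M.trace := by
  unfold Matrix.trace
  have h1 : ∀ p : PIdx d, (Dset S M).diag p
      = (∑ r : PIdx d, M (mixS S r p) (mixS S r p)) / (Fintype.card (PIdx d) : ℂ) := by
    intro p
    rw [Matrix.diag_apply, Dset_apply', if_pos (fun i _ => rfl), one_mul]
  rw [Finset.sum_congr rfl (fun p _ => h1 p), ← Finset.sum_div, Finset.sum_comm,
    sum_mix S (fun t => M t t), mul_div_cancel_left₀ _ (cardPIdx_ne hd)]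
  simp [Matrix.diag_apply]

lemma Dset_one (hd : ∀ i, 0 < d i) (S : Finset (Fin 4)) : Dset S (1 : PMat d) = 1 := by
  ext p q
  rw [Dset_apply']
  have hval : ∀ r : PIdx d, (1 : PMat d) (mixS S r p) (mixS S r q)
      = if ∀ i ∈ Sᶜ, p i = q i then (1:ℂ) else 0 := by
    intro r
    rw [Matrix.one_apply]
    congr 1
    apply propext
    constructor
    · intro h i hi
      have := congrFun h i
      have hiS : i ∉ S := Finset.mem_compl.mp hi
      simpa [mixS, hiS] using this
    · intro h
      funext i
      by_cases hiS : i ∈ S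
      · simp [mixS, hiS]
      · simpa [mixS, hiS] using h i (Finset.mem_compl.mpr hiS)
  rw [Finset.sum_congr rfl (fun r _ => hval r), Finset.sum_const, Finset.card_univ,
    nsmul_eq_mul, mul_div_cancel_left₀ _ (cardPIdx_ne hd)]
  by_cases h2 : ∀ i ∈ Sᶜ, p i = q i
  · rw [if_pos h2]
    by_cases h1 : ∀ i ∈ S, p i = q i
    · have hpq : p = q := by
        funext i
        by_cases hiS : i ∈ S
        · exact h1 i hiS
        · exact h2 i (Finset.mem_compl.mpr hiS)
      rw [if_pos h1, hpq, Matrix.one_apply_eq, mul_one]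
    · have hpq : p ≠ q := fun h => h1 (fun i _ => by rw [h])
      rw [if_neg h1, Matrix.one_apply_ne hpq, zero_mul]
  · rw [if_neg h2]
    have hpq : p ≠ q := fun h => h2 (fun i _ => by rw [h])
    rw [Matrix.one_apply_ne hpq]
    simp

end AuxCNS
section WkCNS

open Complex

variable {d : Fin 4 → ℕ}

/-- common generalization of `Wpsi` (k = 1) and `Wphi` (k = 3) -/
noncomputable def Wk (k : Fin 4) (W : PMat d) (ψ : Fin (d k) → ℂ) : PMat d :=
  fun p q =>
    (if p k = q k then (1 : ℂ) else 0) *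
      ∑ x : Fin (d k), ∑ y : Fin (d k),
        (starRingEnd ℂ) (ψ x) * W (Function.update p k x) (Function.update q k y) * ψ y

lemma Wpsi_eq (W : PMat d) (ψ : Fin (d 1) → ℂ) : Wpsi W ψ = Wk 1 W ψ := rfl

lemma Wphi_eq (W : PMat d) (φ : Fin (d 3) → ℂ) : Wphi W φ = Wk 3 W φ := rfl

lemma Wk_apply (k : Fin 4) (W : PMat d) (ψ : Fin (d k) → ℂ) (p q : PIdx d) :
    Wk k W ψ p q = (if p k = q k then (1 : ℂ) else 0) *
      ∑ x : Fin (d k), ∑ y : Fin (d k),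
        (starRingEnd ℂ) (ψ x) * W (Function.update p k x) (Function.update q k y) * ψ y := rfl

lemma Wk_add (k : Fin 4) (W₁ W₂ : PMat d) (ψ : Fin (d k) → ℂ) :
    Wk k (W₁ + W₂) ψ = Wk k W₁ ψ + Wk k W₂ ψ := by
  ext p q
  simp only [Matrix.add_apply, Wk_apply, mul_add, add_mul, Finset.sum_add_distrib]

lemma Wk_sub (k : Fin 4) (W₁ W₂ : PMat d) (ψ : Fin (d k) → ℂ) :
    Wk k (W₁ - W₂) ψ = Wk k W₁ ψ - Wk k W₂ ψ := by
  ext p q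
  simp only [Matrix.sub_apply, Wk_apply, mul_sub, sub_mul, Finset.sum_sub_distrib]

lemma mixS_apply_not_mem {S : Finset (Fin 4)} {k : Fin 4} (hk : k ∉ S) (r p : PIdx d) :
    mixS S r p k = p k := by simp [mixS, hk]

lemma update_mixS {S : Finset (Fin 4)} {k : Fin 4} (hk : k ∉ S) (r p : PIdx d) (x : Fin (d k)) :
    Function.update (mixS S r p) k x = mixS S r (Function.update p k x) := by
  funext i
  rcases eq_or_ne i k with rfl | hik
  · simp [Function.update_self, mixS, hk]
  · simp [Function.update_of_ne hik, mixS]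

lemma mixS_update_mem {k : Fin 4} (r p : PIdx d) (x : Fin (d k)) :
    mixS {k} r (Function.update p k x) = mixS {k} r p := by
  funext i
  rcases eq_or_ne i k with rfl | hik
  · simp [mixS]
  · simp [mixS, Finset.mem_singleton, hik, Function.update_of_ne hik]

lemma update_mixS_singleton {k : Fin 4} (r p : PIdx d) (x : Fin (d k)) :
    Function.update (mixS {k} r p) k x = Function.update p k x := by
  funext i
  rcases eq_or_ne i k with rfl | hik
  · simp [Function.update_self]
  · simp [Function.update_of_ne hik, mixS, Finset.mem_singleton, hik]

lemma Dset_Wk {S : Finset (Fin 4)} {k : Fin 4} (hk : k ∉ S) (W : PMat d) (ψ : Fin (d k) → ℂ) :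
    Dset S (Wk k W ψ) = Wk k (Dset S W) ψ := by
  ext p q
  rw [Dset_apply', Wk_apply]
  have hδ : ∀ r : PIdx d, Wk k W ψ (mixS S r p) (mixS S r q)
      = (if p k = q k then (1:ℂ) else 0) *
        ∑ x : Fin (d k), ∑ y : Fin (d k), (starRingEnd ℂ) (ψ x) *
          W (mixS S r (Function.update p k x)) (mixS S r (Function.update q k y)) * ψ y := by
    intro r
    rw [Wk_apply, mixS_apply_not_mem hk, mixS_apply_not_mem hk]
    congr 1
    refine Finset.sum_congr rfl fun x _ => Finset.sum_congr rfl fun y _ => ?_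
    rw [← update_mixS hk, ← update_mixS hk]
  rw [Finset.sum_congr rfl fun r _ => hδ r]
  have hδS : ∀ (x y : Fin (d k)), Dset S W (Function.update p k x) (Function.update q k y)
      = (if ∀ i ∈ S, p i = q i then (1:ℂ) else 0) *
        ((∑ r : PIdx d, W (mixS S r (Function.update p k x)) (mixS S r (Function.update q k y))) /
          (Fintype.card (PIdx d) : ℂ)) := by
    intro x y
    rw [Dset_apply']
    congr 2
    apply propext
    constructor
    · intro h i hi
      have hik : i ≠ k := fun e => hk (e ▸ hi)
      have := h i hi
      rwa [Function.update_of_ne hik, Function.update_of_ne hik] at this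
    · intro h i hi
      have hik : i ≠ k := fun e => hk (e ▸ hi)
      rw [Function.update_of_ne hik, Function.update_of_ne hik]
      exact h i hi
  rw [Finset.sum_congr rfl fun x _ => Finset.sum_congr rfl fun y (_ : y ∈ Finset.univ) => by
    rw [hδS x y]]
  by_cases h1 : p k = q k
  · by_cases h2 : ∀ i ∈ S, p i = q i
    · rw [if_pos h1, if_pos h2]
      simp only [one_mul]
      have hterm : ∀ x y : Fin (d k), (starRingEnd ℂ) (ψ x) *
          ((∑ r : PIdx d, W (mixS S r (Function.update p k x)) (mixS S r (Function.update q k y))) /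
            (Fintype.card (PIdx d) : ℂ)) * ψ y
          = (∑ r : PIdx d, (starRingEnd ℂ) (ψ x) *
              W (mixS S r (Function.update p k x)) (mixS S r (Function.update q k y)) * ψ y) /
            (Fintype.card (PIdx d) : ℂ) := by
        intro x y
        rw [show ∀ a b c e : ℂ, a * (b / c) * e = a * b * e / c from fun a b c e => by ring]
        rw [Finset.mul_sum, Finset.sum_mul]
      rw [Finset.sum_congr rfl fun x _ => Finset.sum_congr rfl
        fun y (_ : y ∈ Finset.univ) => hterm x y]
      rw [Finset.sum_congr rfl fun x (_ : x ∈ (Finset.univ : Finset (Fin (d k)))) =>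
        (Finset.sum_div _ _ _).symm]
      rw [← Finset.sum_div]
      congr 1
      rw [Finset.sum_comm]
      exact Finset.sum_congr rfl fun x _ => Finset.sum_comm
    · rw [if_neg h2]
      simp
  · rw [if_neg h1]
    simp

lemma Dset_singleton_Wk (hd : ∀ i, 0 < d i) (k : Fin 4) (W : PMat d) (ψ : Fin (d k) → ℂ) :
    Dset {k} (Wk k W ψ) = Wk k W ψ := by
  ext p q
  rw [Dset_apply', Wk_apply]
  have hval : ∀ r : PIdx d, Wk k W ψ (mixS {k} r p) (mixS {k} r q)
      = ∑ x : Fin (d k), ∑ y : Fin (d k),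
          (starRingEnd ℂ) (ψ x) * W (Function.update p k x) (Function.update q k y) * ψ y := by
    intro r
    rw [Wk_apply]
    have h1 : mixS ({k} : Finset (Fin 4)) r p k = mixS {k} r q k := by simp [mixS]
    rw [if_pos h1, one_mul]
    refine Finset.sum_congr rfl fun x _ => Finset.sum_congr rfl fun y _ => ?_
    rw [update_mixS_singleton, update_mixS_singleton]
  rw [Finset.sum_congr rfl fun r _ => hval r, Finset.sum_const, Finset.card_univ, nsmul_eq_mul,
    mul_div_cancel_left₀ _ (cardPIdx_ne hd)]
  congr 1
  by_cases h : p k = q k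
  · rw [if_pos h, if_pos (fun i hi => by rwa [Finset.mem_singleton.mp hi])]
  · rw [if_neg h, if_neg (fun hall => h (hall k (Finset.mem_singleton_self k)))]

lemma Wk_Dset_singleton (hd : ∀ i, 0 < d i) (k : Fin 4) (U : PMat d) (ψ : Fin (d k) → ℂ)
    (hψ : (∑ x, Complex.normSq (ψ x)) = 1) :
    Wk k (Dset {k} U) ψ = Dset {k} U := by
  ext p q
  rw [Wk_apply, Dset_apply']
  have hterm : ∀ (x y : Fin (d k)), Dset {k} U (Function.update p k x) (Function.update q k y)
      = (if x = y then (1:ℂ) else 0) *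
        ((∑ r : PIdx d, U (mixS {k} r p) (mixS {k} r q)) / (Fintype.card (PIdx d) : ℂ)) := by
    intro x y
    rw [Dset_apply']
    congr 2
    · apply propext
      constructor
      · intro h
        have := h k (Finset.mem_singleton_self k)
        rwa [Function.update_self, Function.update_self] at this
      · intro h i hi
        rw [Finset.mem_singleton.mp hi, Function.update_self, Function.update_self]
        exact h
    · refine Finset.sum_congr rfl fun r _ => ?_
      rw [mixS_update_mem, mixS_update_mem]
  rw [Finset.sum_congr rfl fun x _ => Finset.sum_congr rfl fun y (_ : y ∈ Finset.univ) => by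
    rw [hterm x y]]
  have hcollapse : ∑ x : Fin (d k), ∑ y : Fin (d k), (starRingEnd ℂ) (ψ x) *
      ((if x = y then (1:ℂ) else 0) *
        ((∑ r : PIdx d, U (mixS {k} r p) (mixS {k} r q)) / (Fintype.card (PIdx d) : ℂ))) * ψ y
      = (∑ x : Fin (d k), (starRingEnd ℂ) (ψ x) * ψ x) *
        ((∑ r : PIdx d, U (mixS {k} r p) (mixS {k} r q)) / (Fintype.card (PIdx d) : ℂ)) := by
    rw [Finset.sum_mul]
    refine Finset.sum_congr rfl fun x _ => ?_
    rw [Finset.sum_eq_single x]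
    · rw [if_pos rfl]; ring
    · intro y _ hyx
      rw [if_neg (fun e => hyx e.symm)]
      ring
    · intro hx
      exact absurd (Finset.mem_univ x) hx
  rw [hcollapse]
  have hnorm : (∑ x : Fin (d k), (starRingEnd ℂ) (ψ x) * ψ x) = 1 := by
    have : ∀ x : Fin (d k), (starRingEnd ℂ) (ψ x) * ψ x = ((Complex.normSq (ψ x) : ℝ) : ℂ) :=
      fun x => (Complex.normSq_eq_conj_mul_self).symm
    rw [Finset.sum_congr rfl fun x _ => this x, ← Complex.ofReal_sum, hψ, Complex.ofReal_one]
  rw [hnorm, one_mul]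
  congr 1
  by_cases h : p k = q k
  · rw [if_pos h, if_pos (fun i hi => by rwa [Finset.mem_singleton.mp hi])]
  · rw [if_neg h, if_neg (fun hall => h (hall k (Finset.mem_singleton_self k)))]

lemma Wk_isHermitian {k : Fin 4} {W : PMat d} (hW : W.IsHermitian) (ψ : Fin (d k) → ℂ) :
    (Wk k W ψ).IsHermitian := by
  have hWe : ∀ a b : PIdx d, (starRingEnd ℂ) (W a b) = W b a := by
    intro a b
    conv_rhs => rw [← hW]
    rfl
  show Matrix.conjTranspose (Wk k W ψ) = Wk k W ψ
  ext p q
  rw [Matrix.conjTranspose_apply, Wk_apply, Wk_apply]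
  rw [star_mul']
  have h1 : star (if q k = p k then (1:ℂ) else 0) = (if p k = q k then (1:ℂ) else 0) := by
    by_cases h : p k = q k
    · rw [if_pos h, if_pos h.symm, star_one]
    · rw [if_neg h, if_neg (fun e => h e.symm), star_zero]
  rw [h1]
  congr 1
  rw [star_sum, Finset.sum_comm]
  refine Finset.sum_congr rfl fun y _ => ?_
  rw [star_sum]
  refine Finset.sum_congr rfl fun x _ => ?_
  rw [star_mul', star_mul']
  have e1 : star ((starRingEnd ℂ) (ψ y)) = ψ y := by
    rw [Complex.star_def, Complex.conj_conj]
  have e2 : star (W (Function.update q k y) (Function.update p k x))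
      = W (Function.update p k x) (Function.update q k y) := by
    rw [Complex.star_def, hWe]
  have e3 : star (ψ x) = (starRingEnd ℂ) (ψ x) := rfl
  rw [e1, e2, e3]
  ring

end WkCNS
section PSDCNS

open Matrix

variable {d : Fin 4 → ℕ}

/-- exchanging the `k`-slot value with an external index -/
def slotEquiv (k : Fin 4) : (Fin (d k) × PIdx d) ≃ (PIdx d × Fin (d k)) where
  toFun x := (Function.update x.2 k x.1, x.2 k)
  invFun y := (y.1 k, Function.update y.1 k y.2)
  left_inv := by
    rintro ⟨z, p⟩
    simp [Function.update_self, Function.update_idem, Function.update_eq_self]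
  right_inv := by
    rintro ⟨p, x⟩
    simp [Function.update_self, Function.update_idem, Function.update_eq_self]

lemma sum_slot (k : Fin 4) (F : Fin (d k) → PIdx d → ℂ) :
    ∑ z : Fin (d k), ∑ p : PIdx d, F z p
      = ∑ p : PIdx d, ∑ x : Fin (d k), F (p k) (Function.update p k x) := by
  have e1 : ∑ x : Fin (d k) × PIdx d, F x.1 x.2 = ∑ z : Fin (d k), ∑ p : PIdx d, F z p :=
    Fintype.sum_prod_type (f := fun x : Fin (d k) × PIdx d => F x.1 x.2)
  have e2 : ∑ y : PIdx d × Fin (d k), F (y.1 k) (Function.update y.1 k y.2)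
      = ∑ p : PIdx d, ∑ x : Fin (d k), F (p k) (Function.update p k x) :=
    Fintype.sum_prod_type (f := fun y : PIdx d × Fin (d k) => F (y.1 k) (Function.update y.1 k y.2))
  rw [← e1, ← e2]
  exact Fintype.sum_equiv (slotEquiv k) _ _ (by
    rintro ⟨z, p⟩
    simp [slotEquiv, Function.update_self, Function.update_idem, Function.update_eq_self])

lemma sum_slot_fixed (k : Fin 4) (z : Fin (d k)) (f : PIdx d → ℂ) :
    ∑ p : PIdx d, f p
      = ∑ p : PIdx d, ∑ x : Fin (d k),
          (if p k = z then (1:ℂ) else 0) * f (Function.update p k x) := by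
  have h := sum_slot k (fun z' p => (if z' = z then (1:ℂ) else 0) * f p)
  have h1 : ∑ z' : Fin (d k), ∑ p : PIdx d, (if z' = z then (1:ℂ) else 0) * f p
      = ∑ p : PIdx d, f p := by
    rw [Finset.sum_congr rfl fun z' (_ : z' ∈ Finset.univ) => (Finset.mul_sum _ _ _).symm]
    simp only [ite_mul, one_mul, zero_mul]
    rw [Finset.sum_ite_eq' Finset.univ z (fun _ => ∑ p : PIdx d, f p)]
    simp
  rw [← h1, h]

lemma Wk_posSemidef {k : Fin 4} {W : PMat d} (hW : W.PosSemidef) (ψ : Fin (d k) → ℂ) :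
    (Wk k W ψ).PosSemidef := by
  refine Matrix.PosSemidef.of_dotProduct_mulVec_nonneg (Wk_isHermitian hW.1 ψ) fun v => ?_
  have key : dotProduct (star v) ((Wk k W ψ) *ᵥ v)
      = ∑ z : Fin (d k),
          dotProduct (star (fun p => ψ (p k) * v (Function.update p k z)))
            (W *ᵥ (fun p => ψ (p k) * v (Function.update p k z))) := by
    have lhs_eq : dotProduct (star v) ((Wk k W ψ) *ᵥ v)
        = ∑ p : PIdx d, ∑ q : PIdx d, ∑ x : Fin (d k), ∑ y : Fin (d k),
            (if p k = q k then (1:ℂ) else 0) *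
              ((starRingEnd ℂ) (v p) * ((starRingEnd ℂ) (ψ x) *
                (W (Function.update p k x) (Function.update q k y) * (ψ y * v q)))) := by
      simp only [dotProduct, Matrix.mulVec, Pi.star_apply, Wk_apply, Complex.star_def]
      refine Finset.sum_congr rfl fun p _ => ?_
      rw [Finset.mul_sum]
      refine Finset.sum_congr rfl fun q _ => ?_
      by_cases h : p k = q k
      · rw [if_pos h]
        simp only [one_mul]
        rw [Finset.sum_mul, Finset.mul_sum]
        refine Finset.sum_congr rfl fun x _ => ?_
        rw [Finset.sum_mul, Finset.mul_sum]
        refine Finset.sum_congr rfl fun y _ => ?_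
        ring
      · rw [if_neg h]
        simp
    have rhs_eq : (∑ z : Fin (d k),
          dotProduct (star (fun p => ψ (p k) * v (Function.update p k z)))
            (W *ᵥ (fun p => ψ (p k) * v (Function.update p k z))))
        = ∑ p : PIdx d, ∑ q : PIdx d, ∑ x : Fin (d k), ∑ y : Fin (d k),
            (if p k = q k then (1:ℂ) else 0) *
              ((starRingEnd ℂ) (v p) * ((starRingEnd ℂ) (ψ x) *
                (W (Function.update p k x) (Function.update q k y) * (ψ y * v q)))) := by
      simp only [dotProduct, Matrix.mulVec, Pi.star_apply, Complex.star_def, _root_.map_mul]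
      rw [sum_slot k (fun z p => (starRingEnd ℂ) (ψ (p k)) *
        (starRingEnd ℂ) (v (Function.update p k z)) *
        ∑ q : PIdx d, W p q * (ψ (q k) * v (Function.update q k z)))]
      refine Finset.sum_congr rfl fun p _ => ?_
      have hstep : ∀ x : Fin (d k),
          (starRingEnd ℂ) (ψ (Function.update p k x k)) *
            (starRingEnd ℂ) (v (Function.update (Function.update p k x) k (p k))) *
            ∑ q : PIdx d, W (Function.update p k x) q *
              (ψ (q k) * v (Function.update q k (p k)))
          = ∑ q : PIdx d, ∑ y : Fin (d k),
              (if q k = p k then (1:ℂ) else 0) *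
                ((starRingEnd ℂ) (ψ x) * (starRingEnd ℂ) (v p) *
                  (W (Function.update p k x) (Function.update q k y) * (ψ y * v q))) := by
        intro x
        rw [Function.update_self, Function.update_idem, Function.update_eq_self]
        rw [sum_slot_fixed k (p k) (fun q => W (Function.update p k x) q *
          (ψ (q k) * v (Function.update q k (p k))))]
        rw [Finset.mul_sum]
        refine Finset.sum_congr rfl fun q _ => ?_
        rw [Finset.mul_sum]
        refine Finset.sum_congr rfl fun y _ => ?_
        by_cases h : q k = p k
        · rw [if_pos h, Function.update_self, Function.update_idem]
          have hq : Function.update q k (p k) = q := by rw [← h, Function.update_eq_self]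
          rw [hq]
          ring
        · rw [if_neg h]
          ring
      rw [Finset.sum_congr rfl fun x (_ : x ∈ Finset.univ) => hstep x]
      rw [Finset.sum_comm]
      refine Finset.sum_congr rfl fun q _ => ?_
      refine Finset.sum_congr rfl fun x _ => ?_
      refine Finset.sum_congr rfl fun y _ => ?_
      by_cases h : p k = q k
      · rw [if_pos h, if_pos h.symm]
        ring
      · rw [if_neg h, if_neg (fun e => h e.symm)]
        ring
    rw [lhs_eq, rhs_eq]
  rw [key]
  exact Finset.sum_nonneg fun z _ => hW.dotProduct_mulVec_nonneg _

lemma polar_form {n : ℕ} (B : Fin n → Fin n → ℂ)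
    (h : ∀ ψ : Fin n → ℂ, (∑ x, Complex.normSq (ψ x)) = 1 →
      ∑ x : Fin n, ∑ y : Fin n, (starRingEnd ℂ) (ψ x) * B x y * ψ y = 0) :
    ∀ a b, B a b = 0 := by
  have hgen : ∀ (a b : Fin n), a ≠ b → ∀ u w : ℂ, Complex.normSq u + Complex.normSq w = 1 →
      (starRingEnd ℂ) u * B a a * u + (starRingEnd ℂ) u * B a b * w
        + ((starRingEnd ℂ) w * B b a * u + (starRingEnd ℂ) w * B b b * w) = 0 := by
    intro a b hab u w huw
    have hψ : (∑ x, Complex.normSq ((fun x => if x = a then u else if x = b then w else 0) x)) = 1 := by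
      rw [Fintype.sum_eq_add a b hab]
      · simp [hab, Ne.symm hab, huw]
      · intro c hc
        simp [hc.1, hc.2]
    have hform := h _ hψ
    rw [Fintype.sum_eq_add a b hab ?side1] at hform
    case side1 =>
      intro c hc
      simp [hc.1, hc.2]
    rw [Fintype.sum_eq_add a b hab ?side2] at hform
    case side2 =>
      intro c hc
      simp [hc.1, hc.2]
    rw [Fintype.sum_eq_add a b hab ?side3] at hform
    case side3 =>
      intro c hc
      simp [hc.1, hc.2]
    simpa [hab, Ne.symm hab] using hform
  have hdiag : ∀ a, B a a = 0 := by
    intro a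
    have hψ : (∑ x, Complex.normSq ((fun x => if x = a then (1:ℂ) else 0) x)) = 1 := by
      simp [apply_ite Complex.normSq, Finset.sum_ite_eq']
    have hform := h _ hψ
    simpa [apply_ite (starRingEnd ℂ), ite_mul, mul_ite, Finset.sum_ite_eq', Finset.sum_ite_eq] using hform
  intro a b
  rcases eq_or_ne a b with rfl | hab
  · exact hdiag a
  · set c : ℝ := Real.sqrt (1/2) with hc
    have hcc : c * c = 1/2 := Real.mul_self_sqrt (by norm_num)
    have hk : (c:ℂ) * (c:ℂ) = 1/2 := by
      rw [← Complex.ofReal_mul, hcc]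
      norm_num
    have hns1 : Complex.normSq (c:ℂ) + Complex.normSq (c:ℂ) = 1 := by
      rw [Complex.normSq_ofReal, hcc]; norm_num
    have hns2 : Complex.normSq (c:ℂ) + Complex.normSq ((c:ℂ) * Complex.I) = 1 := by
      rw [Complex.normSq_mul, Complex.normSq_I, Complex.normSq_ofReal, hcc]; norm_num
    have h1 := hgen a b hab (c:ℂ) (c:ℂ) hns1
    have h2 := hgen a b hab (c:ℂ) ((c:ℂ) * Complex.I) hns2
    rw [hdiag a, hdiag b] at h1 h2
    simp only [Complex.conj_ofReal, _root_.map_mul, Complex.conj_I, mul_zero, zero_mul, add_zero,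
      zero_add, mul_neg, neg_mul] at h1 h2
    have e1 : B a b + B b a = 0 := by
      have h12 : (1/2 : ℂ) * (B a b + B b a) = 0 := by
        linear_combination h1 - (B a b + B b a) * hk
      linear_combination 2 * h12
    have e2 : B a b - B b a = 0 := by
      have h22 : (1/2 : ℂ) * Complex.I * (B a b - B b a) = 0 := by
        linear_combination h2 - (Complex.I * (B a b - B b a)) * hk
      linear_combination (-2 * Complex.I) * h22 + (B a b - B b a) * Complex.I_mul_I
    linear_combination (1/2 : ℂ) * e1 + (1/2 : ℂ) * e2

lemma Wk_eq_zero {k : Fin 4} {N : PMat d}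
    (h : ∀ ψ : Fin (d k) → ℂ, (∑ x, Complex.normSq (ψ x)) = 1 → Wk k N ψ = 0) :
    N = 0 := by
  ext p' q'
  set p : PIdx d := Function.update p' k (q' k) with hp
  have hB := polar_form (fun a b => N (Function.update p k a) (Function.update q' k b)) ?form
  case form =>
    intro ψ hψ
    have h0 := congrFun (congrFun (h ψ hψ) p) q'
    rw [Wk_apply, Matrix.zero_apply] at h0
    have hpk : p k = q' k := Function.update_self k (q' k) p'
    rwa [if_pos hpk, one_mul] at h0
  have := hB (p' k) (q' k)
  rw [hp] at this
  rw [Function.update_idem, Function.update_eq_self, Function.update_eq_self] at this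
  simpa using this

end PSDCNS
section MainCNS

variable {d : Fin 4 → ℕ}

lemma Dset_LV (hd : ∀ i, 0 < d i) (T : Finset (Fin 4)) (W : PMat d) :
    Dset T (LV W) = Dset (T ∪ {1}) W + Dset (T ∪ {3}) W - Dset (T ∪ {1, 3}) W
      - Dset (T ∪ {2, 3}) W + Dset (T ∪ {1, 2, 3}) W - Dset (T ∪ {0, 1}) W
      + Dset (T ∪ {0, 1, 3}) W := by
  simp only [LV, Dset_add, Dset_sub, Dset_comp hd rfl]

lemma LV_conseq1 (hd : ∀ i, 0 < d i) {W : PMat d} (hLV : LV W = W) :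
    Dset ({0} : Finset (Fin 4)) W = Dset ({0, 3} : Finset (Fin 4)) W := by
  have h023 : Dset ({0,2,3} : Finset (Fin 4)) W = Dset ({0,1,2,3} : Finset (Fin 4)) W := by
    have e := Dset_LV hd {0,2,3} W
    rw [hLV,
      (by decide : ({0,2,3} : Finset (Fin 4)) ∪ {1} = {0,1,2,3}),
      (by decide : ({0,2,3} : Finset (Fin 4)) ∪ {3} = {0,2,3}),
      (by decide : ({0,2,3} : Finset (Fin 4)) ∪ {1,3} = {0,1,2,3}),
      (by decide : ({0,2,3} : Finset (Fin 4)) ∪ {2,3} = {0,2,3}),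
      (by decide : ({0,2,3} : Finset (Fin 4)) ∪ {1,2,3} = {0,1,2,3}),
      (by decide : ({0,2,3} : Finset (Fin 4)) ∪ {0,1} = {0,1,2,3}),
      (by decide : ({0,2,3} : Finset (Fin 4)) ∪ {0,1,3} = {0,1,2,3})] at e
    ext p q
    have he := congrFun (congrFun e p) q
    simp only [Matrix.add_apply, Matrix.sub_apply] at he
    linear_combination he
  have e := Dset_LV hd {0} W
  rw [hLV,
    (by decide : ({0} : Finset (Fin 4)) ∪ {1} = {0,1}),
    (by decide : ({0} : Finset (Fin 4)) ∪ {3} = {0,3}),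
    (by decide : ({0} : Finset (Fin 4)) ∪ {1,3} = {0,1,3}),
    (by decide : ({0} : Finset (Fin 4)) ∪ {2,3} = {0,2,3}),
    (by decide : ({0} : Finset (Fin 4)) ∪ {1,2,3} = {0,1,2,3}),
    (by decide : ({0} : Finset (Fin 4)) ∪ {0,1} = {0,1}),
    (by decide : ({0} : Finset (Fin 4)) ∪ {0,1,3} = {0,1,3})] at e
  ext p q
  have he := congrFun (congrFun e p) q
  have he2 := congrFun (congrFun h023 p) q
  simp only [Matrix.add_apply, Matrix.sub_apply] at he
  linear_combination he - he2

lemma LV_conseq2 (hd : ∀ i, 0 < d i) {W : PMat d} (hLV : LV W = W) :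
    Dset ({2} : Finset (Fin 4)) W = Dset ({1, 2} : Finset (Fin 4)) W := by
  have h012 : Dset ({0,1,2} : Finset (Fin 4)) W = Dset ({0,1,2,3} : Finset (Fin 4)) W := by
    have e := Dset_LV hd {0,1,2} W
    rw [hLV,
      (by decide : ({0,1,2} : Finset (Fin 4)) ∪ {1} = {0,1,2}),
      (by decide : ({0,1,2} : Finset (Fin 4)) ∪ {3} = {0,1,2,3}),
      (by decide : ({0,1,2} : Finset (Fin 4)) ∪ {1,3} = {0,1,2,3}),
      (by decide : ({0,1,2} : Finset (Fin 4)) ∪ {2,3} = {0,1,2,3}),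
      (by decide : ({0,1,2} : Finset (Fin 4)) ∪ {1,2,3} = {0,1,2,3}),
      (by decide : ({0,1,2} : Finset (Fin 4)) ∪ {0,1} = {0,1,2}),
      (by decide : ({0,1,2} : Finset (Fin 4)) ∪ {0,1,3} = {0,1,2,3})] at e
    ext p q
    have he := congrFun (congrFun e p) q
    simp only [Matrix.add_apply, Matrix.sub_apply] at he
    linear_combination he
  have e := Dset_LV hd {2} W
  rw [hLV,
    (by decide : ({2} : Finset (Fin 4)) ∪ {1} = {1,2}),
    (by decide : ({2} : Finset (Fin 4)) ∪ {3} = {2,3}),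
    (by decide : ({2} : Finset (Fin 4)) ∪ {1,3} = {1,2,3}),
    (by decide : ({2} : Finset (Fin 4)) ∪ {2,3} = {2,3}),
    (by decide : ({2} : Finset (Fin 4)) ∪ {1,2,3} = {1,2,3}),
    (by decide : ({2} : Finset (Fin 4)) ∪ {0,1} = {0,1,2}),
    (by decide : ({2} : Finset (Fin 4)) ∪ {0,1,3} = {0,1,2,3})] at e
  ext p q
  have he := congrFun (congrFun e p) q
  have he2 := congrFun (congrFun h012 p) q
  simp only [Matrix.add_apply, Matrix.sub_apply] at he
  linear_combination he - he2

lemma LV_ord3 (hd : ∀ i, 0 < d i) {W : PMat d} (hLV : LV W = W) :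
    Dset ({2, 3} : Finset (Fin 4)) W = Dset ({1, 2, 3} : Finset (Fin 4)) W := by
  have e := Dset_LV hd {3} W
  rw [hLV,
    (by decide : ({3} : Finset (Fin 4)) ∪ {1} = {1,3}),
    (by decide : ({3} : Finset (Fin 4)) ∪ {3} = {3}),
    (by decide : ({3} : Finset (Fin 4)) ∪ {1,3} = {1,3}),
    (by decide : ({3} : Finset (Fin 4)) ∪ {2,3} = {2,3}),
    (by decide : ({3} : Finset (Fin 4)) ∪ {1,2,3} = {1,2,3}),
    (by decide : ({3} : Finset (Fin 4)) ∪ {0,1} = {0,1,3}),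
    (by decide : ({3} : Finset (Fin 4)) ∪ {0,1,3} = {0,1,3})] at e
  ext p q
  have he := congrFun (congrFun e p) q
  simp only [Matrix.add_apply, Matrix.sub_apply] at he
  linear_combination he

lemma LV_ord1 (hd : ∀ i, 0 < d i) {W : PMat d} (hLV : LV W = W) :
    Dset ({0, 1} : Finset (Fin 4)) W = Dset ({0, 1, 3} : Finset (Fin 4)) W := by
  have e := Dset_LV hd {1} W
  rw [hLV,
    (by decide : ({1} : Finset (Fin 4)) ∪ {1} = {1}),
    (by decide : ({1} : Finset (Fin 4)) ∪ {3} = {1,3}),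
    (by decide : ({1} : Finset (Fin 4)) ∪ {1,3} = {1,3}),
    (by decide : ({1} : Finset (Fin 4)) ∪ {2,3} = {1,2,3}),
    (by decide : ({1} : Finset (Fin 4)) ∪ {1,2,3} = {1,2,3}),
    (by decide : ({1} : Finset (Fin 4)) ∪ {0,1} = {0,1}),
    (by decide : ({1} : Finset (Fin 4)) ∪ {0,1,3} = {0,1,3})] at e
  ext p q
  have he := congrFun (congrFun e p) q
  simp only [Matrix.add_apply, Matrix.sub_apply] at he
  linear_combination he

lemma triv_exists (hd : ∀ i, 0 < d i) :
    ∃ Wt : PMat d, IsProc Wt ∧ OrderedAB Wt ∧ OrderedBA Wt := by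
  have hpos : 0 < Fintype.card (PIdx d) :=
    Fintype.card_pos_iff.mpr ⟨fun i => ⟨0, hd i⟩⟩
  set cR : ℝ := ((d 1 * d 3 : ℕ) : ℝ) / ((Fintype.card (PIdx d) : ℕ) : ℝ) with hcR
  have hcR0 : 0 ≤ cR := by positivity
  refine ⟨(cR : ℂ) • (1 : PMat d), ⟨?_, ?_, ?_⟩, ⟨?_, ?_⟩, ⟨?_, ?_⟩⟩
  · have h1 : ((cR : ℂ) • (1 : PMat d)) = Matrix.diagonal (fun _ => (cR : ℂ)) := by
      ext p q
      by_cases h : p = q <;> simp [Matrix.one_apply, Matrix.diagonal, h]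
    rw [h1]
    exact Matrix.PosSemidef.diagonal (fun _ => Complex.zero_le_real.mpr hcR0)
  · simp only [LV, Dset_smul, Dset_one hd]
    abel
  · rw [Matrix.trace_smul, Matrix.trace_one]
    have hcard : ((Fintype.card (PIdx d) : ℕ) : ℂ) ≠ 0 := cardPIdx_ne hd
    rw [smul_eq_mul, hcR]
    push_cast
    field_simp
  · simp only [Dset_smul, Dset_one hd]
  · simp only [Dset_smul, Dset_one hd]
  · simp only [Dset_smul, Dset_one hd]
  · simp only [Dset_smul, Dset_one hd]

end MainCNS
/-- Every causally non-separable bipartite process can be freely degraded to either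
definite causal order: there is a unit vector `ψ` in `A_O` with `W_ψ` a non-free process
causally ordered `B ≺ A`, and a unit vector `φ` in `B_O` with `W_φ` a non-free process
causally ordered `A ≺ B`. -/
theorem cns_degrades_to_both_orders {d : Fin 4 → ℕ} (hd : ∀ i, 0 < d i)
    (W : PMat d) (hW : IsProc W) (hns : ¬ CausallySep W) :
    (∃ ψ : Fin (d 1) → ℂ, (∑ x, Complex.normSq (ψ x)) = 1 ∧
      IsProc (Wpsi W ψ) ∧ OrderedBA (Wpsi W ψ) ∧ ¬ IsFree (Wpsi W ψ)) ∧
    (∃ φ : Fin (d 3) → ℂ, (∑ x, Complex.normSq (φ x)) = 1 ∧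
      IsProc (Wphi W φ) ∧ OrderedAB (Wphi W φ) ∧ ¬ IsFree (Wphi W φ)) := by
  obtain ⟨hPSD, hLV, htr⟩ := hW
  obtain ⟨Wt, hWtP, hWtAB, hWtBA⟩ := triv_exists hd
  constructor
  · -- ψ half : order B ≺ A
    have hD1 : ∀ ψ : Fin (d 1) → ℂ, Dset {1} (Wk 1 W ψ) = Wk 1 W ψ :=
      fun ψ => Dset_singleton_Wk hd 1 W ψ
    have hD3 : ∀ ψ : Fin (d 1) → ℂ, Dset {3} (Wk 1 W ψ) = Wk 1 (Dset {3} W) ψ :=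
      fun ψ => Dset_Wk (S := {3}) (k := 1) (by decide) W ψ
    have hD23 : ∀ ψ : Fin (d 1) → ℂ, Dset {2,3} (Wk 1 W ψ) = Wk 1 (Dset {2,3} W) ψ :=
      fun ψ => Dset_Wk (S := {2,3}) (k := 1) (by decide) W ψ
    have hD0 : ∀ ψ : Fin (d 1) → ℂ, Dset {0} (Wk 1 W ψ) = Wk 1 (Dset {0} W) ψ :=
      fun ψ => Dset_Wk (S := {0}) (k := 1) (by decide) W ψ
    have hD03 : ∀ ψ : Fin (d 1) → ℂ, Dset {0,3} (Wk 1 W ψ) = Wk 1 (Dset {0,3} W) ψ :=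
      fun ψ => Dset_Wk (S := {0,3}) (k := 1) (by decide) W ψ
    have hD13 : ∀ ψ : Fin (d 1) → ℂ, Dset {1,3} (Wk 1 W ψ) = Wk 1 (Dset {3} W) ψ := by
      intro ψ
      rw [← Dset_comp hd (by decide : ({3} : Finset (Fin 4)) ∪ {1} = {1,3}) (Wk 1 W ψ),
        hD1, hD3]
    have hD123 : ∀ ψ : Fin (d 1) → ℂ, Dset {1,2,3} (Wk 1 W ψ) = Wk 1 (Dset {2,3} W) ψ := by
      intro ψ
      rw [← Dset_comp hd (by decide : ({2,3} : Finset (Fin 4)) ∪ {1} = {1,2,3}) (Wk 1 W ψ),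
        hD1, hD23]
    have hD01 : ∀ ψ : Fin (d 1) → ℂ, Dset {0,1} (Wk 1 W ψ) = Wk 1 (Dset {0} W) ψ := by
      intro ψ
      rw [← Dset_comp hd (by decide : ({0} : Finset (Fin 4)) ∪ {1} = {0,1}) (Wk 1 W ψ),
        hD1, hD0]
    have hD013 : ∀ ψ : Fin (d 1) → ℂ, Dset {0,1,3} (Wk 1 W ψ) = Wk 1 (Dset {0,3} W) ψ := by
      intro ψ
      rw [← Dset_comp hd (by decide : ({0,3} : Finset (Fin 4)) ∪ {1} = {0,1,3}) (Wk 1 W ψ),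
        hD1, hD03]
    have hproc : ∀ ψ : Fin (d 1) → ℂ, (∑ x, Complex.normSq (ψ x)) = 1 → IsProc (Wk 1 W ψ) := by
      intro ψ hψ
      refine ⟨Wk_posSemidef hPSD ψ, ?_, ?_⟩
      · simp only [LV]
        rw [hD1, hD3, hD13, hD23, hD123, hD01, hD013, LV_conseq1 hd hLV]
        abel
      · have htr1 : (Wk 1 W ψ).trace = W.trace := by
          calc (Wk 1 W ψ).trace = (Wk 1 (LV W) ψ).trace := by rw [hLV]
          _ = W.trace := by
            simp only [LV, Wk_add, Wk_sub, Matrix.trace_add, Matrix.trace_sub]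
            rw [← Dset_comp hd (by decide : ({1} : Finset (Fin 4)) ∪ {3} = {1,3}) W,
              ← Dset_comp hd (by decide : ({1} : Finset (Fin 4)) ∪ {2,3} = {1,2,3}) W,
              ← Dset_comp hd (by decide : ({1} : Finset (Fin 4)) ∪ {0} = {0,1}) W,
              ← Dset_comp hd (by decide : ({1} : Finset (Fin 4)) ∪ {0,3} = {0,1,3}) W,
              Wk_Dset_singleton hd 1 W ψ hψ,
              Wk_Dset_singleton hd 1 (Dset {3} W) ψ hψ,
              Wk_Dset_singleton hd 1 (Dset {2,3} W) ψ hψ,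
              Wk_Dset_singleton hd 1 (Dset {0} W) ψ hψ,
              Wk_Dset_singleton hd 1 (Dset {0,3} W) ψ hψ,
              ← Dset_Wk (S := {3}) (k := 1) (by decide) W ψ,
              ← Dset_Wk (S := {2,3}) (k := 1) (by decide) W ψ]
            simp only [trace_Dset hd]
            ring
        rw [htr1, htr]
    have hord : ∀ ψ : Fin (d 1) → ℂ, OrderedBA (Wk 1 W ψ) := by
      intro ψ
      refine ⟨hD1 ψ, ?_⟩
      rw [hD01, hD013, LV_conseq1 hd hLV]
    by_contra hno
    push_neg at hno
    simp only [Wpsi_eq] at hno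
    have hkey : Dset ({3} : Finset (Fin 4)) W = W := by
      apply sub_eq_zero.mp
      apply Wk_eq_zero (k := 1)
      intro ψ hψ
      rw [Wk_sub]
      have hfree := (hno ψ hψ (hproc ψ hψ) (hord ψ)).2
      rw [← hD3 ψ]
      rw [show Dset ({3} : Finset (Fin 4)) (Wk 1 W ψ) = Dset {1,3} (Wk 1 W ψ) from by
        rw [hD3, ← hD13]]
      rw [hfree, sub_self]
    exact hns ⟨1, by norm_num, le_rfl, W, Wt, ⟨hPSD, hLV, htr⟩, ⟨hkey, LV_ord3 hd hLV⟩,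
      hWtP, hWtBA, by norm_num⟩
  · -- φ half : order A ≺ B
    have hD3' : ∀ φ : Fin (d 3) → ℂ, Dset {3} (Wk 3 W φ) = Wk 3 W φ :=
      fun φ => Dset_singleton_Wk hd 3 W φ
    have hD1' : ∀ φ : Fin (d 3) → ℂ, Dset {1} (Wk 3 W φ) = Wk 3 (Dset {1} W) φ :=
      fun φ => Dset_Wk (S := {1}) (k := 3) (by decide) W φ
    have hD2' : ∀ φ : Fin (d 3) → ℂ, Dset {2} (Wk 3 W φ) = Wk 3 (Dset {2} W) φ :=
      fun φ => Dset_Wk (S := {2}) (k := 3) (by decide) W φ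
    have hD12' : ∀ φ : Fin (d 3) → ℂ, Dset {1,2} (Wk 3 W φ) = Wk 3 (Dset {1,2} W) φ :=
      fun φ => Dset_Wk (S := {1,2}) (k := 3) (by decide) W φ
    have hD01' : ∀ φ : Fin (d 3) → ℂ, Dset {0,1} (Wk 3 W φ) = Wk 3 (Dset {0,1} W) φ :=
      fun φ => Dset_Wk (S := {0,1}) (k := 3) (by decide) W φ
    have hD13' : ∀ φ : Fin (d 3) → ℂ, Dset {1,3} (Wk 3 W φ) = Wk 3 (Dset {1} W) φ := by
      intro φ
      rw [← Dset_comp hd (by decide : ({1} : Finset (Fin 4)) ∪ {3} = {1,3}) (Wk 3 W φ),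
        hD3', hD1']
    have hD23' : ∀ φ : Fin (d 3) → ℂ, Dset {2,3} (Wk 3 W φ) = Wk 3 (Dset {2} W) φ := by
      intro φ
      rw [← Dset_comp hd (by decide : ({2} : Finset (Fin 4)) ∪ {3} = {2,3}) (Wk 3 W φ),
        hD3', hD2']
    have hD123' : ∀ φ : Fin (d 3) → ℂ, Dset {1,2,3} (Wk 3 W φ) = Wk 3 (Dset {1,2} W) φ := by
      intro φ
      rw [← Dset_comp hd (by decide : ({1,2} : Finset (Fin 4)) ∪ {3} = {1,2,3}) (Wk 3 W φ),
        hD3', hD12']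
    have hD013' : ∀ φ : Fin (d 3) → ℂ, Dset {0,1,3} (Wk 3 W φ) = Wk 3 (Dset {0,1} W) φ := by
      intro φ
      rw [← Dset_comp hd (by decide : ({0,1} : Finset (Fin 4)) ∪ {3} = {0,1,3}) (Wk 3 W φ),
        hD3', hD01']
    have hproc : ∀ φ : Fin (d 3) → ℂ, (∑ x, Complex.normSq (φ x)) = 1 → IsProc (Wk 3 W φ) := by
      intro φ hφ
      refine ⟨Wk_posSemidef hPSD φ, ?_, ?_⟩
      · simp only [LV]
        rw [hD1', hD3', hD13', hD23', hD123', hD01', hD013', LV_conseq2 hd hLV]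
        abel
      · have htr1 : (Wk 3 W φ).trace = W.trace := by
          calc (Wk 3 W φ).trace = (Wk 3 (LV W) φ).trace := by rw [hLV]
          _ = W.trace := by
            simp only [LV, Wk_add, Wk_sub, Matrix.trace_add, Matrix.trace_sub]
            rw [← Dset_comp hd (by decide : ({3} : Finset (Fin 4)) ∪ {1} = {1,3}) W,
              ← Dset_comp hd (by decide : ({3} : Finset (Fin 4)) ∪ {2} = {2,3}) W,
              ← Dset_comp hd (by decide : ({3} : Finset (Fin 4)) ∪ {1,2} = {1,2,3}) W,
              ← Dset_comp hd (by decide : ({3} : Finset (Fin 4)) ∪ {0,1} = {0,1,3}) W,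
              Wk_Dset_singleton hd 3 W φ hφ,
              Wk_Dset_singleton hd 3 (Dset {1} W) φ hφ,
              Wk_Dset_singleton hd 3 (Dset {2} W) φ hφ,
              Wk_Dset_singleton hd 3 (Dset {1,2} W) φ hφ,
              Wk_Dset_singleton hd 3 (Dset {0,1} W) φ hφ,
              ← Dset_Wk (S := {1}) (k := 3) (by decide) W φ,
              ← Dset_Wk (S := {0,1}) (k := 3) (by decide) W φ]
            simp only [trace_Dset hd]
            ring
        rw [htr1, htr]
    have hord : ∀ φ : Fin (d 3) → ℂ, OrderedAB (Wk 3 W φ) := by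
      intro φ
      refine ⟨hD3' φ, ?_⟩
      rw [hD23', hD123', LV_conseq2 hd hLV]
    by_contra hno
    push_neg at hno
    simp only [Wphi_eq] at hno
    have hkey : Dset ({1} : Finset (Fin 4)) W = W := by
      apply sub_eq_zero.mp
      apply Wk_eq_zero (k := 3)
      intro φ hφ
      rw [Wk_sub]
      have hfree := (hno φ hφ (hproc φ hφ) (hord φ)).2
      rw [← hD1' φ]
      rw [show Dset ({1} : Finset (Fin 4)) (Wk 3 W φ) = Dset {1,3} (Wk 3 W φ) from by
        rw [hD1', ← hD13']]
      rw [hfree, sub_self]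
    exact hns ⟨0, le_rfl, by norm_num, Wt, W, hWtP, hWtAB, ⟨hPSD, hLV, htr⟩,
      ⟨hkey, LV_ord1 hd hLV⟩, by norm_num⟩
end

section
/- Projector characterization of non-signalling channels: A matrix M on A_I ⊗ A_O ⊗ B_I ⊗ B_O satisfies the two non-signalling conditions D_{A_O}(M) = D_{A_I A_O}(M) and D_{B_O}(M) = D_{B_I B_O}(M) if and only if L_ns(M) = M, where L_ns(M) := M - D_{A_O}(M) + D_{A_I A_O}(M) - D_{B_O}(M) + D_{A_O B_O}(M) - D_{A_I A_O B_O}(M) + D_{B_I B_O}(M) - D_{A_O B_I B_O}(M) + D_{A_I A_O B_I B_O}(M). -/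
open scoped BigOperators ComplexOrder

/-- The projector `L_ns` onto the span of non-signalling channels `A_I B_I → A_O B_O`. -/
noncomputable def Lns {d : Fin 4 → ℕ} (M : PMat d) : PMat d :=
  M - Dset ({1} : Finset (Fin 4)) M + Dset ({0, 1} : Finset (Fin 4)) M
    - Dset ({3} : Finset (Fin 4)) M + Dset ({1, 3} : Finset (Fin 4)) M
    - Dset ({0, 1, 3} : Finset (Fin 4)) M + Dset ({2, 3} : Finset (Fin 4)) M
    - Dset ({1, 2, 3} : Finset (Fin 4)) M + Dset ({0, 1, 2, 3} : Finset (Fin 4)) M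

section DsetLemmas

variable {ι : Type} [Fintype ι] [DecidableEq ι] {F : ι → Type}
    [∀ i, Fintype (F i)] [∀ i, DecidableEq (F i)]

lemma Dset_add_s17 (S : Finset ι) (A B : Matrix ((i : ι) → F i) ((i : ι) → F i) ℂ) :
    Dset S (A + B) = Dset S A + Dset S B := by
  funext p q
  simp only [Dset, Matrix.add_apply, Finset.sum_add_distrib, add_div, mul_add]

lemma Dset_sub_s17 (S : Finset ι) (A B : Matrix ((i : ι) → F i) ((i : ι) → F i) ℂ) :
    Dset S (A - B) = Dset S A - Dset S B := by
  funext p q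
  simp only [Dset, Matrix.sub_apply, Finset.sum_sub_distrib, sub_div, mul_sub]

lemma sum_comb (T : Finset ι) (g : ((i:ι) → F i) → ℂ) :
    ∑ r : (i:ι) → F i, ∑ s : (i:ι) → F i, g (fun i => if i ∈ T then s i else r i)
      = (Fintype.card ((i:ι) → F i) : ℂ) * ∑ u, g u := by
  have hinv : Function.Involutive (fun x : ((i:ι) → F i) × ((i:ι) → F i) =>
      ((fun i => if i ∈ T then x.2 i else x.1 i, fun i => if i ∈ T then x.1 i else x.2 i) :
        ((i:ι) → F i) × ((i:ι) → F i))) := by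
    intro x
    ext i <;> by_cases h : i ∈ T <;> simp [h]
  calc ∑ r : (i:ι) → F i, ∑ s : (i:ι) → F i, g (fun i => if i ∈ T then s i else r i)
      = ∑ x : ((i:ι) → F i) × ((i:ι) → F i), g (fun i => if i ∈ T then x.2 i else x.1 i) := by
        rw [Fintype.sum_prod_type]
    _ = ∑ x : ((i:ι) → F i) × ((i:ι) → F i), g x.1 := by
        simpa using Equiv.sum_comp hinv.toPerm (fun y => g y.1)
    _ = (Fintype.card ((i:ι) → F i) : ℂ) * ∑ u, g u := by
        rw [Fintype.sum_prod_type]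
        simp [Finset.sum_const, Finset.card_univ, Finset.mul_sum, mul_comm]

lemma Dset_comp_s17 (hc : ∀ i, 0 < Fintype.card (F i)) (S T : Finset ι)
    (M : Matrix ((i : ι) → F i) ((i : ι) → F i) ℂ) :
    Dset S (Dset T M) = Dset (S ∪ T) M := by
  funext p q
  simp only [Dset]
  -- abbreviations
  set cS : ℂ := ∏ i ∈ S, (Fintype.card (F i) : ℂ) with hcS
  set cT : ℂ := ∏ i ∈ T, (Fintype.card (F i) : ℂ) with hcT
  set cSc : ℂ := ∏ i ∈ Sᶜ, (Fintype.card (F i) : ℂ) with hcSc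
  set cTc : ℂ := ∏ i ∈ Tᶜ, (Fintype.card (F i) : ℂ) with hcTc
  set cU : ℂ := ∏ i ∈ (S ∪ T), (Fintype.card (F i) : ℂ) with hcU
  set cUc : ℂ := ∏ i ∈ (S ∪ T)ᶜ, (Fintype.card (F i) : ℂ) with hcUc
  set g : ((i:ι) → F i) → ℂ := fun u =>
    M (fun i => if i ∈ S ∪ T then u i else p i) (fun i => if i ∈ S ∪ T then u i else q i) with hg
  have hind : ∀ r : (i:ι) → F i,
      (if ∀ i ∈ T, (if i ∈ S then r i else p i) = (if i ∈ S then r i else q i) then (1:ℂ) else 0)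
        = (if ∀ i ∈ T, i ∉ S → p i = q i then (1:ℂ) else 0) := by
    intro r
    congr 1
    apply propext
    refine forall₂_congr fun i hi => ?_
    by_cases his : i ∈ S <;> simp [his]
  have hmat : ∀ r s : (i:ι) → F i,
      M (fun i => if i ∈ T then s i else if i ∈ S then r i else p i)
        (fun i => if i ∈ T then s i else if i ∈ S then r i else q i)
        = g (fun i => if i ∈ T then s i else r i) := by
    intro r s
    simp only [hg]
    congr 1 <;> funext i <;> by_cases hit : i ∈ T <;> by_cases his : i ∈ S <;>
      simp [hit, his]
  have step : ∀ r : (i:ι) → F i,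
      ((if ∀ i ∈ T, (if i ∈ S then r i else p i) = (if i ∈ S then r i else q i) then (1:ℂ) else 0) / cT) *
        ((∑ s : (i:ι) → F i,
            M (fun i => if i ∈ T then s i else if i ∈ S then r i else p i)
              (fun i => if i ∈ T then s i else if i ∈ S then r i else q i)) / cTc)
        = ((if ∀ i ∈ T, i ∉ S → p i = q i then (1:ℂ) else 0) / cT) *
            ((∑ s : (i:ι) → F i, g (fun i => if i ∈ T then s i else r i)) / cTc) := by
    intro r
    rw [hind r]
    congr 1
    congr 1
    exact Finset.sum_congr rfl fun s _ => hmat r s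
  rw [Finset.sum_congr rfl fun r _ => step r]
  rw [← Finset.mul_sum, ← Finset.sum_div, sum_comb T g]
  -- now pure scalar algebra
  have hful : (Fintype.card ((i:ι) → F i) : ℂ) = cS * cSc := by
    rw [hcS, hcSc, Finset.prod_mul_prod_compl]
    simp [Fintype.card_pi]
  have hful2 : cT * cTc = cS * cSc := by
    rw [hcS, hcSc, hcT, hcTc, Finset.prod_mul_prod_compl, Finset.prod_mul_prod_compl]
  have hful3 : cU * cUc = cS * cSc := by
    rw [hcS, hcSc, hcU, hcUc, Finset.prod_mul_prod_compl, Finset.prod_mul_prod_compl]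
  have hcond : (∀ i ∈ S ∪ T, p i = q i) ↔ ((∀ i ∈ S, p i = q i) ∧ ∀ i ∈ T, i ∉ S → p i = q i) := by
    constructor
    · intro h
      exact ⟨fun i hi => h i (Finset.mem_union_left _ hi),
             fun i hi _ => h i (Finset.mem_union_right _ hi)⟩
    · rintro ⟨h1, h2⟩ i hi
      rcases Finset.mem_union.mp hi with h | h
      · exact h1 i h
      · by_cases his : i ∈ S
        · exact h1 i his
        · exact h2 i h his
  have hne : ∀ (U : Finset ι), (∏ i ∈ U, (Fintype.card (F i) : ℂ)) ≠ 0 := by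
    intro U
    refine Finset.prod_ne_zero_iff.mpr fun i _ => ?_
    exact_mod_cast (hc i).ne'
  have hS0 : cS ≠ 0 := hne S
  have hT0 : cT ≠ 0 := hne T
  have hSc0 : cSc ≠ 0 := hne Sᶜ
  have hTc0 : cTc ≠ 0 := hne Tᶜ
  have hU0 : cU ≠ 0 := hne (S ∪ T)
  have hUc0 : cUc ≠ 0 := hne (S ∪ T)ᶜ
  rw [hful]
  by_cases h1 : ∀ i ∈ S, p i = q i
  · by_cases h2 : ∀ i ∈ T, i ∉ S → p i = q i
    · rw [if_pos h1, if_pos h2, if_pos (hcond.mpr ⟨h1, h2⟩)]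
      have key : cS * (cT * cTc * cSc) = (cU * cUc) * (cS * cSc) := by
        rw [hful2, hful3]; ring
      field_simp
      linear_combination (∑ u : (i:ι) → F i, g u) * (hful3.trans hful2.symm)
    · rw [if_neg h2, if_neg (fun h => h2 (hcond.mp h).2)]
      simp
  · rw [if_neg h1, if_neg (fun h => h1 (hcond.mp h).1)]
    simp

end DsetLemmas

/-- Projector characterization of non-signalling channels: a matrix `M` on
`A_I ⊗ A_O ⊗ B_I ⊗ B_O` satisfies `D_{A_O}(M) = D_{A_I A_O}(M)` and
`D_{B_O}(M) = D_{B_I B_O}(M)` iff `L_ns(M) = M`. -/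
theorem nonsignalling_iff_Lns {d : Fin 4 → ℕ} (hd : ∀ i, 0 < d i) (M : PMat d) :
    (Dset ({1} : Finset (Fin 4)) M = Dset ({0, 1} : Finset (Fin 4)) M ∧
      Dset ({3} : Finset (Fin 4)) M = Dset ({2, 3} : Finset (Fin 4)) M) ↔ Lns M = M := by
  have hc : ∀ i : Fin 4, 0 < Fintype.card (Fin (d i)) := fun i => by simpa using hd i
  have U : ∀ (A B C : Finset (Fin 4)), A ∪ B = C → ∀ W : PMat d,
      Dset A (Dset B W) = Dset C W := fun A B C h W => by rw [Dset_comp_s17 hc, h]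
  constructor
  · rintro ⟨h1, h2⟩
    have e3 : Dset ({1, 3} : Finset (Fin 4)) M = Dset ({0, 1, 3} : Finset (Fin 4)) M := by
      rw [← U {3} {1} {1, 3} (by decide) M, h1, U {3} {0, 1} {0, 1, 3} (by decide)]
    have e4 : Dset ({1, 2, 3} : Finset (Fin 4)) M = Dset ({0, 1, 2, 3} : Finset (Fin 4)) M := by
      rw [← U {2, 3} {1} {1, 2, 3} (by decide) M, h1, U {2, 3} {0, 1} {0, 1, 2, 3} (by decide)]
    rw [Lns, h1, h2, e3, e4]
    abel
  · intro hL
    have hD1 : Dset ({1} : Finset (Fin 4)) (Lns M)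
        = Dset ({0, 1} : Finset (Fin 4)) M - Dset ({0, 1, 3} : Finset (Fin 4)) M
            + Dset ({0, 1, 2, 3} : Finset (Fin 4)) M := by
      simp only [Lns, Dset_sub_s17, Dset_add_s17,
        U {1} {1} {1} (by decide), U {1} {0, 1} {0, 1} (by decide),
        U {1} {3} {1, 3} (by decide), U {1} {1, 3} {1, 3} (by decide),
        U {1} {0, 1, 3} {0, 1, 3} (by decide), U {1} {2, 3} {1, 2, 3} (by decide),
        U {1} {1, 2, 3} {1, 2, 3} (by decide), U {1} {0, 1, 2, 3} {0, 1, 2, 3} (by decide)]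
      abel
    have hD01 : Dset ({0, 1} : Finset (Fin 4)) (Lns M)
        = Dset ({0, 1} : Finset (Fin 4)) M - Dset ({0, 1, 3} : Finset (Fin 4)) M
            + Dset ({0, 1, 2, 3} : Finset (Fin 4)) M := by
      simp only [Lns, Dset_sub_s17, Dset_add_s17,
        U {0, 1} {1} {0, 1} (by decide), U {0, 1} {0, 1} {0, 1} (by decide),
        U {0, 1} {3} {0, 1, 3} (by decide), U {0, 1} {1, 3} {0, 1, 3} (by decide),
        U {0, 1} {0, 1, 3} {0, 1, 3} (by decide), U {0, 1} {2, 3} {0, 1, 2, 3} (by decide),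
        U {0, 1} {1, 2, 3} {0, 1, 2, 3} (by decide),
        U {0, 1} {0, 1, 2, 3} {0, 1, 2, 3} (by decide)]
      abel
    have hD3 : Dset ({3} : Finset (Fin 4)) (Lns M)
        = Dset ({2, 3} : Finset (Fin 4)) M - Dset ({1, 2, 3} : Finset (Fin 4)) M
            + Dset ({0, 1, 2, 3} : Finset (Fin 4)) M := by
      simp only [Lns, Dset_sub_s17, Dset_add_s17,
        U {3} {1} {1, 3} (by decide), U {3} {0, 1} {0, 1, 3} (by decide),
        U {3} {3} {3} (by decide), U {3} {1, 3} {1, 3} (by decide),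
        U {3} {0, 1, 3} {0, 1, 3} (by decide), U {3} {2, 3} {2, 3} (by decide),
        U {3} {1, 2, 3} {1, 2, 3} (by decide), U {3} {0, 1, 2, 3} {0, 1, 2, 3} (by decide)]
      abel
    have hD23 : Dset ({2, 3} : Finset (Fin 4)) (Lns M)
        = Dset ({2, 3} : Finset (Fin 4)) M - Dset ({1, 2, 3} : Finset (Fin 4)) M
            + Dset ({0, 1, 2, 3} : Finset (Fin 4)) M := by
      simp only [Lns, Dset_sub_s17, Dset_add_s17,
        U {2, 3} {1} {1, 2, 3} (by decide), U {2, 3} {0, 1} {0, 1, 2, 3} (by decide),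
        U {2, 3} {3} {2, 3} (by decide), U {2, 3} {1, 3} {1, 2, 3} (by decide),
        U {2, 3} {0, 1, 3} {0, 1, 2, 3} (by decide), U {2, 3} {2, 3} {2, 3} (by decide),
        U {2, 3} {1, 2, 3} {1, 2, 3} (by decide),
        U {2, 3} {0, 1, 2, 3} {0, 1, 2, 3} (by decide)]
      abel
    constructor
    · calc Dset ({1} : Finset (Fin 4)) M = Dset ({1} : Finset (Fin 4)) (Lns M) := by rw [hL]
        _ = _ := hD1
        _ = Dset ({0, 1} : Finset (Fin 4)) (Lns M) := hD01.symm
        _ = Dset ({0, 1} : Finset (Fin 4)) M := by rw [hL]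
    · calc Dset ({3} : Finset (Fin 4)) M = Dset ({3} : Finset (Fin 4)) (Lns M) := by rw [hL]
        _ = _ := hD3
        _ = Dset ({2, 3} : Finset (Fin 4)) (Lns M) := hD23.symm
        _ = Dset ({2, 3} : Finset (Fin 4)) M := by rw [hL]
end

section
/- Characterization of free process matrices as the non-signalling processes: For a Choi matrix M_A of a channel on party A (a positive semidefinite matrix on A_I ⊗ A_O with tr_{A_O}(M_A) = 1_{A_I}), define W ⋆ M_A := tr_{A_I A_O}[W * (M_A^T ⊗ 1_{B_I B_O})], a matrix on B_I ⊗ B_O; define W ⋆ M_B analogously for channel Choi matrices M_B on B_I ⊗ B_O. For every two-party process matrix W on A_I ⊗ A_O ⊗ B_I ⊗ B_O the following are equivalent: (i) W ⋆ M_A = W ⋆ M_A' for all channel Choi matrices M_A, M_A' on party A, and W ⋆ M_B = W ⋆ M_B' for all channel Choi matrices M_B, M_B' on party B; (ii) W = rho ⊗ 1_{A_O B_O} for some density matrix rho on A_I ⊗ B_I; (iii) D_{A_O B_O}(W) = W. -/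
open scoped BigOperators ComplexOrder

/-- Build an index of the two-party space from its four components. -/
def mk4 {d : Fin 4 → ℕ} (hd : ∀ i, 0 < d i)
    (a : Fin (d 0)) (b : Fin (d 1)) (c : Fin (d 2)) (x : Fin (d 3)) : PIdx d :=
  Function.update (Function.update (Function.update (Function.update
    (fun i => ⟨0, hd i⟩) 0 a) 1 b) 2 c) 3 x

/-- Choi matrix of a channel on party `A` (from `A_I` to `A_O`). -/
def IsChoiA {d : Fin 4 → ℕ}
    (M : Matrix (Fin (d 0) × Fin (d 1)) (Fin (d 0) × Fin (d 1)) ℂ) : Prop :=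
  M.PosSemidef ∧ ∀ a a' : Fin (d 0),
    (∑ x : Fin (d 1), M (a, x) (a', x)) = if a = a' then 1 else 0

/-- Choi matrix of a channel on party `B` (from `B_I` to `B_O`). -/
def IsChoiB {d : Fin 4 → ℕ}
    (M : Matrix (Fin (d 2) × Fin (d 3)) (Fin (d 2) × Fin (d 3)) ℂ) : Prop :=
  M.PosSemidef ∧ ∀ b b' : Fin (d 2),
    (∑ x : Fin (d 3), M (b, x) (b', x)) = if b = b' then 1 else 0

/-- `W ⋆ M_A = tr_{A_I A_O}[W * (M_A^T ⊗ 1_{B_I B_O})]`, a matrix on `B_I ⊗ B_O`. -/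
noncomputable def linkA {d : Fin 4 → ℕ} (hd : ∀ i, 0 < d i) (W : PMat d)
    (M : Matrix (Fin (d 0) × Fin (d 1)) (Fin (d 0) × Fin (d 1)) ℂ) :
    Matrix (Fin (d 2) × Fin (d 3)) (Fin (d 2) × Fin (d 3)) ℂ :=
  fun b b' => ∑ a : Fin (d 0), ∑ x : Fin (d 1), ∑ a' : Fin (d 0), ∑ y : Fin (d 1),
    W (mk4 hd a x b.1 b.2) (mk4 hd a' y b'.1 b'.2) * M (a, x) (a', y)

/-- `W ⋆ M_B = tr_{B_I B_O}[W * (M_B^T ⊗ 1_{A_I A_O})]`, a matrix on `A_I ⊗ A_O`. -/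
noncomputable def linkB {d : Fin 4 → ℕ} (hd : ∀ i, 0 < d i) (W : PMat d)
    (M : Matrix (Fin (d 2) × Fin (d 3)) (Fin (d 2) × Fin (d 3)) ℂ) :
    Matrix (Fin (d 0) × Fin (d 1)) (Fin (d 0) × Fin (d 1)) ℂ :=
  fun a a' => ∑ b : Fin (d 2), ∑ x : Fin (d 3), ∑ b' : Fin (d 2), ∑ y : Fin (d 3),
    W (mk4 hd a.1 a.2 b x) (mk4 hd a'.1 a'.2 b' y) * M (b, x) (b', y)


set_option linter.unusedSectionVars false
set_option maxHeartbeats 1000000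
namespace FreeAux
open Finset


noncomputable section
variable {γ : Type} [Fintype γ] [DecidableEq γ]

/-- single-entry matrix -/
def pt (p0 q0 : γ) (c : ℂ) : Matrix γ γ ℂ := Matrix.of fun r s => if r = p0 ∧ s = q0 then c else 0

/-- hermitian pair perturbation -/
def pairM (p0 q0 : γ) (c : ℂ) : Matrix γ γ ℂ := pt p0 q0 c + pt q0 p0 (star c)

lemma pt_apply (p0 q0 : γ) (c : ℂ) (r s : γ) :
    pt p0 q0 c r s = if r = p0 ∧ s = q0 then c else 0 := rfl

lemma pt_conjTranspose (p0 q0 : γ) (c : ℂ) :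
    (pt p0 q0 c).conjTranspose = pt q0 p0 (star c) := by
  ext r s
  by_cases h1 : s = p0 <;> by_cases h2 : r = q0 <;>
    simp [pt, Matrix.conjTranspose_apply, h1, h2]

lemma pairM_isHermitian (p0 q0 : γ) (c : ℂ) : (pairM p0 q0 c).IsHermitian := by
  unfold Matrix.IsHermitian pairM
  rw [Matrix.conjTranspose_add, pt_conjTranspose, pt_conjTranspose, star_star, add_comm]

lemma sum_mul_pt (V : γ → γ → ℂ) (p0 q0 : γ) (c : ℂ) :
    ∑ p, ∑ q, V p q * pt p0 q0 c p q = V p0 q0 * c := by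
  rw [Finset.sum_eq_single p0]
  · rw [Finset.sum_eq_single q0]
    · simp [pt]
    · intro q _ hq; simp [pt, hq]
    · simp
  · intro p _ hp
    exact Finset.sum_eq_zero fun q _ => by simp [pt, hp]
  · simp

lemma sum_mul_add (V P Q : Matrix γ γ ℂ) :
    ∑ p, ∑ q, V p q * (P + Q) p q = (∑ p, ∑ q, V p q * P p q) + ∑ p, ∑ q, V p q * Q p q := by
  have : ∀ p q, V p q * (P + Q) p q = V p q * P p q + V p q * Q p q := by
    intro p q; rw [Matrix.add_apply, mul_add]
  simp only [this, Finset.sum_add_distrib]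

lemma sum_mul_pairM (V : γ → γ → ℂ) (p0 q0 : γ) (c : ℂ) :
    ∑ p, ∑ q, V p q * pairM p0 q0 c p q = V p0 q0 * c + V q0 p0 * star c := by
  erw [pairM, sum_mul_add, sum_mul_pt, sum_mul_pt]

lemma quad_pt (z : γ → ℂ) (p0 q0 : γ) (c : ℂ) :
    dotProduct (star z) ((pt p0 q0 c).mulVec z) = star (z p0) * (c * z q0) := by
  unfold dotProduct Matrix.mulVec
  rw [Finset.sum_eq_single p0]
  · simp only [Pi.star_apply]
    congr 1
    unfold dotProduct
    rw [Finset.sum_eq_single q0]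
    · simp [pt]
    · intro q _ hq; simp [pt, hq]
    · simp
  · intro p _ hp
    have : ∀ q, pt p0 q0 c p q * z q = 0 := fun q => by simp [pt, hp]
    simp [dotProduct, this]
  · simp

lemma quad_pairM (z : γ → ℂ) (p0 q0 : γ) (c : ℂ) :
    dotProduct (star z) ((pairM p0 q0 c).mulVec z)
      = c * (star (z p0) * z q0) + star c * (star (z q0) * z p0) := by
  rw [pairM, Matrix.add_mulVec, dotProduct_add, quad_pt, quad_pt]
  ring

lemma quad_diag (z : γ → ℂ) (f : γ → ℂ) :
    dotProduct (star z) ((Matrix.diagonal f).mulVec z)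
      = ∑ r, f r * (star (z r) * z r) := by
  unfold dotProduct
  refine Finset.sum_congr rfl fun r _ => ?_
  rw [Matrix.mulVec_diagonal]
  simp; ring

lemma quad_sq (u v φ : ℂ) (hφ : φ * star φ = 1) :
    0 ≤ star u * u + star v * v + (φ * (star u * v) + star φ * (star v * u)) := by
  have hw : star (u + φ * v) = star u + star φ * star v := by
    rw [star_add, star_mul']
  have h : star u * u + star v * v + (φ * (star u * v) + star φ * (star v * u))
      = star (u + φ * v) * (u + φ * v) := by
    rw [hw]; linear_combination (- (star v * v)) * hφ
  rw [h]
  exact star_mul_self_nonneg _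

lemma creal_nonneg {r : ℝ} (h : 0 ≤ r) : 0 ≤ (r : ℂ) := by exact_mod_cast h

end

section Gen
variable {α β : Type} [Fintype α] [DecidableEq α] [Fintype β] [DecidableEq β]

/-- Generic Choi condition for a channel from `α` to `β`. -/
def ChoiGen (M : Matrix (α × β) (α × β) ℂ) : Prop :=
  M.PosSemidef ∧ ∀ a a' : α, (∑ x : β, M (a, x) (a', x)) = if a = a' then 1 else 0

/-- normalization constant -/
noncomputable def kc (β : Type) [Fintype β] : ℂ := (((Fintype.card β : ℝ)⁻¹ : ℝ) : ℂ)

noncomputable def M0 (α β : Type) [DecidableEq α] [DecidableEq β] [Fintype β] :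
    Matrix (α × β) (α × β) ℂ :=
  Matrix.diagonal (fun _ => kc β)

lemma sum_pt_snd (a a' : α) (p0 q0 : α × β) (c : ℂ) :
    ∑ x : β, pt p0 q0 c (a, x) (a', x)
      = if a = p0.1 ∧ a' = q0.1 ∧ p0.2 = q0.2 then c else 0 := by
  obtain ⟨α1, ξ1⟩ := p0; obtain ⟨α2, ξ2⟩ := q0
  simp only [pt, Matrix.of_apply, Prod.mk.injEq]
  by_cases h1 : a = α1
  · by_cases h2 : a' = α2
    · by_cases h3 : ξ1 = ξ2
      · subst h3; simp [h1, h2, Finset.sum_ite_eq']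
      · rw [if_neg (by simp [h3])]
        refine Finset.sum_eq_zero fun x _ => ?_
        rw [if_neg]
        rintro ⟨⟨-, rfl⟩, ⟨-, hx⟩⟩
        exact h3 hx
    · simp [h2]
  · simp [h1]

lemma sum_pairM_snd (a a' : α) (p0 q0 : α × β) (c : ℂ) :
    ∑ x : β, pairM p0 q0 c (a, x) (a', x)
      = (if a = p0.1 ∧ a' = q0.1 ∧ p0.2 = q0.2 then c else 0)
        + (if a = q0.1 ∧ a' = p0.1 ∧ q0.2 = p0.2 then star c else 0) := by
  simp only [pairM, Matrix.add_apply, Finset.sum_add_distrib, sum_pt_snd]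

lemma kc_nonneg : (0:ℂ) ≤ kc β := creal_nonneg (by positivity)

lemma star_kc : star (kc β) = kc β := by
  rw [kc, Complex.star_def, Complex.conj_ofReal]

variable [Nonempty β]

lemma kc_ne_zero : kc β ≠ 0 := by
  have : (Fintype.card β : ℝ) ≠ 0 := by
    exact_mod_cast Fintype.card_ne_zero (α := β)
  simp [kc, this]

lemma M0_isHermitian : (M0 α β).IsHermitian := by
  have hs : (star fun _ : α × β => kc β) = fun _ : α × β => kc β :=
    funext fun _ => star_kc (β := β)
  unfold Matrix.IsHermitian M0
  rw [Matrix.diagonal_conjTranspose, hs]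

lemma M0_posSemidef : (M0 α β).PosSemidef :=
  Matrix.posSemidef_diagonal_iff.mpr fun _ => kc_nonneg (β := β)

lemma sum_M0_snd (a a' : α) :
    ∑ x : β, M0 α β (a, x) (a', x) = if a = a' then 1 else 0 := by
  by_cases h : a = a'
  · subst h
    simp only [M0, Matrix.diagonal_apply_eq, Finset.sum_const, Finset.card_univ, if_pos rfl,
      nsmul_eq_mul, kc]
    rw [show ((Fintype.card β : ℂ)) = (((Fintype.card β : ℝ) : ℝ) : ℂ) by push_cast; ring]
    rw [← Complex.ofReal_mul, mul_inv_cancel₀ (by exact_mod_cast Fintype.card_ne_zero (α := β))]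
    simp
  · rw [if_neg h]
    refine Finset.sum_eq_zero fun x _ => ?_
    rw [M0, Matrix.diagonal_apply_ne _ (by simp [h])]

lemma choi_M0 : ChoiGen (M0 α β) := ⟨M0_posSemidef, sum_M0_snd⟩

lemma pert_zero (V : α × β → α × β → ℂ)
    (h : ∀ M M' : Matrix (α × β) (α × β) ℂ, ChoiGen M → ChoiGen M' →
      (∑ p, ∑ q, V p q * M p q) = (∑ p, ∑ q, V p q * M' p q))
    (P : Matrix (α × β) (α × β) ℂ) (hP : ChoiGen (M0 α β + P)) :
    ∑ p, ∑ q, V p q * P p q = 0 := by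
  have h2 := h _ _ hP (choi_M0)
  erw [sum_mul_add] at h2
  exact add_eq_left.mp h2

lemma two_nonneg : (0:ℂ) ≤ 2⁻¹ := by
  rw [show ((2:ℂ))⁻¹ = (((2:ℝ)⁻¹ : ℝ) : ℂ) by push_cast; ring]
  exact creal_nonneg (by norm_num)

lemma kc2_nonneg : (0:ℂ) ≤ kc β / 2 := by
  have := mul_nonneg (kc_nonneg (β := β)) two_nonneg
  rwa [div_eq_mul_inv]

lemma choi_fam1 (p0 q0 : α × β) (hne : p0.2 ≠ q0.2) (φ : ℂ) (hφ : φ * star φ = 1) :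
    ChoiGen (M0 α β + pairM p0 q0 (kc β * φ)) := by
  have hne' : p0 ≠ q0 := fun h => hne (congrArg Prod.snd h)
  have hstar : star (kc β * φ) = kc β * star φ := by rw [star_mul', star_kc, mul_comm]
  refine ⟨Matrix.PosSemidef.of_dotProduct_mulVec_nonneg
    (Matrix.IsHermitian.add M0_isHermitian (pairM_isHermitian _ _ _)) ?_, ?_⟩
  · intro z
    rw [Matrix.add_mulVec, dotProduct_add, M0, quad_diag, quad_pairM, hstar]
    rw [← Finset.sum_sdiff (Finset.subset_univ ({p0, q0} : Finset (α × β))),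
      Finset.sum_pair hne']
    have hA : (0:ℂ) ≤ ∑ r ∈ Finset.univ \ {p0, q0}, kc β * (star (z r) * z r) :=
      Finset.sum_nonneg fun r _ => mul_nonneg (kc_nonneg (β := β)) (star_mul_self_nonneg _)
    have hB := quad_sq (z p0) (z q0) φ hφ
    refine le_trans (add_nonneg hA (mul_nonneg (kc_nonneg (β := β)) hB)) (le_of_eq ?_)
    ring
  · intro a a'
    simp only [Matrix.add_apply, Finset.sum_add_distrib, sum_M0_snd, sum_pairM_snd]
    simp [hne, Ne.symm hne]

lemma choi_fam2 (a0 a1 : α) (x y : β) (ha : a0 ≠ a1) (hxy : x ≠ y) (φ : ℂ)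
    (hφ : φ * star φ = 1) :
    ChoiGen (M0 α β + (pairM (a0,x) (a1,x) (kc β / 2 * φ)
      + pairM (a0,y) (a1,y) (-(kc β / 2 * φ)))) := by
  have hstar : star (kc β / 2 * φ) = kc β / 2 * star φ := by
    rw [star_mul', star_div₀, star_kc, show star ((2:ℂ)) = 2 from by norm_num]
  refine ⟨Matrix.PosSemidef.of_dotProduct_mulVec_nonneg (Matrix.IsHermitian.add M0_isHermitian
      (Matrix.IsHermitian.add (pairM_isHermitian _ _ _) (pairM_isHermitian _ _ _))) ?_, ?_⟩
  · intro z
    rw [Matrix.add_mulVec, dotProduct_add, Matrix.add_mulVec, dotProduct_add,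
      M0, quad_diag, quad_pairM, quad_pairM, hstar, star_neg, hstar]
    have h1 : ((a0,x) : α × β) ∉ ({(a1,x), (a0,y), (a1,y)} : Finset (α × β)) := by
      simp [Prod.ext_iff, ha, hxy]
    have h2 : ((a1,x) : α × β) ∉ ({(a0,y), (a1,y)} : Finset (α × β)) := by
      simp [Prod.ext_iff, hxy]
    have h3 : ((a0,y) : α × β) ∉ ({(a1,y)} : Finset (α × β)) := by
      simp [Prod.ext_iff, ha]
    rw [← Finset.sum_sdiff
      (Finset.subset_univ (insert ((a0,x) : α × β) (insert (a1,x) (insert (a0,y) {(a1,y)})))),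
      Finset.sum_insert h1, Finset.sum_insert h2, Finset.sum_insert h3, Finset.sum_singleton]
    have hA : (0:ℂ) ≤ ∑ r ∈ Finset.univ \ insert ((a0,x) : α × β)
        (insert (a1,x) (insert (a0,y) {(a1,y)})), kc β * (star (z r) * z r) :=
      Finset.sum_nonneg fun r _ => mul_nonneg (kc_nonneg (β := β)) (star_mul_self_nonneg _)
    have hB := quad_sq (z (a0,x)) (z (a1,x)) φ hφ
    have hC := quad_sq (z (a0,y)) (z (a1,y)) (-φ) (by rw [star_neg]; linear_combination hφ)
    rw [star_neg] at hC
    have hsp := star_mul_self_nonneg (z ((a0,x) : α × β))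
    have hsq := star_mul_self_nonneg (z ((a1,x) : α × β))
    have hsp' := star_mul_self_nonneg (z ((a0,y) : α × β))
    have hsq' := star_mul_self_nonneg (z ((a1,y) : α × β))
    have hk2 := kc2_nonneg (β := β)
    refine le_trans (add_nonneg (add_nonneg (add_nonneg (add_nonneg
      (add_nonneg hA (mul_nonneg hk2 hsp)) (mul_nonneg hk2 hsq))
      (mul_nonneg hk2 hsp')) (mul_nonneg hk2 hsq'))
      (add_nonneg (mul_nonneg hk2 hB) (mul_nonneg hk2 hC))) (le_of_eq ?_)
    ring
  · intro a a'
    simp only [Matrix.add_apply, Finset.sum_add_distrib, sum_M0_snd, sum_pairM_snd,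
      star_neg, hstar]
    simp only [and_true]
    split_ifs <;> ring
lemma choi_fam3 (a0 : α) (x y : β) (hxy : x ≠ y) :
    ChoiGen (M0 α β + (pairM (a0,x) (a0,x) (kc β / 4)
      + pairM (a0,y) (a0,y) (-(kc β / 4)))) := by
  have hstar : star (kc β / 4) = kc β / 4 := by
    rw [star_div₀, star_kc]
    norm_num
  have hne' : ((a0,x) : α × β) ≠ (a0,y) := by simp [Prod.ext_iff, hxy]
  refine ⟨Matrix.PosSemidef.of_dotProduct_mulVec_nonneg (Matrix.IsHermitian.add M0_isHermitian
      (Matrix.IsHermitian.add (pairM_isHermitian _ _ _) (pairM_isHermitian _ _ _))) ?_, ?_⟩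
  · intro z
    rw [Matrix.add_mulVec, dotProduct_add, Matrix.add_mulVec, dotProduct_add,
      M0, quad_diag, quad_pairM, quad_pairM, hstar, star_neg, hstar]
    rw [← Finset.sum_sdiff (Finset.subset_univ ({(a0,x), (a0,y)} : Finset (α × β))),
      Finset.sum_pair hne']
    have hA : (0:ℂ) ≤ ∑ r ∈ Finset.univ \ ({(a0,x), (a0,y)} : Finset (α × β)),
        kc β * (star (z r) * z r) :=
      Finset.sum_nonneg fun r _ => mul_nonneg (kc_nonneg (β := β)) (star_mul_self_nonneg _)
    have hsp := star_mul_self_nonneg (z ((a0,x) : α × β))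
    have hsq := star_mul_self_nonneg (z ((a0,y) : α × β))
    have h32 : (0:ℂ) ≤ kc β / 2 + kc β := add_nonneg (kc2_nonneg (β := β)) (kc_nonneg (β := β))
    refine le_trans (add_nonneg (add_nonneg hA (mul_nonneg h32 hsp))
      (mul_nonneg (kc2_nonneg (β := β)) hsq)) (le_of_eq ?_)
    ring
  · intro a a'
    simp only [Matrix.add_apply, Finset.sum_add_distrib, sum_M0_snd, sum_pairM_snd,
      star_neg, hstar]
    simp only [and_true]
    split_ifs <;> ring

theorem gen_struct (V : α × β → α × β → ℂ)
    (h : ∀ M M' : Matrix (α × β) (α × β) ℂ, ChoiGen M → ChoiGen M' →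
      (∑ p, ∑ q, V p q * M p q) = (∑ p, ∑ q, V p q * M' p q)) :
    (∀ (a a' : α) (x y : β), x ≠ y → V (a,x) (a',y) = 0) ∧
    (∀ (a a' : α) (x y : β), V (a,x) (a',x) = V (a,y) (a',y)) := by
  have hkne := kc_ne_zero (β := β)
  have hI : Complex.I * star Complex.I = 1 := by
    rw [Complex.star_def, Complex.conj_I]
    simp [Complex.I_mul_I]
  have h1' : (1:ℂ) * star 1 = 1 := by simp
  constructor
  · intro a a' x y hxy
    have key : ∀ φ : ℂ, φ * star φ = 1 →
        V (a,x) (a',y) * (kc β * φ) + V (a',y) (a,x) * (kc β * star φ) = 0 := by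
      intro φ hφ
      have h0 := pert_zero V h _ (choi_fam1 (a,x) (a',y) hxy φ hφ)
      rw [sum_mul_pairM, star_mul', star_kc] at h0
      exact h0
    have e1 := key 1 h1'
    have e2 := key Complex.I hI
    rw [Complex.star_def, Complex.conj_I] at e2
    simp only [star_one, mul_one] at e1
    have s1 : V (a,x) (a',y) + V (a',y) (a,x) = 0 := by
      have hm : (V (a,x) (a',y) + V (a',y) (a,x)) * kc β = 0 := by linear_combination e1
      rcases mul_eq_zero.mp hm with hh | hh
      · exact hh
      · exact absurd hh hkne
    have s2 : V (a,x) (a',y) - V (a',y) (a,x) = 0 := by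
      have hm : (V (a,x) (a',y) - V (a',y) (a,x)) * (kc β * Complex.I) = 0 := by
        linear_combination e2
      rcases mul_eq_zero.mp hm with hh | hh
      · exact hh
      · exact absurd hh (mul_ne_zero hkne Complex.I_ne_zero)
    linear_combination (s1 + s2) / 2
  · intro a a' x y
    by_cases hxy : x = y
    · subst hxy; rfl
    by_cases haa : a = a'
    · subst haa
      have h0 := pert_zero V h _ (choi_fam3 a x y hxy)
      erw [sum_mul_add, sum_mul_pairM, sum_mul_pairM, star_neg,
        show star (kc β / 4) = kc β / 4 from by rw [star_div₀, star_kc]; norm_num] at h0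
      have hm : (V (a,x) (a,x) - V (a,y) (a,y)) * (kc β / 2) = 0 := by linear_combination h0
      rcases mul_eq_zero.mp hm with hh | hh
      · linear_combination hh
      · exact absurd hh (by
          intro hc
          apply hkne
          field_simp at hc
          simpa using hc)
    · have hstar : ∀ φ : ℂ, star (kc β / 2 * φ) = kc β / 2 * star φ := by
        intro φ
        rw [star_mul', star_div₀, star_kc, show star ((2:ℂ)) = 2 from by norm_num]
      have key : ∀ φ : ℂ, φ * star φ = 1 →
          V (a,x) (a',x) * (kc β / 2 * φ) + V (a',x) (a,x) * (kc β / 2 * star φ)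
            - V (a,y) (a',y) * (kc β / 2 * φ) - V (a',y) (a,y) * (kc β / 2 * star φ) = 0 := by
        intro φ hφ
        have h0 := pert_zero V h _ (choi_fam2 a a' x y haa hxy φ hφ)
        erw [sum_mul_add, sum_mul_pairM, sum_mul_pairM, star_neg, hstar] at h0
        linear_combination h0
      have e1 := key 1 h1'
      have e2 := key Complex.I hI
      rw [Complex.star_def, Complex.conj_I] at e2
      simp only [star_one, mul_one] at e1
      have s1 : V (a,x) (a',x) + V (a',x) (a,x) - V (a,y) (a',y) - V (a',y) (a,y) = 0 := by
        have hm : (V (a,x) (a',x) + V (a',x) (a,x) - V (a,y) (a',y) - V (a',y) (a,y))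
            * (kc β / 2) = 0 := by linear_combination e1
        rcases mul_eq_zero.mp hm with hh | hh
        · exact hh
        · exfalso; apply hkne; field_simp at hh; simpa using hh
      have s2 : V (a,x) (a',x) - V (a',x) (a,x) - V (a,y) (a',y) + V (a',y) (a,y) = 0 := by
        have hm : (V (a,x) (a',x) - V (a',x) (a,x) - V (a,y) (a',y) + V (a',y) (a,y))
            * (kc β / 2 * Complex.I) = 0 := by linear_combination e2
        rcases mul_eq_zero.mp hm with hh | hh
        · exact hh
        · exfalso
          rcases mul_eq_zero.mp hh with hh2 | hh2
          · apply hkne; field_simp at hh2; simpa using hh2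
          · exact Complex.I_ne_zero hh2
      linear_combination (s1 + s2) / 2

end Gen

lemma collapse {n m k l : Type} [Fintype n] [Fintype m] [Fintype k] [Fintype l]
    [DecidableEq m] [DecidableEq l] (x0 : m) (y0 : l) (f : n → m → k → l → ℂ) :
    (∑ a, ∑ b, ∑ c, ∑ x, if b = x0 ∧ x = y0 then f a b c x else 0)
      = ∑ a, ∑ c, f a x0 c y0 := by
  refine Finset.sum_congr rfl fun a _ => ?_
  rw [Finset.sum_eq_single x0]
  · refine Finset.sum_congr rfl fun c _ => ?_
    rw [Finset.sum_eq_single y0]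
    · simp
    · intro x _ hx; simp [hx]
    · simp
  · intro b _ hb
    refine Finset.sum_eq_zero fun c _ => Finset.sum_eq_zero fun x _ => ?_
    simp [hb]
  · simp


section Fin4
variable {d : Fin 4 → ℕ} (hd : ∀ i, 0 < d i)

@[simp] lemma mk4_app0 (a b c x) : mk4 hd a b c x 0 = a := by
  simp [mk4, Function.update]
@[simp] lemma mk4_app1 (a b c x) : mk4 hd a b c x 1 = b := by
  simp [mk4, Function.update]
@[simp] lemma mk4_app2 (a b c x) : mk4 hd a b c x 2 = c := by
  simp [mk4, Function.update]
@[simp] lemma mk4_app3 (a b c x) : mk4 hd a b c x 3 = x := by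
  simp [mk4, Function.update]

lemma mk4_eta (p : PIdx d) : mk4 hd (p 0) (p 1) (p 2) (p 3) = p := by
  funext i
  fin_cases i
  · exact mk4_app0 hd _ _ _ _
  · exact mk4_app1 hd _ _ _ _
  · exact mk4_app2 hd _ _ _ _
  · exact mk4_app3 hd _ _ _ _

def eqv : PIdx d ≃ (Fin (d 0) × Fin (d 1) × Fin (d 2) × Fin (d 3)) where
  toFun p := (p 0, p 1, p 2, p 3)
  invFun t := mk4 hd t.1 t.2.1 t.2.2.1 t.2.2.2
  left_inv p := mk4_eta hd p
  right_inv t := by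
    obtain ⟨a, b, c, x⟩ := t
    simp

lemma sum_pidx (f : PIdx d → ℂ) :
    ∑ p, f p = ∑ a, ∑ b, ∑ c, ∑ x, f (mk4 hd a b c x) := by
  rw [← Equiv.sum_comp (eqv hd).symm f]
  rw [Fintype.sum_prod_type]
  refine Finset.sum_congr rfl fun a _ => ?_
  rw [Fintype.sum_prod_type]
  refine Finset.sum_congr rfl fun b _ => ?_
  rw [Fintype.sum_prod_type]
  exact Finset.sum_congr rfl fun c _ => Finset.sum_congr rfl fun x _ => rfl

lemma cond13 (p q : PIdx d) :
    (∀ i ∈ ({1,3} : Finset (Fin 4)), p i = q i) ↔ (p 1 = q 1 ∧ p 3 = q 3) := by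
  constructor
  · intro h; exact ⟨h 1 (by decide), h 3 (by decide)⟩
  · rintro ⟨h1, h3⟩ i hi
    fin_cases hi
    · exact h1
    · exact h3

lemma repl13 (p r : PIdx d) :
    (fun i => if i ∈ ({1,3} : Finset (Fin 4)) then r i else p i)
      = mk4 hd (p 0) (r 1) (p 2) (r 3) := by
  funext i
  fin_cases i <;> simp [mk4, Function.update]

lemma prod13 : ∏ i ∈ ({1,3} : Finset (Fin 4)), (Fintype.card (Fin (d i)) : ℂ)
    = (d 1 : ℂ) * (d 3 : ℂ) := by
  rw [show ({1,3} : Finset (Fin 4)) = insert 1 {3} from rfl,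
    Finset.prod_insert (by decide), Finset.prod_singleton]
  simp

lemma compl13 : ({1,3} : Finset (Fin 4))ᶜ = {0,2} := by decide

lemma prodc13 : ∏ i ∈ ({1,3} : Finset (Fin 4))ᶜ, (Fintype.card (Fin (d i)) : ℂ)
    = (d 0 : ℂ) * (d 2 : ℂ) := by
  rw [compl13, show ({0,2} : Finset (Fin 4)) = insert 0 {2} from rfl,
    Finset.prod_insert (by decide), Finset.prod_singleton]
  simp

lemma dcast_ne (i : Fin 4) (hi : 0 < d i) : (d i : ℂ) ≠ 0 :=
  Nat.cast_ne_zero.mpr hi.ne'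

lemma Dset13_apply (W : PMat d) (p q : PIdx d) :
    Dset ({1,3} : Finset (Fin 4)) W p q
      = (if p 1 = q 1 ∧ p 3 = q 3 then (1:ℂ) else 0)
        * (∑ x : Fin (d 1), ∑ y : Fin (d 3),
            W (mk4 hd (p 0) x (p 2) y) (mk4 hd (q 0) x (q 2) y))
        / ((d 1 : ℂ) * (d 3 : ℂ)) := by
  unfold Dset
  rw [prod13, prodc13]
  have hsum : (∑ r : PIdx d,
      W (fun i => if i ∈ ({1,3} : Finset (Fin 4)) then r i else p i)
        (fun i => if i ∈ ({1,3} : Finset (Fin 4)) then r i else q i))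
      = (d 0 : ℂ) * (d 2 : ℂ) * ∑ x : Fin (d 1), ∑ y : Fin (d 3),
          W (mk4 hd (p 0) x (p 2) y) (mk4 hd (q 0) x (q 2) y) := by
    rw [sum_pidx hd]
    simp only [repl13 hd, mk4_app1, mk4_app3]
    simp only [Finset.sum_const, Finset.card_univ, Fintype.card_fin, nsmul_eq_mul]
    rw [← Finset.mul_sum]
    ring
  rw [hsum]
  have h02 : (d 0 : ℂ) * (d 2 : ℂ) ≠ 0 := mul_ne_zero (dcast_ne 0 (hd 0)) (dcast_ne 2 (hd 2))
  by_cases hc : p 1 = q 1 ∧ p 3 = q 3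
  · rw [if_pos ((cond13 p q).mpr hc), if_pos hc]
    rw [mul_comm ((d 0 : ℂ) * (d 2 : ℂ)), mul_div_assoc, div_self h02, mul_one]
    ring
  · rw [if_neg (fun hcc => hc ((cond13 p q).mp hcc)), if_neg hc]
    simp

end Fin4

section Main
variable {d : Fin 4 → ℕ}

lemma struct_to_D13 (hd : ∀ i, 0 < d i) (W : PMat d)
    (h : ∃ ρ : Matrix (Fin (d 0) × Fin (d 2)) (Fin (d 0) × Fin (d 2)) ℂ,
      ρ.PosSemidef ∧ ρ.trace = 1 ∧
      ∀ p q : PIdx d, W p q =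
        ρ (p 0, p 2) (q 0, q 2) * (if p 1 = q 1 ∧ p 3 = q 3 then 1 else 0)) :
    Dset ({1, 3} : Finset (Fin 4)) W = W := by
  obtain ⟨ρ, -, -, hw⟩ := h
  funext p q
  rw [Dset13_apply hd]
  have hterm : ∀ (x : Fin (d 1)) (y : Fin (d 3)),
      W (mk4 hd (p 0) x (p 2) y) (mk4 hd (q 0) x (q 2) y) = ρ (p 0, p 2) (q 0, q 2) := by
    intro x y; rw [hw]; simp
  simp only [hterm, Finset.sum_const, Finset.card_univ, Fintype.card_fin, nsmul_eq_mul]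
  rw [hw p q]
  have h1 := dcast_ne (d := d) 1 (hd 1)
  have h3 := dcast_ne (d := d) 3 (hd 3)
  field_simp

lemma D13_to_struct (hd : ∀ i, 0 < d i) (W : PMat d) (hps : W.PosSemidef)
    (htr : W.trace = (d 1 : ℂ) * (d 3 : ℂ))
    (h : Dset ({1, 3} : Finset (Fin 4)) W = W) :
    ∃ ρ : Matrix (Fin (d 0) × Fin (d 2)) (Fin (d 0) × Fin (d 2)) ℂ,
      ρ.PosSemidef ∧ ρ.trace = 1 ∧
      ∀ p q : PIdx d, W p q =
        ρ (p 0, p 2) (q 0, q 2) * (if p 1 = q 1 ∧ p 3 = q 3 then 1 else 0) := by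
  have h1 := dcast_ne (d := d) 1 (hd 1)
  have h3 := dcast_ne (d := d) 3 (hd 3)
  set x0 : Fin (d 1) := ⟨0, hd 1⟩ with hx0
  set y0 : Fin (d 3) := ⟨0, hd 3⟩ with hy0
  set ρ : Matrix (Fin (d 0) × Fin (d 2)) (Fin (d 0) × Fin (d 2)) ℂ :=
    Matrix.of fun u v => W (mk4 hd u.1 x0 u.2 y0) (mk4 hd v.1 x0 v.2 y0) with hρ
  have hkey : ∀ p q : PIdx d, W p q
      = (if p 1 = q 1 ∧ p 3 = q 3 then (1:ℂ) else 0)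
        * (∑ x : Fin (d 1), ∑ y : Fin (d 3),
            W (mk4 hd (p 0) x (p 2) y) (mk4 hd (q 0) x (q 2) y))
        / ((d 1 : ℂ) * (d 3 : ℂ)) := by
    intro p q
    conv_lhs => rw [← h]
    rw [Dset13_apply hd]
  have hval : ∀ (a : Fin (d 0)) (b : Fin (d 2)) (a' : Fin (d 0)) (b' : Fin (d 2))
      (x : Fin (d 1)) (y : Fin (d 3)),
      W (mk4 hd a x b y) (mk4 hd a' x b' y) = ρ (a, b) (a', b') := by
    intro a b a' b' x y
    have e1 := hkey (mk4 hd a x b y) (mk4 hd a' x b' y)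
    have e2 := hkey (mk4 hd a x0 b y0) (mk4 hd a' x0 b' y0)
    simp only [mk4_app0, mk4_app1, mk4_app2, mk4_app3, and_self, if_true, one_mul] at e1 e2
    show _ = W (mk4 hd a x0 b y0) (mk4 hd a' x0 b' y0)
    rw [e1, e2]
  have hherm : ρ.IsHermitian := by
    unfold Matrix.IsHermitian
    funext u v
    rw [Matrix.conjTranspose_apply]
    show star (W (mk4 hd v.1 x0 v.2 y0) (mk4 hd u.1 x0 u.2 y0))
      = W (mk4 hd u.1 x0 u.2 y0) (mk4 hd v.1 x0 v.2 y0)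
    have h' := congrFun (congrFun hps.1 (mk4 hd u.1 x0 u.2 y0)) (mk4 hd v.1 x0 v.2 y0)
    rw [Matrix.conjTranspose_apply] at h'
    exact h'
  have hquad : ∀ v : (Fin (d 0) × Fin (d 2)) → ℂ,
      0 ≤ dotProduct (star v) (ρ.mulVec v) := by
    intro v
    set u : PIdx d → ℂ := fun p => if p 1 = x0 ∧ p 3 = y0 then v (p 0, p 2) else 0 with hu
    have hq := hps.dotProduct_mulVec_nonneg u
    have heq : dotProduct (star u) (W.mulVec u)
        = dotProduct (star v) (ρ.mulVec v) := by
      have hL : dotProduct (star u) (W.mulVec u)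
          = ∑ p, star (u p) * ∑ q, W p q * u q := rfl
      have hR : dotProduct (star v) (ρ.mulVec v)
          = ∑ a0, star (v a0) * ∑ b0, ρ a0 b0 * v b0 := rfl
      rw [hL, hR]
      rw [sum_pidx hd (fun p => star (u p) * ∑ q, W p q * u q)]
      have hinner : ∀ p : PIdx d, (∑ q, W p q * u q)
          = ∑ a', ∑ c', W p (mk4 hd a' x0 c' y0) * v (a', c') := by
        intro p
        rw [sum_pidx hd (fun q => W p q * u q)]
        have hb : ∀ (a' : Fin (d 0)) (b' : Fin (d 1)) (c' : Fin (d 2)) (x' : Fin (d 3)),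
            W p (mk4 hd a' b' c' x') * u (mk4 hd a' b' c' x')
            = if b' = x0 ∧ x' = y0 then W p (mk4 hd a' b' c' x') * v (a', c') else 0 := by
          intro a' b' c' x'
          rw [hu]
          simp only [mk4_app0, mk4_app1, mk4_app2, mk4_app3]
          by_cases hh : b' = x0 ∧ x' = y0 <;> simp [hh]
        simp only [hb]
        rw [collapse]
      simp only [hinner]
      have houter : ∀ (a : Fin (d 0)) (b : Fin (d 1)) (c : Fin (d 2)) (x : Fin (d 3)),
          star (u (mk4 hd a b c x)) * (∑ a', ∑ c', W (mk4 hd a b c x) (mk4 hd a' x0 c' y0) * v (a', c'))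
          = if b = x0 ∧ x = y0 then star (v (a, c)) * (∑ a', ∑ c', W (mk4 hd a b c x) (mk4 hd a' x0 c' y0) * v (a', c')) else 0 := by
        intro a b c x
        rw [hu]
        simp only [mk4_app0, mk4_app1, mk4_app2, mk4_app3]
        by_cases hh : b = x0 ∧ x = y0 <;> simp [hh]
      simp only [houter]
      rw [collapse]
      rw [Fintype.sum_prod_type]
      refine Finset.sum_congr rfl fun a _ => Finset.sum_congr rfl fun c _ => ?_
      congr 1
      rw [Fintype.sum_prod_type]
      rfl
    rw [← heq]
    exact hq
  have hWtr : W.trace = ((d 1 : ℂ) * (d 3 : ℂ)) * ρ.trace := by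
    have htrw : W.trace = ∑ p : PIdx d, W p p := rfl
    have htrρ : ρ.trace = ∑ a, ∑ c, ρ (a, c) (a, c) := by
      rw [show ρ.trace = ∑ u, ρ u u from rfl, Fintype.sum_prod_type]
    rw [htrw, htrρ, sum_pidx hd (fun p => W p p)]
    have hbody : ∀ (a : Fin (d 0)) (b : Fin (d 1)) (c : Fin (d 2)) (x : Fin (d 3)),
        W (mk4 hd a b c x) (mk4 hd a b c x) = ρ (a, c) (a, c) := fun a b c x => hval a c a c b x
    simp only [hbody, Finset.sum_const, Finset.card_univ, Fintype.card_fin, nsmul_eq_mul]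
    simp only [Finset.mul_sum]
    refine Finset.sum_congr rfl fun a _ => Finset.sum_congr rfl fun c _ => ?_
    ring
  have htrρ1 : ρ.trace = 1 := by
    rw [htr] at hWtr
    have h13 : ((d 1 : ℂ) * (d 3 : ℂ)) ≠ 0 := mul_ne_zero h1 h3
    have h2 : ((d 1 : ℂ) * (d 3 : ℂ)) * 1 = ((d 1 : ℂ) * (d 3 : ℂ)) * ρ.trace := by
      rw [mul_one]; exact hWtr
    exact (mul_left_cancel₀ h13 h2).symm
  refine ⟨ρ, Matrix.PosSemidef.of_dotProduct_mulVec_nonneg hherm hquad, htrρ1, ?_⟩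
  intro p q
  by_cases hc : p 1 = q 1 ∧ p 3 = q 3
  · rw [if_pos hc, mul_one]
    conv_lhs => rw [← mk4_eta hd p, ← mk4_eta hd q, ← hc.1, ← hc.2]
    exact hval (p 0) (p 2) (q 0) (q 2) (p 1) (p 3)
  · rw [if_neg hc, mul_zero, hkey p q, if_neg hc]
    simp

lemma linkA_val (hd : ∀ i, 0 < d i) (W : PMat d)
    (ρ : Matrix (Fin (d 0) × Fin (d 2)) (Fin (d 0) × Fin (d 2)) ℂ)
    (hw : ∀ p q : PIdx d, W p q =
        ρ (p 0, p 2) (q 0, q 2) * (if p 1 = q 1 ∧ p 3 = q 3 then 1 else 0))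
    (M : Matrix (Fin (d 0) × Fin (d 1)) (Fin (d 0) × Fin (d 1)) ℂ) (hM : IsChoiA (d := d) M) :
    linkA hd W M = fun B B' =>
      (if B.2 = B'.2 then (1:ℂ) else 0) * ∑ a, ρ (a, B.1) (a, B'.1) := by
  funext B B'
  show (∑ a, ∑ x, ∑ a', ∑ y,
      W (mk4 hd a x B.1 B.2) (mk4 hd a' y B'.1 B'.2) * M (a, x) (a', y)) = _
  have hbody : ∀ a x a' y,
      W (mk4 hd a x B.1 B.2) (mk4 hd a' y B'.1 B'.2) * M (a, x) (a', y)
      = (if x = y then (1:ℂ) else 0)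
        * ((if B.2 = B'.2 then (1:ℂ) else 0) * (ρ (a, B.1) (a', B'.1) * M (a, x) (a', y))) := by
    intro a x a' y
    rw [hw]
    simp only [mk4_app0, mk4_app1, mk4_app2, mk4_app3]
    by_cases hh1 : x = y <;> by_cases hh2 : B.2 = B'.2 <;> simp [hh1, hh2]
  simp only [hbody]
  have hy : ∀ (a : Fin (d 0)) (x : Fin (d 1)) (a' : Fin (d 0)),
      (∑ y, (if x = y then (1:ℂ) else 0)
        * ((if B.2 = B'.2 then (1:ℂ) else 0) * (ρ (a, B.1) (a', B'.1) * M (a, x) (a', y))))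
      = (if B.2 = B'.2 then (1:ℂ) else 0) * (ρ (a, B.1) (a', B'.1) * M (a, x) (a', x)) := by
    intro a x a'
    simp only [ite_mul, one_mul, zero_mul, Finset.sum_ite_eq, Finset.mem_univ, if_true]
  simp only [hy]
  have hswap : ∀ a : Fin (d 0),
      (∑ x : Fin (d 1), ∑ a' : Fin (d 0),
        (if B.2 = B'.2 then (1:ℂ) else 0) * (ρ (a, B.1) (a', B'.1) * M (a, x) (a', x)))
      = ∑ a' : Fin (d 0), ∑ x : Fin (d 1),
        (if B.2 = B'.2 then (1:ℂ) else 0) * (ρ (a, B.1) (a', B'.1) * M (a, x) (a', x)) :=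
    fun a => Finset.sum_comm
  simp only [hswap]
  have hx : ∀ a a' : Fin (d 0),
      (∑ x : Fin (d 1),
        (if B.2 = B'.2 then (1:ℂ) else 0) * (ρ (a, B.1) (a', B'.1) * M (a, x) (a', x)))
      = (if B.2 = B'.2 then (1:ℂ) else 0)
        * (ρ (a, B.1) (a', B'.1) * (if a = a' then (1:ℂ) else 0)) := by
    intro a a'
    rw [← Finset.mul_sum, ← Finset.mul_sum, hM.2 a a']
  simp only [hx]
  rw [Finset.mul_sum]
  refine Finset.sum_congr rfl fun a _ => ?_
  rw [Finset.sum_eq_single a]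
  · simp
  · intro a' _ ha'
    simp [Ne.symm ha']
  · simp

lemma linkB_val (hd : ∀ i, 0 < d i) (W : PMat d)
    (ρ : Matrix (Fin (d 0) × Fin (d 2)) (Fin (d 0) × Fin (d 2)) ℂ)
    (hw : ∀ p q : PIdx d, W p q =
        ρ (p 0, p 2) (q 0, q 2) * (if p 1 = q 1 ∧ p 3 = q 3 then 1 else 0))
    (M : Matrix (Fin (d 2) × Fin (d 3)) (Fin (d 2) × Fin (d 3)) ℂ) (hM : IsChoiB (d := d) M) :
    linkB hd W M = fun A A' =>
      (if A.2 = A'.2 then (1:ℂ) else 0) * ∑ b, ρ (A.1, b) (A'.1, b) := by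
  funext A A'
  show (∑ b, ∑ x, ∑ b', ∑ y,
      W (mk4 hd A.1 A.2 b x) (mk4 hd A'.1 A'.2 b' y) * M (b, x) (b', y)) = _
  have hbody : ∀ b x b' y,
      W (mk4 hd A.1 A.2 b x) (mk4 hd A'.1 A'.2 b' y) * M (b, x) (b', y)
      = (if x = y then (1:ℂ) else 0)
        * ((if A.2 = A'.2 then (1:ℂ) else 0) * (ρ (A.1, b) (A'.1, b') * M (b, x) (b', y))) := by
    intro b x b' y
    rw [hw]
    simp only [mk4_app0, mk4_app1, mk4_app2, mk4_app3]
    by_cases hh1 : x = y <;> by_cases hh2 : A.2 = A'.2 <;> simp [hh1, hh2]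
  simp only [hbody]
  have hy : ∀ (b : Fin (d 2)) (x : Fin (d 3)) (b' : Fin (d 2)),
      (∑ y, (if x = y then (1:ℂ) else 0)
        * ((if A.2 = A'.2 then (1:ℂ) else 0) * (ρ (A.1, b) (A'.1, b') * M (b, x) (b', y))))
      = (if A.2 = A'.2 then (1:ℂ) else 0) * (ρ (A.1, b) (A'.1, b') * M (b, x) (b', x)) := by
    intro b x b'
    simp only [ite_mul, one_mul, zero_mul, Finset.sum_ite_eq, Finset.mem_univ, if_true]
  simp only [hy]
  have hswap : ∀ b : Fin (d 2),
      (∑ x : Fin (d 3), ∑ b' : Fin (d 2),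
        (if A.2 = A'.2 then (1:ℂ) else 0) * (ρ (A.1, b) (A'.1, b') * M (b, x) (b', x)))
      = ∑ b' : Fin (d 2), ∑ x : Fin (d 3),
        (if A.2 = A'.2 then (1:ℂ) else 0) * (ρ (A.1, b) (A'.1, b') * M (b, x) (b', x)) :=
    fun b => Finset.sum_comm
  simp only [hswap]
  have hx : ∀ b b' : Fin (d 2),
      (∑ x : Fin (d 3),
        (if A.2 = A'.2 then (1:ℂ) else 0) * (ρ (A.1, b) (A'.1, b') * M (b, x) (b', x)))
      = (if A.2 = A'.2 then (1:ℂ) else 0)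
        * (ρ (A.1, b) (A'.1, b') * (if b = b' then (1:ℂ) else 0)) := by
    intro b b'
    rw [← Finset.mul_sum, ← Finset.mul_sum, hM.2 b b']
  simp only [hx]
  rw [Finset.mul_sum]
  refine Finset.sum_congr rfl fun b _ => ?_
  rw [Finset.sum_eq_single b]
  · simp
  · intro b' _ hb'
    simp [Ne.symm hb']
  · simp

lemma struct_to_links (hd : ∀ i, 0 < d i) (W : PMat d)
    (h : ∃ ρ : Matrix (Fin (d 0) × Fin (d 2)) (Fin (d 0) × Fin (d 2)) ℂ,
      ρ.PosSemidef ∧ ρ.trace = 1 ∧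
      ∀ p q : PIdx d, W p q =
        ρ (p 0, p 2) (q 0, q 2) * (if p 1 = q 1 ∧ p 3 = q 3 then 1 else 0)) :
    (∀ MA MA', IsChoiA (d := d) MA → IsChoiA (d := d) MA' →
        linkA hd W MA = linkA hd W MA') ∧
    (∀ MB MB', IsChoiB (d := d) MB → IsChoiB (d := d) MB' →
        linkB hd W MB = linkB hd W MB') := by
  obtain ⟨ρ, -, -, hw⟩ := h
  constructor
  · intro MA MA' hMA hMA'
    rw [linkA_val hd W ρ hw MA hMA, linkA_val hd W ρ hw MA' hMA']
  · intro MB MB' hMB hMB'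
    rw [linkB_val hd W ρ hw MB hMB, linkB_val hd W ρ hw MB' hMB']

lemma links_to_D13 (hd : ∀ i, 0 < d i) (W : PMat d)
    (hA : ∀ MA MA', IsChoiA (d := d) MA → IsChoiA (d := d) MA' →
        linkA hd W MA = linkA hd W MA')
    (hB : ∀ MB MB', IsChoiB (d := d) MB → IsChoiB (d := d) MB' →
        linkB hd W MB = linkB hd W MB') :
    Dset ({1, 3} : Finset (Fin 4)) W = W := by
  have hNE1 : Nonempty (Fin (d 1)) := ⟨⟨0, hd 1⟩⟩
  have hNE3 : Nonempty (Fin (d 3)) := ⟨⟨0, hd 3⟩⟩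
  have stA : ∀ (b : Fin (d 2)) (c : Fin (d 3)) (b' : Fin (d 2)) (c' : Fin (d 3)),
      (∀ (a a' : Fin (d 0)) (x y : Fin (d 1)), x ≠ y →
        W (mk4 hd a x b c) (mk4 hd a' y b' c') = 0) ∧
      (∀ (a a' : Fin (d 0)) (x y : Fin (d 1)),
        W (mk4 hd a x b c) (mk4 hd a' x b' c') = W (mk4 hd a y b c) (mk4 hd a' y b' c')) := by
    intro b c b' c'
    refine gen_struct (fun p q => W (mk4 hd p.1 p.2 b c) (mk4 hd q.1 q.2 b' c')) ?_
    intro M M' hM hM'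
    have h0 := hA M M' ⟨hM.1, hM.2⟩ ⟨hM'.1, hM'.2⟩
    have h1 := congrFun (congrFun h0 (b, c)) (b', c')
    simp only [linkA] at h1
    simp only [Fintype.sum_prod_type]
    exact h1
  have stB : ∀ (a : Fin (d 0)) (xa : Fin (d 1)) (a' : Fin (d 0)) (xa' : Fin (d 1)),
      (∀ (b b' : Fin (d 2)) (x y : Fin (d 3)), x ≠ y →
        W (mk4 hd a xa b x) (mk4 hd a' xa' b' y) = 0) ∧
      (∀ (b b' : Fin (d 2)) (x y : Fin (d 3)),
        W (mk4 hd a xa b x) (mk4 hd a' xa' b' x) = W (mk4 hd a xa b y) (mk4 hd a' xa' b' y)) := by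
    intro a xa a' xa'
    refine gen_struct (fun p q => W (mk4 hd a xa p.1 p.2) (mk4 hd a' xa' q.1 q.2)) ?_
    intro M M' hM hM'
    have h0 := hB M M' ⟨hM.1, hM.2⟩ ⟨hM'.1, hM'.2⟩
    have h1 := congrFun (congrFun h0 (a, xa)) (a', xa')
    simp only [linkB] at h1
    simp only [Fintype.sum_prod_type]
    exact h1
  funext p q
  rw [Dset13_apply hd]
  by_cases hc : p 1 = q 1 ∧ p 3 = q 3
  · rw [if_pos hc]
    have hterm : ∀ (x : Fin (d 1)) (y : Fin (d 3)),
        W (mk4 hd (p 0) x (p 2) y) (mk4 hd (q 0) x (q 2) y) = W p q := by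
      intro x y
      have e1 := (stA (p 2) y (q 2) y).2 (p 0) (q 0) x (p 1)
      have e2 := (stB (p 0) (p 1) (q 0) (p 1)).2 (p 2) (q 2) y (p 3)
      rw [e1, e2]
      conv_rhs => rw [← mk4_eta hd p, ← mk4_eta hd q, ← hc.1, ← hc.2]
    simp only [hterm, Finset.sum_const, Finset.card_univ, Fintype.card_fin, nsmul_eq_mul]
    have h13 : ((d 1 : ℂ) * (d 3 : ℂ)) ≠ 0 :=
      mul_ne_zero (dcast_ne (d := d) 1 (hd 1)) (dcast_ne (d := d) 3 (hd 3))
    field_simp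
    exact mul_div_cancel_left₀ (W p q) h13
  · rw [if_neg hc]
    have hz : W p q = 0 := by
      conv_lhs => rw [← mk4_eta hd p, ← mk4_eta hd q]
      rcases not_and_or.mp hc with h1 | h3
      · exact (stA (p 2) (p 3) (q 2) (q 3)).1 (p 0) (q 0) (p 1) (q 1) h1
      · exact (stB (p 0) (p 1) (q 0) (q 1)).1 (p 2) (q 2) (p 3) (q 3) h3
    rw [hz]
    simp

end Main

end FreeAux

/-- Characterization of free process matrices as the non-signalling processes:
(i) the reduced process seen by either party is independent of the other party's channel;
(ii) `W = ρ ⊗ 1_{A_O B_O}` for a density matrix `ρ` on `A_I ⊗ B_I`;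
(iii) `D_{A_O B_O}(W) = W`. -/
theorem free_iff_nonsignalling {d : Fin 4 → ℕ} (hd : ∀ i, 0 < d i)
    (W : PMat d) (hW : IsProc W) :
    ((((∀ MA MA', IsChoiA (d := d) MA → IsChoiA (d := d) MA' →
          linkA hd W MA = linkA hd W MA') ∧
        (∀ MB MB', IsChoiB (d := d) MB → IsChoiB (d := d) MB' →
          linkB hd W MB = linkB hd W MB')) ↔
      (∃ ρ : Matrix (Fin (d 0) × Fin (d 2)) (Fin (d 0) × Fin (d 2)) ℂ,
        ρ.PosSemidef ∧ ρ.trace = 1 ∧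
        ∀ p q : PIdx d, W p q =
          ρ (p 0, p 2) (q 0, q 2) * (if p 1 = q 1 ∧ p 3 = q 3 then 1 else 0))) ∧
    ((∃ ρ : Matrix (Fin (d 0) × Fin (d 2)) (Fin (d 0) × Fin (d 2)) ℂ,
        ρ.PosSemidef ∧ ρ.trace = 1 ∧
        ∀ p q : PIdx d, W p q =
          ρ (p 0, p 2) (q 0, q 2) * (if p 1 = q 1 ∧ p 3 = q 3 then 1 else 0)) ↔
      Dset ({1, 3} : Finset (Fin 4)) W = W)) := by
  obtain ⟨hps, hlv, htr⟩ := hW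
  constructor
  · constructor
    · rintro ⟨hA, hB⟩
      exact FreeAux.D13_to_struct hd W hps htr (FreeAux.links_to_D13 hd W hA hB)
    · intro h
      exact FreeAux.struct_to_links hd W h
  · constructor
    · intro h
      exact FreeAux.struct_to_D13 hd W h
    · intro h
      exact FreeAux.D13_to_struct hd W hps htr h
end
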